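/- arXiv:0901.1473 — 7 statements merged into one kernel-verified Lean document; each statement's English description precedes it below -/
import Mathlib

section
/- For every probability distribution Q on a finite alphabet 𝒳, every sequence y ∈ 𝒴^n over a finite alphabet 𝒴, and every t ≥ 0, if x ∈ 𝒳^n is drawn i.i.d. according to Q, then the probability that the empirical mutual information satisfies Î(x;y) ≥ t is at most exp(−n(t − δ_n)), where δ_n = |𝒳|·|𝒴|·log(n+1)/n. -/
open Finset

/-- Joint empirical distribution of two sequences over an index set `A`. -/
noncomputable def empDistOn {n : ℕ} {𝒳 𝒴 : Type*} [DecidableEq 𝒳] [DecidableEq 𝒴]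
    (A : Finset (Fin n)) (x : Fin n → 𝒳) (y : Fin n → 𝒴) (a : 𝒳) (b : 𝒴) : ℝ :=
  ((A.filter fun i => x i = a ∧ y i = b).card : ℝ) / (A.card : ℝ)

/-- Mutual information of a joint distribution `p` on a finite product alphabet
(natural-log base). -/
noncomputable def miOf {𝒳 𝒴 : Type*} [Fintype 𝒳] [Fintype 𝒴] (p : 𝒳 → 𝒴 → ℝ) : ℝ :=
  ∑ a, ∑ b, p a b * Real.log (p a b / ((∑ b', p a b') * (∑ a', p a' b)))

/-- Empirical mutual information `Î(x;y)` of two sequences. -/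
noncomputable def empMI {n : ℕ} {𝒳 𝒴 : Type*} [Fintype 𝒳] [Fintype 𝒴]
    [DecidableEq 𝒳] [DecidableEq 𝒴] (x : Fin n → 𝒳) (y : Fin n → 𝒴) : ℝ :=
  miOf (empDistOn Finset.univ x y)

/-- Probability of a set of sequences under the i.i.d. product distribution `Q^n`. -/
noncomputable def prodProb {n : ℕ} {𝒳 : Type*} [Fintype 𝒳] (Q : 𝒳 → ℝ)
    (S : Set (Fin n → 𝒳)) : ℝ :=
  ∑ x : Fin n → 𝒳, S.indicator (fun z => ∏ i, Q (z i)) x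

/-- `x^k ≤ k^k * exp (x - k)` for `x ≥ 0`. -/
lemma pow_le_rpow_exp {x : ℝ} (hx : 0 ≤ x) (k : ℕ) :
    x ^ k ≤ (k : ℝ) ^ k * Real.exp (x - k) := by
  rcases Nat.eq_zero_or_pos k with hk | hk
  · subst hk
    simpa using Real.one_le_exp (by simpa using hx)
  · have hk0 : (0:ℝ) < k := by exact_mod_cast hk
    have h1 : x / k ≤ Real.exp (x / k - 1) := by
      have := Real.add_one_le_exp (x / k - 1); linarith
    have h2 : (x / k) ^ k ≤ Real.exp (x / k - 1) ^ k :=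
      pow_le_pow_left₀ (div_nonneg hx hk0.le) h1 k
    have h3 : Real.exp (x / k - 1) ^ k = Real.exp (x - k) := by
      rw [← Real.exp_nat_mul]
      congr 1
      field_simp
    have hxk : x = k * (x / k) := by field_simp
    calc x ^ k = (k : ℝ) ^ k * (x / k) ^ k := by rw [← mul_pow, ← hxk]
    _ ≤ (k : ℝ) ^ k * Real.exp (x - k) := by
        rw [← h3]; exact mul_le_mul_of_nonneg_left h2 (by positivity)

/-- The key per-type-class bound. -/
lemma fiber_bound {𝒳 𝒴 : Type*} [Fintype 𝒳] [Fintype 𝒴] [DecidableEq 𝒳] [DecidableEq 𝒴]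
    {n : ℕ} (hn : 0 < n) (Q : 𝒳 → ℝ) (hQ0 : ∀ a, 0 ≤ Q a) (hQ1 : ∑ a, Q a = 1)
    (y : Fin n → 𝒴) (x₀ : Fin n → 𝒳) (B : Finset (Fin n → 𝒳)) (hx₀ : x₀ ∈ B)
    (hB : ∀ x ∈ B, ∀ a b, (Finset.univ.filter fun i => x i = a ∧ y i = b).card =
      (Finset.univ.filter fun i => x₀ i = a ∧ y i = b).card) :
    ∑ x ∈ B, ∏ i, Q (x i) ≤ Real.exp (-(n : ℝ) * empMI x₀ y) := by
  classical
  set N : 𝒳 → 𝒴 → ℕ := fun a b => (Finset.univ.filter fun i => x₀ i = a ∧ y i = b).card with hN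
  set M : 𝒴 → ℕ := fun b => (Finset.univ.filter fun i => y i = b).card with hM
  set R : 𝒳 → ℕ := fun a => (Finset.univ.filter fun i => x₀ i = a).card with hR
  have hn0 : (0:ℝ) < n := by exact_mod_cast hn
  -- marginal identities
  have hRN : ∀ a, ∑ b, N a b = R a := by
    intro a
    simp only [hR]
    rw [Finset.card_eq_sum_card_fiberwise (f := y) (t := Finset.univ) (fun i _ => mem_univ _)]
    refine Finset.sum_congr rfl fun b _ => ?_
    congr 1
    rw [Finset.filter_filter]
  have hMN : ∀ b, ∑ a, N a b = M b := by
    intro b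
    simp only [hM]
    rw [Finset.card_eq_sum_card_fiberwise (f := x₀) (t := Finset.univ) (fun i _ => mem_univ _)]
    refine Finset.sum_congr rfl fun a _ => ?_
    congr 1
    rw [Finset.filter_filter]
    simp only [and_comm]
    rfl
  have hRn : ∑ a, R a = n := by
    simp only [hR]
    rw [← Finset.card_eq_sum_card_fiberwise (f := x₀) (t := Finset.univ) (fun i _ => mem_univ _)]
    simp
  -- counts of each x in B
  have hxcount : ∀ x ∈ B, ∀ a, (Finset.univ.filter fun i => x i = a).card = R a := by
    intro x hx a
    rw [← hRN a]
    rw [Finset.card_eq_sum_card_fiberwise (f := y) (t := Finset.univ) (fun i _ => mem_univ _)]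
    refine Finset.sum_congr rfl fun b _ => ?_
    simp only [hN]
    rw [← hB x hx a b]
    congr 1
    rw [Finset.filter_filter]
  -- product of Q along x
  have hprodQ : ∀ x ∈ B, ∏ i, Q (x i) = ∏ a, Q a ^ R a := by
    intro x hx
    rw [← Finset.prod_fiberwise Finset.univ (fun i => x i) (fun i => Q (x i))]
    refine Finset.prod_congr rfl fun a _ => ?_
    rw [Finset.prod_congr rfl (fun i hi => by rw [(Finset.mem_filter.1 hi).2]),
      Finset.prod_const, hxcount x hx a]
  have hsum : ∑ x ∈ B, ∏ i, Q (x i) = (B.card : ℝ) * ∏ a, Q a ^ R a := by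
    rw [Finset.sum_congr rfl hprodQ, Finset.sum_const, nsmul_eq_mul]
  -- counting bound
  set p : 𝒳 → 𝒴 → ℝ := fun a b => (N a b : ℝ) / (M b : ℝ) with hp
  have hp0 : ∀ a b, 0 ≤ p a b := fun a b => div_nonneg (Nat.cast_nonneg _) (Nat.cast_nonneg _)
  have hprodp : ∀ x ∈ B, ∏ i, p (x i) (y i) = ∏ a, ∏ b, p a b ^ N a b := by
    intro x hx
    have key : ∏ i, p (x i) (y i) = ∏ c : 𝒳 × 𝒴, p c.1 c.2 ^ N c.1 c.2 := by
      rw [← Finset.prod_fiberwise Finset.univ (fun i => (x i, y i)) (fun i => p (x i) (y i))]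
      refine Finset.prod_congr rfl fun c _ => ?_
      obtain ⟨ca, cb⟩ := c
      have hc : ∀ i ∈ Finset.univ.filter (fun i => (x i, y i) = (ca, cb)),
          p (x i) (y i) = p ca cb := by
        intro i hi
        have := (Finset.mem_filter.1 hi).2
        rw [Prod.mk.injEq] at this
        rw [this.1, this.2]
      rw [Finset.prod_congr rfl hc, Finset.prod_const]
      congr 1
      simp only [hN]
      rw [← hB x hx ca cb]
      congr 1
      ext i
      simp [Prod.ext_iff]
    rw [key, Fintype.prod_prod_type (f := fun c : 𝒳 × 𝒴 => p c.1 c.2 ^ N c.1 c.2)]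
  have hMpos : ∀ i : Fin n, 0 < M (y i) := by
    intro i
    simp only [hM]
    exact Finset.card_pos.2 ⟨i, by simp⟩
  have hcard : (B.card : ℝ) * ∏ a, ∏ b, p a b ^ N a b ≤ 1 := by
    have h1 : (B.card : ℝ) * ∏ a, ∏ b, p a b ^ N a b = ∑ x ∈ B, ∏ i, p (x i) (y i) := by
      rw [Finset.sum_congr rfl hprodp, Finset.sum_const, nsmul_eq_mul]
    have h2 : ∑ x ∈ B, ∏ i, p (x i) (y i) ≤ ∑ x : Fin n → 𝒳, ∏ i, p (x i) (y i) :=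
      Finset.sum_le_sum_of_subset_of_nonneg (Finset.subset_univ B)
        (fun x _ _ => Finset.prod_nonneg fun i _ => hp0 _ _)
    have h3 : ∑ x : Fin n → 𝒳, ∏ i, p (x i) (y i) = ∏ i : Fin n, ∑ a, p a (y i) := by
      rw [Finset.prod_univ_sum (fun _ => Finset.univ) (fun i a => p a (y i))]
      rw [Fintype.piFinset_univ]
    have h4 : ∀ i : Fin n, ∑ a, p a (y i) = 1 := by
      intro i
      simp only [hp]
      rw [← Finset.sum_div, ← Nat.cast_sum, hMN]
      exact div_self (by exact_mod_cast (hMpos i).ne')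
    calc (B.card : ℝ) * ∏ a, ∏ b, p a b ^ N a b = ∑ x ∈ B, ∏ i, p (x i) (y i) := h1
    _ ≤ ∑ x : Fin n → 𝒳, ∏ i, p (x i) (y i) := h2
    _ = ∏ i : Fin n, ∑ a, p a (y i) := h3
    _ = 1 := by rw [Finset.prod_congr rfl (fun i _ => h4 i), Finset.prod_const_one]
  -- Q bound
  have hQb : ∏ a, Q a ^ R a ≤ ∏ a, ((R a : ℝ) / n) ^ R a := by
    have key : ∀ a : 𝒳, (Q a * n) ^ R a ≤ (R a : ℝ) ^ R a * Real.exp (Q a * n - R a) :=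
      fun a => pow_le_rpow_exp (by have := hQ0 a; positivity) (R a)
    have h1 : ∏ a, (Q a * (n:ℝ)) ^ R a ≤
        ∏ a, ((R a : ℝ) ^ R a * Real.exp (Q a * n - R a)) :=
      Finset.prod_le_prod (fun a _ => by have := hQ0 a; positivity) (fun a _ => key a)
    have h2 : ∏ a, ((R a:ℝ) ^ R a * Real.exp (Q a * n - R a)) =
        (∏ a, (R a:ℝ) ^ R a) * Real.exp (∑ a, (Q a * n - R a)) := by
      rw [Finset.prod_mul_distrib, Real.exp_sum]
    have h3 : ∑ a, (Q a * (n:ℝ) - (R a : ℝ)) = 0 := by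
      rw [Finset.sum_sub_distrib, ← Finset.sum_mul, hQ1, one_mul, ← Nat.cast_sum, hRn]
      exact sub_self _
    have h4 : ∏ a, (Q a * (n:ℝ)) ^ R a = (∏ a, Q a ^ R a) * (n:ℝ)^n := by
      simp_rw [mul_pow]
      rw [Finset.prod_mul_distrib, Finset.prod_pow_eq_pow_sum, hRn]
    have h5 : ∏ a, ((R a:ℝ)/n) ^ R a = (∏ a, (R a:ℝ) ^ R a) / (n:ℝ)^n := by
      simp_rw [div_pow]
      rw [Finset.prod_div_distrib, Finset.prod_pow_eq_pow_sum, hRn]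
    rw [h5, le_div_iff₀ (by positivity)]
    calc (∏ a, Q a ^ R a) * (n:ℝ)^n = ∏ a, (Q a * n) ^ R a := h4.symm
    _ ≤ (∏ a, (R a:ℝ) ^ R a) * Real.exp (∑ a, (Q a * n - R a)) := h1.trans_eq h2
    _ = ∏ a, (R a:ℝ) ^ R a := by rw [h3, Real.exp_zero, mul_one]
  -- positivity facts
  have hNM : ∀ a b, N a b ≤ M b := fun a b => by
    rw [← hMN b]; exact Finset.single_le_sum (f := fun a' => N a' b) (fun _ _ => Nat.zero_le _) (mem_univ a)
  have hNR : ∀ a b, N a b ≤ R a := fun a b => by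
    rw [← hRN a]; exact Finset.single_le_sum (f := fun b' => N a b') (fun _ _ => Nat.zero_le _) (mem_univ b)
  -- MI identity
  have hemp : ∀ a b, empDistOn (Finset.univ : Finset (Fin n)) x₀ y a b = (N a b : ℝ) / n := by
    intro a b
    simp only [empDistOn, hN, Finset.card_univ, Fintype.card_fin]
  have hmarg1 : ∀ a, ∑ b', empDistOn (Finset.univ : Finset (Fin n)) x₀ y a b' = (R a : ℝ)/n := by
    intro a
    rw [Finset.sum_congr rfl (fun b _ => hemp a b), ← Finset.sum_div, ← Nat.cast_sum, hRN]
  have hmarg2 : ∀ b, ∑ a', empDistOn (Finset.univ : Finset (Fin n)) x₀ y a' b = (M b : ℝ)/n := by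
    intro b
    rw [Finset.sum_congr rfl (fun a _ => hemp a b), ← Finset.sum_div, ← Nat.cast_sum, hMN]
  have hMI : Real.exp (-(n:ℝ) * empMI x₀ y) =
      ∏ a, ∏ b, (((R a:ℝ) * (M b:ℝ))/((N a b:ℝ) * n)) ^ N a b := by
    have hform : empMI x₀ y = ∑ a, ∑ b, ((N a b:ℝ)/n) *
        Real.log (((N a b:ℝ)/n) / (((R a:ℝ)/n) * ((M b:ℝ)/n))) := by
      unfold empMI miOf
      exact Finset.sum_congr rfl fun a _ => Finset.sum_congr rfl fun b _ => by
        rw [hemp, hmarg1, hmarg2]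
    rw [hform]
    have hdist : -(n:ℝ) * (∑ a, ∑ b, ((N a b:ℝ)/n) *
        Real.log (((N a b:ℝ)/n) / (((R a:ℝ)/n) * ((M b:ℝ)/n)))) =
        ∑ a, ∑ b, (-(N a b:ℝ)) * Real.log (((N a b:ℝ)/n) / (((R a:ℝ)/n) * ((M b:ℝ)/n))) := by
      rw [Finset.mul_sum]
      refine Finset.sum_congr rfl fun a _ => ?_
      rw [Finset.mul_sum]
      refine Finset.sum_congr rfl fun b _ => ?_
      have hmm : (n:ℝ) * ((N a b:ℝ)/n) = (N a b:ℝ) := by field_simp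
      rw [neg_mul, neg_mul, neg_inj, ← mul_assoc, hmm]
    rw [hdist, Real.exp_sum]
    refine Finset.prod_congr rfl fun a _ => ?_
    rw [Real.exp_sum]
    refine Finset.prod_congr rfl fun b _ => ?_
    rcases Nat.eq_zero_or_pos (N a b) with h0 | hpos
    · simp [h0]
    · have hNpos : (0:ℝ) < N a b := by exact_mod_cast hpos
      have hRpos : (0:ℝ) < R a := by exact_mod_cast lt_of_lt_of_le hpos (hNR a b)
      have hMposb : (0:ℝ) < M b := by exact_mod_cast lt_of_lt_of_le hpos (hNM a b)
      set z : ℝ := ((N a b:ℝ)/n) / (((R a:ℝ)/n) * ((M b:ℝ)/n)) with hzdef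
      have hz : z = ((N a b:ℝ) * n)/((R a:ℝ) * (M b:ℝ)) := by
        rw [hzdef]; field_simp
      have hzpos : 0 < z := by rw [hz]; exact div_pos (mul_pos hNpos hn0) (mul_pos hRpos hMposb)
      have hzinv : z⁻¹ = ((R a:ℝ) * (M b:ℝ))/((N a b:ℝ) * n) := by rw [hz, inv_div]
      rw [neg_mul, Real.exp_neg, ← hzinv]
      rw [Real.exp_nat_mul, Real.exp_log hzpos, ← inv_pow]
  -- assembly
  have hW : (0:ℝ) < ∏ a, ∏ b, p a b ^ N a b := by
    refine Finset.prod_pos fun a _ => Finset.prod_pos fun b _ => ?_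
    rcases Nat.eq_zero_or_pos (N a b) with h0 | hpos
    · simp [h0]
    · have hNpos : (0:ℝ) < N a b := by exact_mod_cast hpos
      have hMposb : (0:ℝ) < M b := by exact_mod_cast lt_of_lt_of_le hpos (hNM a b)
      have : 0 < p a b := div_pos hNpos hMposb
      exact pow_pos this _
  have hcard' : (B.card : ℝ) ≤ ∏ a, ∏ b, ((M b:ℝ)/(N a b:ℝ)) ^ N a b := by
    have hinv : (∏ a, ∏ b, p a b ^ N a b) * (∏ a, ∏ b, ((M b:ℝ)/(N a b:ℝ)) ^ N a b) = 1 := by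
      rw [← Finset.prod_mul_distrib]
      rw [Finset.prod_congr rfl (fun a _ => (Finset.prod_mul_distrib).symm)]
      refine Finset.prod_eq_one fun a _ => Finset.prod_eq_one fun b _ => ?_
      rcases Nat.eq_zero_or_pos (N a b) with h0 | hpos
      · simp [h0]
      · have hNpos : (0:ℝ) < N a b := by exact_mod_cast hpos
        have hMposb : (0:ℝ) < M b := by exact_mod_cast lt_of_lt_of_le hpos (hNM a b)
        rw [← mul_pow, hp]
        simp only
        rw [div_mul_div_comm, mul_comm ((N a b : ℝ)) ((M b:ℝ)), div_self (mul_pos hMposb hNpos).ne',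
          one_pow]
    rw [← inv_eq_of_mul_eq_one_right hinv, ← one_div]
    exact (le_div_iff₀ hW).mpr hcard
  have main : (B.card : ℝ) * ∏ a, Q a ^ R a ≤
      ∏ a, ∏ b, (((R a:ℝ) * (M b:ℝ))/((N a b:ℝ) * n)) ^ N a b := by
    have step : (B.card : ℝ) * ∏ a, Q a ^ R a ≤
        (∏ a, ∏ b, ((M b:ℝ)/(N a b:ℝ)) ^ N a b) * ∏ a, ((R a:ℝ)/n) ^ R a := by
      refine mul_le_mul hcard' hQb ?_ (le_trans (Nat.cast_nonneg _) hcard')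
      refine Finset.prod_nonneg fun a _ => ?_
      have := hQ0 a; positivity
    refine step.trans_eq ?_
    have hsplit : ∏ a, ((R a:ℝ)/(n:ℝ)) ^ R a = ∏ a, ∏ b, ((R a:ℝ)/(n:ℝ)) ^ N a b := by
      refine Finset.prod_congr rfl fun a _ => ?_
      rw [Finset.prod_pow_eq_pow_sum, hRN]
    rw [hsplit, ← Finset.prod_mul_distrib]
    refine Finset.prod_congr rfl fun a _ => ?_
    rw [← Finset.prod_mul_distrib]
    refine Finset.prod_congr rfl fun b _ => ?_
    rw [← mul_pow, div_mul_div_comm, mul_comm ((M b:ℝ)) ((R a:ℝ)),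
      mul_comm ((N a b:ℝ)) ((n:ℝ)), mul_comm ((n:ℝ)) ((N a b:ℝ))]
  rw [hsum, hMI]
  exact main

theorem statement0 {𝒳 𝒴 : Type*} [Fintype 𝒳] [Fintype 𝒴] [DecidableEq 𝒳] [DecidableEq 𝒴]
    {n : ℕ} (hn : 0 < n) (Q : 𝒳 → ℝ) (hQ0 : ∀ a, 0 ≤ Q a) (hQ1 : ∑ a, Q a = 1)
    (y : Fin n → 𝒴) (t : ℝ) (ht : 0 ≤ t) :
    prodProb Q {x : Fin n → 𝒳 | t ≤ empMI x y} ≤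
      Real.exp (-(n : ℝ) * (t - (Fintype.card 𝒳 : ℝ) * (Fintype.card 𝒴 : ℝ) *
        Real.log ((n : ℝ) + 1) / (n : ℝ))) := by
  classical
  have hn0 : (0:ℝ) < n := by exact_mod_cast hn
  have hP : prodProb Q {x : Fin n → 𝒳 | t ≤ empMI x y} =
      ∑ x : Fin n → 𝒳, (if t ≤ empMI x y then ∏ i, Q (x i) else 0) := by
    unfold prodProb
    refine Finset.sum_congr rfl fun x _ => ?_
    by_cases h : t ≤ empMI x y <;> simp [Set.indicator_apply, Set.mem_setOf_eq, h]
  set g : (Fin n → 𝒳) → (𝒳 → 𝒴 → Fin (n+1)) := fun x a b =>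
    ⟨(Finset.univ.filter fun i => x i = a ∧ y i = b).card,
      Nat.lt_succ_of_le (le_trans (Finset.card_filter_le _ _) (by simp))⟩ with hg
  have key : ∀ v : 𝒳 → 𝒴 → Fin (n+1),
      ∑ x ∈ Finset.univ.filter (fun x => g x = v),
        (if t ≤ empMI x y then ∏ i, Q (x i) else 0) ≤ Real.exp (-(n:ℝ) * t) := by
    intro v
    rw [← Finset.sum_filter]
    set B := (Finset.univ.filter (fun x => g x = v)).filter (fun x => t ≤ empMI x y) with hBdef
    rcases B.eq_empty_or_nonempty with hB | ⟨x₀, hx₀⟩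
    · rw [hB, Finset.sum_empty]; positivity
    · have hx₀' := Finset.mem_filter.1 hx₀
      have ht₀ : t ≤ empMI x₀ y := hx₀'.2
      have hcnt : ∀ x ∈ B, ∀ a b,
          (Finset.univ.filter fun i => x i = a ∧ y i = b).card =
          (Finset.univ.filter fun i => x₀ i = a ∧ y i = b).card := by
        intro x hx a b
        have h1 : g x = v := (Finset.mem_filter.1 (Finset.mem_filter.1 hx).1).2
        have h2 : g x₀ = v := (Finset.mem_filter.1 hx₀'.1).2
        have h3 := congrFun (congrFun (h1.trans h2.symm) a) b
        simpa [hg] using congrArg Fin.val h3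
      have hb := fiber_bound hn Q hQ0 hQ1 y x₀ B hx₀ hcnt
      refine hb.trans (Real.exp_le_exp.mpr ?_)
      have := mul_le_mul_of_nonneg_left ht₀ hn0.le
      nlinarith
  have hcardfun : (Fintype.card (𝒳 → 𝒴 → Fin (n+1)) : ℝ) =
      ((n:ℝ)+1) ^ (Fintype.card 𝒳 * Fintype.card 𝒴) := by
    rw [Fintype.card_fun, Fintype.card_fun, Fintype.card_fin]
    push_cast
    rw [← pow_mul, mul_comm (Fintype.card 𝒴)]
  calc prodProb Q {x : Fin n → 𝒳 | t ≤ empMI x y}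
      = ∑ x : Fin n → 𝒳, (if t ≤ empMI x y then ∏ i, Q (x i) else 0) := hP
    _ = ∑ v : 𝒳 → 𝒴 → Fin (n+1), ∑ x ∈ Finset.univ.filter (fun x => g x = v),
          (if t ≤ empMI x y then ∏ i, Q (x i) else 0) :=
        (Finset.sum_fiberwise Finset.univ g _).symm
    _ ≤ ∑ _v : 𝒳 → 𝒴 → Fin (n+1), Real.exp (-(n:ℝ) * t) :=
        Finset.sum_le_sum fun v _ => key v
    _ = (Fintype.card (𝒳 → 𝒴 → Fin (n+1)) : ℝ) * Real.exp (-(n:ℝ) * t) := by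
        rw [Finset.sum_const, Finset.card_univ, nsmul_eq_mul]
    _ = Real.exp (-(n : ℝ) * (t - (Fintype.card 𝒳 : ℝ) * (Fintype.card 𝒴 : ℝ) *
        Real.log ((n : ℝ) + 1) / (n : ℝ))) := by
        rw [hcardfun]
        have harg : -(n : ℝ) * (t - (Fintype.card 𝒳 : ℝ) * (Fintype.card 𝒴 : ℝ) *
            Real.log ((n : ℝ) + 1) / (n : ℝ)) =
            ((Fintype.card 𝒳 * Fintype.card 𝒴 : ℕ) : ℝ) * Real.log ((n:ℝ)+1) +
            (-(n:ℝ) * t) := by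
          push_cast
          field_simp
          ring
        rw [harg, Real.exp_add, Real.exp_nat_mul, Real.exp_log (by positivity)]
end

section
/- Let {A_i}_{i=1}^p be a partition of the index set {1,…,n} into disjoint nonempty subsets, let 𝒳, 𝒴 be finite alphabets, let Q be a probability distribution on 𝒳, and let x ∈ 𝒳^n have entries drawn i.i.d. according to Q. Then for every Δ > 0 there exists a subset J_Δ ⊆ 𝒳^n such that: (i) for every x ∉ J_Δ and every y ∈ 𝒴^n, Σ_{i=1}^p (|A_i|/n)·Î(x_{A_i}; y_{A_i}) ≥ Î(x;y) − Δ, where x_A, y_A denote the sub-sequences of x, y restricted to the index set A; and (ii) Q^n(J_Δ) ≤ exp(−n(Δ − δ̃_n)), where δ̃_n = p·|𝒳|·log(n+1)/n. -/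
open Finset

/-- Empirical mutual information `Î(x_A; y_A)` of the sub-sequences of `x,y` on `A`. -/
noncomputable def empMIOn {n : ℕ} {𝒳 𝒴 : Type*} [Fintype 𝒳] [Fintype 𝒴]
    [DecidableEq 𝒳] [DecidableEq 𝒴] (A : Finset (Fin n)) (x : Fin n → 𝒳)
    (y : Fin n → 𝒴) : ℝ :=
  miOf (empDistOn A x y)

lemma one_sub_inv_le_log {x : ℝ} (hx : 0 < x) : 1 - 1/x ≤ Real.log x := by
  have h := Real.log_le_sub_one_of_pos (show (0:ℝ) < 1/x by positivity)
  rw [one_div, Real.log_inv] at h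
  have : 1/x = x⁻¹ := one_div x
  linarith

lemma key_ineq {𝒳 𝒴 : Type*} [Fintype 𝒳] [Fintype 𝒴] {p : ℕ}
    (l : Fin p → ℝ) (P : Fin p → 𝒳 → 𝒴 → ℝ) (Q : 𝒳 → ℝ)
    (hl0 : ∀ j, 0 ≤ l j) (hl1 : ∑ j, l j = 1)
    (hP0 : ∀ j a b, 0 ≤ P j a b) (hP1 : ∀ j, ∑ a, ∑ b, P j a b = 1)
    (hQ0 : ∀ a, 0 ≤ Q a) (hQ1 : ∑ a, Q a = 1)
    (hQpos : ∀ j a, 0 < l j → 0 < ∑ b, P j a b → 0 < Q a) :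
    miOf (fun a b => ∑ j, l j * P j a b) ≤
      (∑ j, l j * miOf (P j)) +
      ∑ j, l j * ∑ a, (∑ b, P j a b) * Real.log ((∑ b, P j a b) / Q a) := by
  set Pb : 𝒳 → 𝒴 → ℝ := fun a b => ∑ j, l j * P j a b with hPb
  set G : Fin p → 𝒳 → ℝ := fun j a => ∑ b, P j a b with hG
  set H : Fin p → 𝒴 → ℝ := fun j b => ∑ a, P j a b with hH
  set Gb : 𝒳 → ℝ := fun a => ∑ b, Pb a b with hGb
  set Hb : 𝒴 → ℝ := fun b => ∑ a, Pb a b with hHb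
  have hPb0 : ∀ a b, 0 ≤ Pb a b := fun a b =>
    Finset.sum_nonneg fun j _ => mul_nonneg (hl0 j) (hP0 j a b)
  have hG0 : ∀ j a, 0 ≤ G j a := fun j a => Finset.sum_nonneg fun b _ => hP0 j a b
  have hH0 : ∀ j b, 0 ≤ H j b := fun j b => Finset.sum_nonneg fun a _ => hP0 j a b
  have hGb0 : ∀ a, 0 ≤ Gb a := fun a => Finset.sum_nonneg fun b _ => hPb0 a b
  have hHb0 : ∀ b, 0 ≤ Hb b := fun b => Finset.sum_nonneg fun a _ => hPb0 a b
  have hHbs : ∀ b, Hb b = ∑ j, l j * H j b := by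
    intro b
    simp only [hHb, hPb, hH]
    rw [Finset.sum_comm]
    simp [Finset.mul_sum]
  -- rewrite goal as a triple sum inequality
  rw [← sub_nonneg]
  have hmi : ∀ j, l j * miOf (P j) =
      ∑ a, ∑ b, l j * (P j a b * Real.log (P j a b / (G j a * H j b))) := by
    intro j
    simp only [miOf, Finset.mul_sum, hG, hH]
  have hd : ∀ j, l j * ∑ a, G j a * Real.log (G j a / Q a) =
      ∑ a, ∑ b, l j * (P j a b * Real.log (G j a / Q a)) := by
    intro j
    simp only [Finset.mul_sum, hG, Finset.sum_mul]
  have hm2 : miOf Pb = ∑ j, ∑ a, ∑ b, l j * (P j a b * Real.log (Pb a b / (Gb a * Hb b))) := by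
    rw [show (∑ j, ∑ a, ∑ b, l j * (P j a b * Real.log (Pb a b / (Gb a * Hb b))))
        = ∑ a, ∑ b, ∑ j, l j * (P j a b * Real.log (Pb a b / (Gb a * Hb b))) from by
      rw [Finset.sum_comm]
      exact Finset.sum_congr rfl fun a _ => Finset.sum_comm]
    unfold miOf
    refine Finset.sum_congr rfl fun a _ => Finset.sum_congr rfl fun b _ => ?_
    show (∑ j, l j * P j a b) * Real.log (Pb a b / (Gb a * Hb b)) = _
    rw [Finset.sum_mul]
    exact Finset.sum_congr rfl fun j _ => by ring
  have goal_eq : (∑ j, l j * miOf (P j)) +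
      (∑ j, l j * ∑ a, (∑ b, P j a b) * Real.log ((∑ b, P j a b) / Q a)) -
      miOf (fun a b => ∑ j, l j * P j a b) =
      ∑ j, ∑ a, ∑ b, (l j * (P j a b * Real.log (P j a b / (G j a * H j b))
        + P j a b * Real.log (G j a / Q a)
        - P j a b * Real.log (Pb a b / (Gb a * Hb b)))) := by
    have : miOf (fun a b => ∑ j, l j * P j a b) = miOf Pb := rfl
    rw [this, hm2]
    simp only [hmi]
    have : ∀ j, l j * ∑ a, (∑ b, P j a b) * Real.log ((∑ b, P j a b) / Q a)
        = ∑ a, ∑ b, l j * (P j a b * Real.log (G j a / Q a)) := fun j => hd j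
    simp only [this]
    rw [← Finset.sum_add_distrib, ← Finset.sum_sub_distrib]
    congr 1; funext j
    rw [← Finset.sum_add_distrib, ← Finset.sum_sub_distrib]
    congr 1; funext a
    rw [← Finset.sum_add_distrib, ← Finset.sum_sub_distrib]
    congr 1; funext b
    ring
  rw [goal_eq]
  -- lower bound each term
  have term_bd : ∀ j a b,
      l j * P j a b - l j * (H j b * (Q a * Pb a b / (Gb a * Hb b))) ≤
      l j * (P j a b * Real.log (P j a b / (G j a * H j b))
        + P j a b * Real.log (G j a / Q a)
        - P j a b * Real.log (Pb a b / (Gb a * Hb b))) := by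
    intro j a b
    rcases eq_or_lt_of_le (hl0 j) with hl | hl
    · simp [← hl]
    rcases eq_or_lt_of_le (hP0 j a b) with hP | hP
    · have h1 : 0 ≤ l j * (H j b * (Q a * Pb a b / (Gb a * Hb b))) := by
        apply mul_nonneg (le_of_lt hl)
        apply mul_nonneg (hH0 j b)
        apply div_nonneg (mul_nonneg (hQ0 a) (hPb0 a b))
        exact mul_nonneg (hGb0 a) (hHb0 b)
      rw [← hP]
      simp only [mul_zero, zero_mul, zero_add, zero_sub, sub_zero, add_zero]
      linarith
    · have hGp : 0 < G j a := lt_of_lt_of_le hP (Finset.single_le_sum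
        (fun b _ => hP0 j a b) (Finset.mem_univ b))
      have hHp : 0 < H j b := lt_of_lt_of_le hP (Finset.single_le_sum
        (fun a _ => hP0 j a b) (Finset.mem_univ a))
      have hPbp : 0 < Pb a b := lt_of_lt_of_le (mul_pos hl hP) (Finset.single_le_sum
        (fun j _ => mul_nonneg (hl0 j) (hP0 j a b)) (Finset.mem_univ j))
      have hGbp : 0 < Gb a := lt_of_lt_of_le hPbp (Finset.single_le_sum
        (fun b _ => hPb0 a b) (Finset.mem_univ b))
      have hHbp : 0 < Hb b := lt_of_lt_of_le hPbp (Finset.single_le_sum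
        (fun a _ => hPb0 a b) (Finset.mem_univ a))
      have hQp : 0 < Q a := hQpos j a hl hGp
      set X : ℝ := P j a b * (Gb a * Hb b) / (H j b * (Q a * Pb a b)) with hX
      have hXp : 0 < X := by
        apply div_pos (mul_pos hP (mul_pos hGbp hHbp)) (mul_pos hHp (mul_pos hQp hPbp))
      have hPne : P j a b ≠ 0 := ne_of_gt hP
      have hGne : G j a ≠ 0 := ne_of_gt hGp
      have hHne : H j b ≠ 0 := ne_of_gt hHp
      have hPbne : Pb a b ≠ 0 := ne_of_gt hPbp
      have hGbne : Gb a ≠ 0 := ne_of_gt hGbp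
      have hHbne : Hb b ≠ 0 := ne_of_gt hHbp
      have hQne : Q a ≠ 0 := ne_of_gt hQp
      have hlog : Real.log (P j a b / (G j a * H j b)) + Real.log (G j a / Q a)
          - Real.log (Pb a b / (Gb a * Hb b)) = Real.log X := by
        rw [hX, Real.log_div hPne (mul_ne_zero hGne hHne),
          Real.log_div hGne hQne,
          Real.log_div hPbne (mul_ne_zero hGbne hHbne),
          Real.log_div (mul_ne_zero hPne (mul_ne_zero hGbne hHbne))
            (mul_ne_zero hHne (mul_ne_zero hQne hPbne)),
          Real.log_mul hGne hHne,
          Real.log_mul hPne (mul_ne_zero hGbne hHbne),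
          Real.log_mul hGbne hHbne,
          Real.log_mul hHne (mul_ne_zero hQne hPbne),
          Real.log_mul hQne hPbne]
        ring
      have hmain : P j a b * (1 - 1/X) ≤ P j a b * Real.log X :=
        mul_le_mul_of_nonneg_left (one_sub_inv_le_log hXp) (le_of_lt hP)
      have hPX : P j a b * (1 - 1/X) = P j a b - H j b * (Q a * Pb a b / (Gb a * Hb b)) := by
        rw [hX]
        field_simp
      have : P j a b - H j b * (Q a * Pb a b / (Gb a * Hb b)) ≤
          P j a b * Real.log (P j a b / (G j a * H j b))
          + P j a b * Real.log (G j a / Q a)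
          - P j a b * Real.log (Pb a b / (Gb a * Hb b)) := by
        rw [show P j a b * Real.log (P j a b / (G j a * H j b))
          + P j a b * Real.log (G j a / Q a)
          - P j a b * Real.log (Pb a b / (Gb a * Hb b)) = P j a b *
          (Real.log (P j a b / (G j a * H j b)) + Real.log (G j a / Q a)
          - Real.log (Pb a b / (Gb a * Hb b))) by ring, hlog, ← hPX]
        exact hmain
      calc l j * P j a b - l j * (H j b * (Q a * Pb a b / (Gb a * Hb b)))
          = l j * (P j a b - H j b * (Q a * Pb a b / (Gb a * Hb b))) := by ring
        _ ≤ _ := mul_le_mul_of_nonneg_left this (le_of_lt hl)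
  have sum_bd : (0:ℝ) ≤ ∑ j, ∑ a, ∑ b,
      (l j * P j a b - l j * (H j b * (Q a * Pb a b / (Gb a * Hb b)))) := by
    have e1 : ∑ j, ∑ a, ∑ b, (l j * P j a b - l j * (H j b * (Q a * Pb a b / (Gb a * Hb b))))
        = (∑ j, ∑ a, ∑ b, l j * P j a b)
          - ∑ j, ∑ a, ∑ b, l j * (H j b * (Q a * Pb a b / (Gb a * Hb b))) := by
      rw [← Finset.sum_sub_distrib]
      congr 1; funext j
      rw [← Finset.sum_sub_distrib]
      congr 1; funext a
      rw [← Finset.sum_sub_distrib]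
    have e2 : (∑ j, ∑ a, ∑ b, l j * P j a b) = 1 := by
      have : ∀ j, ∑ a, ∑ b, l j * P j a b = l j := by
        intro j
        rw [show ∑ a, ∑ b, l j * P j a b = l j * ∑ a, ∑ b, P j a b by
          simp [Finset.mul_sum], hP1 j, mul_one]
      simp only [this, hl1]
    have e3 : ∑ j, ∑ a, ∑ b, l j * (H j b * (Q a * Pb a b / (Gb a * Hb b)))
        = ∑ a, ∑ b, Hb b * (Q a * Pb a b / (Gb a * Hb b)) := by
      rw [Finset.sum_comm]
      refine Finset.sum_congr rfl fun a _ => ?_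
      rw [Finset.sum_comm]
      refine Finset.sum_congr rfl fun b _ => ?_
      have hstep : ∑ j, l j * (H j b * (Q a * Pb a b / (Gb a * Hb b)))
          = (∑ j, l j * H j b) * (Q a * Pb a b / (Gb a * Hb b)) := by
        simp only [Finset.sum_mul, mul_assoc]
      rw [hstep, ← hHbs b]
    have e4 : ∑ a, ∑ b, Hb b * (Q a * Pb a b / (Gb a * Hb b)) ≤ 1 := by
      have step : ∀ a b, Hb b * (Q a * Pb a b / (Gb a * Hb b)) = Q a * (Pb a b / Gb a) := by
        intro a b
        rcases eq_or_lt_of_le (hHb0 b) with h0 | h0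
        · have hz : Pb a b = 0 := le_antisymm (le_trans (Finset.single_le_sum
            (fun a' _ => hPb0 a' b) (Finset.mem_univ a)) (le_of_eq h0.symm)) (hPb0 a b)
          simp [← h0, hz]
        rcases eq_or_lt_of_le (hGb0 a) with g0 | g0
        · have hz : Pb a b = 0 := le_antisymm (le_trans (Finset.single_le_sum
            (fun b' _ => hPb0 a b') (Finset.mem_univ b)) (le_of_eq g0.symm)) (hPb0 a b)
          simp [hz]
        field_simp
      calc ∑ a, ∑ b, Hb b * (Q a * Pb a b / (Gb a * Hb b))
          = ∑ a, Q a * (Gb a / Gb a) := by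
            refine Finset.sum_congr rfl fun a _ => ?_
            rw [show ∑ b, Hb b * (Q a * Pb a b / (Gb a * Hb b))
                = ∑ b, Q a * (Pb a b / Gb a) from
              Finset.sum_congr rfl fun b _ => step a b]
            rw [← Finset.mul_sum, ← Finset.sum_div]
        _ ≤ ∑ a, Q a := by
            apply Finset.sum_le_sum
            intro a _
            rcases eq_or_ne (Gb a) 0 with h | h
            · simpa [h] using hQ0 a
            · rw [div_self h, mul_one]
        _ = 1 := hQ1
    rw [e1, e2, e3]
    linarith
  exact le_trans sum_bd (Finset.sum_le_sum fun j _ => Finset.sum_le_sum fun a _ =>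
    Finset.sum_le_sum fun b _ => term_bd j a b)

lemma type_count {𝒳 : Type*} [Fintype 𝒳] [DecidableEq 𝒳] {n p : ℕ}
    (A : Fin p → Finset (Fin n)) (hne : ∀ j, (A j).Nonempty)
    (s : Fin n → Fin p) :
    ∑ x : Fin n → 𝒳, ∏ i, (((A (s i)).filter (fun k => x k = x i)).card : ℝ) /
        ((A (s i)).card : ℝ)
      ≤ ((n : ℝ) + 1) ^ (p * Fintype.card 𝒳) := by
  classical
  set T : (Fin n → 𝒳) → (Fin p → 𝒳 → Fin (n+1)) := fun x j a =>
    ⟨((A j).filter fun k => x k = a).card,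
     Nat.lt_succ_of_le (le_trans (Finset.card_le_card (Finset.filter_subset _ _))
       (le_trans (Finset.card_le_univ _) (le_of_eq (Finset.card_fin n))))⟩ with hT
  have key : ∀ τ : Fin p → 𝒳 → Fin (n+1),
      ∑ x ∈ Finset.univ.filter (fun x => T x = τ),
        ∏ i, (((A (s i)).filter (fun k => x k = x i)).card : ℝ) / ((A (s i)).card : ℝ) ≤ 1 := by
    intro τ
    rcases Finset.eq_empty_or_nonempty (Finset.univ.filter (fun x => T x = τ)) with he | hne2
    · rw [he]; simp
    · obtain ⟨x₀, hx₀⟩ := hne2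
      rw [Finset.mem_filter] at hx₀
      have hτ : ∀ j, ∑ a, (((τ j a : ℕ) : ℝ)) = ((A j).card : ℝ) := by
        intro j
        rw [← hx₀.2]
        have : ∑ a, ((T x₀ j a : ℕ)) = (A j).card := by
          simp only [hT]
          exact (Finset.card_eq_sum_card_fiberwise
            (fun k _ => Finset.mem_univ (x₀ k))).symm
        exact_mod_cast congrArg (Nat.cast : ℕ → ℝ) this
      calc ∑ x ∈ Finset.univ.filter (fun x => T x = τ),
            ∏ i, (((A (s i)).filter (fun k => x k = x i)).card : ℝ) / ((A (s i)).card : ℝ)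
          = ∑ x ∈ Finset.univ.filter (fun x => T x = τ),
            ∏ i, ((τ (s i) (x i) : ℕ) : ℝ) / ((A (s i)).card : ℝ) := by
            refine Finset.sum_congr rfl fun x hx => ?_
            rw [Finset.mem_filter] at hx
            refine Finset.prod_congr rfl fun i _ => ?_
            rw [← hx.2]
        _ ≤ ∑ x : Fin n → 𝒳, ∏ i, ((τ (s i) (x i) : ℕ) : ℝ) / ((A (s i)).card : ℝ) :=
            Finset.sum_le_sum_of_subset_of_nonneg (Finset.filter_subset _ _)
              (fun x _ _ => Finset.prod_nonneg fun i _ => by positivity)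
        _ = ∏ i, ∑ a, ((τ (s i) a : ℕ) : ℝ) / ((A (s i)).card : ℝ) := by
            rw [Finset.prod_univ_sum]
            rw [Fintype.piFinset_univ]
        _ = 1 := by
            refine Finset.prod_eq_one fun i _ => ?_
            rw [← Finset.sum_div, hτ (s i), div_self]
            have h := Finset.card_pos.mpr (hne (s i))
            exact_mod_cast Nat.pos_iff_ne_zero.mp h
  calc ∑ x : Fin n → 𝒳, ∏ i, (((A (s i)).filter (fun k => x k = x i)).card : ℝ) /
        ((A (s i)).card : ℝ)
      = ∑ τ : Fin p → 𝒳 → Fin (n+1), ∑ x ∈ Finset.univ.filter (fun x => T x = τ),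
          ∏ i, (((A (s i)).filter (fun k => x k = x i)).card : ℝ) / ((A (s i)).card : ℝ) :=
        (Finset.sum_fiberwise_of_maps_to (fun x _ => Finset.mem_univ (T x)) _).symm
    _ ≤ ∑ _τ : Fin p → 𝒳 → Fin (n+1), (1:ℝ) := Finset.sum_le_sum fun τ _ => key τ
    _ = (Fintype.card (Fin p → 𝒳 → Fin (n+1)) : ℝ) := by
        rw [Finset.sum_const, Finset.card_univ, nsmul_eq_mul, mul_one]
    _ = ((n : ℝ) + 1) ^ (p * Fintype.card 𝒳) := by
        rw [Fintype.card_fun, Fintype.card_fun, Fintype.card_fin, Fintype.card_fin]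
        push_cast
        rw [← pow_mul, mul_comm]

theorem statement5 {𝒳 𝒴 : Type*} [Fintype 𝒳] [Fintype 𝒴] [DecidableEq 𝒳] [DecidableEq 𝒴]
    {n p : ℕ} (hn : 0 < n) (A : Fin p → Finset (Fin n))
    (hne : ∀ i, (A i).Nonempty)
    (hdisj : ∀ i j, i ≠ j → Disjoint (A i) (A j))
    (hcover : ∀ k : Fin n, ∃ i, k ∈ A i)
    (Q : 𝒳 → ℝ) (hQ0 : ∀ a, 0 ≤ Q a) (hQ1 : ∑ a, Q a = 1)
    (Δ : ℝ) (hΔ : 0 < Δ) :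
    ∃ J : Set (Fin n → 𝒳),
      (∀ x : Fin n → 𝒳, x ∉ J → ∀ y : Fin n → 𝒴,
        empMIOn Finset.univ x y - Δ ≤
          ∑ i, ((A i).card : ℝ) / (n : ℝ) * empMIOn (A i) x y) ∧
      prodProb Q J ≤
        Real.exp (-(n : ℝ) *
          (Δ - (p : ℝ) * (Fintype.card 𝒳 : ℝ) * Real.log ((n : ℝ) + 1) / (n : ℝ))) := by
  classical
  have hnR : (0:ℝ) < (n:ℝ) := by exact_mod_cast hn
  have hnne : (n:ℝ) ≠ 0 := ne_of_gt hnR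
  -- block index function
  set s : Fin n → Fin p := fun i => (hcover i).choose with hs_def
  have hs : ∀ i, i ∈ A (s i) := fun i => (hcover i).choose_spec
  have hsu : ∀ i j, i ∈ A j → s i = j := by
    intro i j hij
    by_contra hne'
    exact (Finset.disjoint_left.mp (hdisj (s i) j hne') (hs i)) hij
  have hAs : ∀ j, A j = Finset.univ.filter (fun i => s i = j) := by
    intro j
    ext i
    simp only [Finset.mem_filter, Finset.mem_univ, true_and]
    exact ⟨fun h => hsu i j h, fun h => h ▸ hs i⟩
  have hcardA : ∀ j, (0:ℝ) < ((A j).card : ℝ) := by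
    intro j
    exact_mod_cast Finset.card_pos.mpr (hne j)
  have hcardAne : ∀ j, ((A j).card : ℝ) ≠ 0 := fun j => ne_of_gt (hcardA j)
  -- partition of counts
  have hNsum : ∀ (P : Fin n → Prop) [DecidablePred P],
      (Finset.univ.filter P).card = ∑ j, ((A j).filter P).card := by
    intro P _
    rw [Finset.card_eq_sum_card_fiberwise (f := s) (t := Finset.univ)
      (fun k _ => Finset.mem_univ (s k))]
    refine Finset.sum_congr rfl fun j _ => ?_
    congr 1
    ext k
    simp only [Finset.mem_filter, Finset.mem_univ, true_and, hAs j]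
    tauto
  have hnsum : (n:ℝ) = ∑ j, ((A j).card : ℝ) := by
    have h1 : (Finset.univ : Finset (Fin n)).card = ∑ j, ((A j).filter (fun _ => True)).card := by
      rw [← hNsum (fun _ => True)]
      simp
    simp only [Finset.filter_true] at h1
    rw [Finset.card_fin] at h1
    exact_mod_cast h1
  set lam : Fin p → ℝ := fun j => ((A j).card : ℝ) / (n:ℝ) with hlam_def
  have hl0 : ∀ j, 0 ≤ lam j := fun j => div_nonneg (le_of_lt (hcardA j)) (le_of_lt hnR)
  have hl1 : ∑ j, lam j = 1 := by
    rw [hlam_def, ← Finset.sum_div, ← hnsum, div_self hnne]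
  -- the empirical x-marginal on block j
  set Gf : (Fin n → 𝒳) → Fin p → 𝒳 → ℝ :=
    fun x j a => (((A j).filter fun k => x k = a).card : ℝ) / ((A j).card : ℝ) with hGf_def
  have hGf0 : ∀ x j a, 0 ≤ Gf x j a := fun x j a =>
    div_nonneg (Nat.cast_nonneg _) (Nat.cast_nonneg _)
  -- marginal identity
  have hmarg : ∀ (x : Fin n → 𝒳) (y : Fin n → 𝒴) j a,
      ∑ b, empDistOn (A j) x y a b = Gf x j a := by
    intro x y j a
    unfold empDistOn
    simp only [hGf_def]
    rw [← Finset.sum_div]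
    congr 1
    have : ((A j).filter fun k => x k = a).card
        = ∑ b, (((A j).filter fun k => x k = a).filter fun k => y k = b).card :=
      Finset.card_eq_sum_card_fiberwise (fun k _ => Finset.mem_univ (y k))
    rw [this]
    push_cast
    refine Finset.sum_congr rfl fun b _ => ?_
    rw [Finset.filter_filter]
  have hGfsum : ∀ (x : Fin n → 𝒳) j, ∑ a, Gf x j a = 1 := by
    intro x j
    simp only [hGf_def]
    rw [← Finset.sum_div]
    rw [show ∑ a, (((A j).filter fun k => x k = a).card : ℝ) = ((A j).card : ℝ) by
      exact_mod_cast congrArg (Nat.cast : ℕ → ℝ)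
        (Finset.card_eq_sum_card_fiberwise (f := x) (t := Finset.univ)
          (fun k _ => Finset.mem_univ (x k))).symm]
    exact div_self (hcardAne j)
  have hP1 : ∀ (x : Fin n → 𝒳) (y : Fin n → 𝒴) j,
      ∑ a, ∑ b, empDistOn (A j) x y a b = 1 := by
    intro x y j
    rw [show ∑ a, ∑ b, empDistOn (A j) x y a b = ∑ a, Gf x j a from
      Finset.sum_congr rfl fun a _ => hmarg x y j a]
    exact hGfsum x j
  -- mixture identity
  have hmix : ∀ (x : Fin n → 𝒳) (y : Fin n → 𝒴) a b,
      ∑ j, lam j * empDistOn (A j) x y a b = empDistOn Finset.univ x y a b := by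
    intro x y a b
    unfold empDistOn
    have e1 : ∀ j, lam j * ((((A j).filter fun i => x i = a ∧ y i = b).card : ℝ) / ((A j).card : ℝ))
        = (((A j).filter fun i => x i = a ∧ y i = b).card : ℝ) / (n:ℝ) := by
      intro j
      simp only [hlam_def]
      rw [div_mul_div_comm, mul_comm ((A j).card : ℝ), mul_div_mul_right _ _ (hcardAne j)]
    rw [Finset.sum_congr rfl fun j _ => e1 j, ← Finset.sum_div]
    rw [Finset.card_fin]
    congr 1
    exact_mod_cast congrArg (Nat.cast : ℕ → ℝ)
      (hNsum (fun i => x i = a ∧ y i = b)).symm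
  -- the divergence functional
  set F : (Fin n → 𝒳) → ℝ :=
    fun x => ∑ j, lam j * ∑ a, Gf x j a * Real.log (Gf x j a / Q a) with hF_def
  refine ⟨{x | (∃ i, Q (x i) = 0) ∨ Δ < F x}, ?_, ?_⟩
  · -- part (i)
    intro x hx y
    simp only [Set.mem_setOf_eq, not_or, not_exists, not_lt] at hx
    obtain ⟨hQx, hFx⟩ := hx
    have hQxpos : ∀ i, 0 < Q (x i) := fun i => lt_of_le_of_ne (hQ0 _) (Ne.symm (hQx i))
    have hkey := key_ineq lam (fun j => empDistOn (A j) x y) Q hl0 hl1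
      (fun j a b => div_nonneg (Nat.cast_nonneg _) (Nat.cast_nonneg _))
      (fun j => hP1 x y j) hQ0 hQ1
      (by
        intro j a hlj hGa
        rw [show ∑ b, empDistOn (A j) x y a b = Gf x j a from hmarg x y j a] at hGa
        have hcard : 0 < (((A j).filter fun k => x k = a).card : ℝ) := by
          by_contra hc
          push_neg at hc
          have : Gf x j a ≤ 0 := div_nonpos_of_nonpos_of_nonneg hc (le_of_lt (hcardA j))
          linarith
        have : 0 < ((A j).filter fun k => x k = a).card := by exact_mod_cast hcard
        obtain ⟨k, hk⟩ := Finset.card_pos.mp this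
        rw [Finset.mem_filter] at hk
        rw [← hk.2]
        exact hQxpos k)
    have hmi_eq : miOf (fun a b => ∑ j, lam j * empDistOn (A j) x y a b)
        = empMIOn Finset.univ x y := by
      unfold empMIOn
      congr 1
      funext a b
      exact hmix x y a b
    have hF_eq : ∑ j, lam j * ∑ a, (∑ b, empDistOn (A j) x y a b) *
        Real.log ((∑ b, empDistOn (A j) x y a b) / Q a) = F x := by
      rw [hF_def]
      refine Finset.sum_congr rfl fun j _ => ?_
      congr 1
      refine Finset.sum_congr rfl fun a _ => ?_
      rw [hmarg x y j a]
    rw [hmi_eq, hF_eq] at hkey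
    have : ∑ i, ((A i).card : ℝ) / (n:ℝ) * empMIOn (A i) x y
        = ∑ j, lam j * miOf (empDistOn (A j) x y) := by
      refine Finset.sum_congr rfl fun j _ => rfl
    rw [this]
    linarith
  · -- part (ii)
    have hGfpos : ∀ (x : Fin n → 𝒳) i, 0 < Gf x (s i) (x i) := by
      intro x i
      apply div_pos _ (hcardA (s i))
      have : i ∈ (A (s i)).filter fun k => x k = x i := by
        rw [Finset.mem_filter]; exact ⟨hs i, rfl⟩
      exact_mod_cast Finset.card_pos.mpr ⟨i, this⟩
    -- exact identity: n * F x = ∑ i, (log Gf - log Q)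
    have hident : ∀ x : Fin n → 𝒳, (∀ i, Q (x i) ≠ 0) →
        (n:ℝ) * F x = ∑ i, (Real.log (Gf x (s i) (x i)) - Real.log (Q (x i))) := by
      intro x hQx
      have e1 : (n:ℝ) * F x = ∑ j, ∑ a, (((A j).filter fun k => x k = a).card : ℝ) *
          Real.log (Gf x j a / Q a) := by
        rw [hF_def, Finset.mul_sum]
        refine Finset.sum_congr rfl fun j _ => ?_
        simp only [hlam_def]
        rw [show (n:ℝ) * (((A j).card : ℝ) / (n:ℝ) * ∑ a, Gf x j a * Real.log (Gf x j a / Q a))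
          = ((A j).card : ℝ) * ∑ a, Gf x j a * Real.log (Gf x j a / Q a) by
            rw [← mul_assoc, mul_div_assoc', mul_comm (n:ℝ), mul_div_assoc, div_self hnne, mul_one]]
        rw [Finset.mul_sum]
        refine Finset.sum_congr rfl fun a _ => ?_
        simp only [hGf_def]
        rw [show ((A j).card : ℝ) * ((((A j).filter fun k => x k = a).card : ℝ) / ((A j).card : ℝ)
            * Real.log ((((A j).filter fun k => x k = a).card : ℝ) / ((A j).card : ℝ) / Q a))
          = (((A j).filter fun k => x k = a).card : ℝ)
            * Real.log ((((A j).filter fun k => x k = a).card : ℝ) / ((A j).card : ℝ) / Q a) by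
            rw [← mul_assoc, mul_div_assoc', mul_comm ((A j).card : ℝ), mul_div_assoc,
              div_self (hcardAne j), mul_one]]
      rw [e1]
      have e2 : ∑ i : Fin n, (Real.log (Gf x (s i) (x i)) - Real.log (Q (x i)))
          = ∑ j, ∑ i ∈ A j, (Real.log (Gf x (s i) (x i)) - Real.log (Q (x i))) := by
        rw [← Finset.sum_fiberwise_of_maps_to (g := s) (fun k _ => Finset.mem_univ (s k))]
        refine Finset.sum_congr rfl fun j _ => ?_
        refine Finset.sum_congr ?_ fun i _ => rfl
        rw [hAs j]
      rw [e2]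
      refine Finset.sum_congr rfl fun j _ => ?_
      have e3 : ∑ i ∈ A j, (Real.log (Gf x (s i) (x i)) - Real.log (Q (x i)))
          = ∑ a, ∑ i ∈ (A j).filter (fun k => x k = a),
              (Real.log (Gf x (s i) (x i)) - Real.log (Q (x i))) :=
        (Finset.sum_fiberwise_of_maps_to (fun k _ => Finset.mem_univ (x k)) _).symm
      rw [e3]
      refine Finset.sum_congr rfl fun a _ => ?_
      rcases Finset.eq_empty_or_nonempty ((A j).filter fun k => x k = a) with he | hne2
      · rw [he]
        simp
      · obtain ⟨k₀, hk₀⟩ := hne2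
        rw [Finset.mem_filter] at hk₀
        have hsk : ∀ i ∈ (A j).filter (fun k => x k = a), s i = j := by
          intro i hi
          rw [Finset.mem_filter] at hi
          exact hsu i j hi.1
        have hxk : ∀ i ∈ (A j).filter (fun k => x k = a), x i = a := by
          intro i hi
          rw [Finset.mem_filter] at hi
          exact hi.2
        have hconst : ∑ i ∈ (A j).filter (fun k => x k = a),
            (Real.log (Gf x (s i) (x i)) - Real.log (Q (x i)))
            = (((A j).filter fun k => x k = a).card : ℝ) *
              (Real.log (Gf x j a) - Real.log (Q a)) := by
          rw [Finset.sum_congr rfl (fun i hi => by rw [hsk i hi, hxk i hi]),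
            Finset.sum_const, nsmul_eq_mul]
        rw [hconst]
        congr 1
        have hGfa : 0 < Gf x j a := by
          apply div_pos _ (hcardA j)
          exact_mod_cast Finset.card_pos.mpr ⟨k₀, Finset.mem_filter.mpr hk₀⟩
        have hQa : Q a ≠ 0 := hk₀.2 ▸ hQx k₀
        rw [Real.log_div (ne_of_gt hGfa) hQa]
    -- per-sequence bound
    have hseq : ∀ x : Fin n → 𝒳, (∀ i, Q (x i) ≠ 0) → Δ < F x →
        ∏ i, Q (x i) ≤ Real.exp (-(n:ℝ) * Δ) * ∏ i, Gf x (s i) (x i) := by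
      intro x hQx hFx
      have hQxpos : ∀ i, 0 < Q (x i) := fun i => lt_of_le_of_ne (hQ0 _) (Ne.symm (hQx i))
      have e1 : ∏ i, Q (x i) = Real.exp (∑ i, Real.log (Q (x i))) := by
        rw [Real.exp_sum]
        exact Finset.prod_congr rfl fun i _ => (Real.exp_log (hQxpos i)).symm
      have e2 : ∏ i, Gf x (s i) (x i) = Real.exp (∑ i, Real.log (Gf x (s i) (x i))) := by
        rw [Real.exp_sum]
        exact Finset.prod_congr rfl fun i _ => (Real.exp_log (hGfpos x i)).symm
      rw [e1, e2, ← Real.exp_add]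
      apply Real.exp_le_exp.mpr
      have := hident x hQx
      rw [Finset.sum_sub_distrib] at this
      have hnF : (n:ℝ) * Δ ≤ (n:ℝ) * F x := by
        apply mul_le_mul_of_nonneg_left (le_of_lt hFx) (le_of_lt hnR)
      linarith
    -- assemble
    have hcount := type_count (𝒳 := 𝒳) A hne s
    have hineq1 : prodProb Q {x : Fin n → 𝒳 | (∃ i, Q (x i) = 0) ∨ Δ < F x}
        ≤ ∑ x : Fin n → 𝒳, (if (∀ i, Q (x i) ≠ 0) ∧ Δ < F x then ∏ i, Q (x i) else 0) := by
      unfold prodProb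
      apply Finset.sum_le_sum
      intro x _
      rw [Set.indicator_apply]
      by_cases hmem : x ∈ {x : Fin n → 𝒳 | (∃ i, Q (x i) = 0) ∨ Δ < F x}
      · rw [if_pos hmem]
        by_cases hz : ∀ i, Q (x i) ≠ 0
        · rcases hmem with hz' | hF'
          · obtain ⟨i0, hi0⟩ := hz'
            exact absurd hi0 (hz i0)
          · rw [if_pos ⟨hz, hF'⟩]
        · push_neg at hz
          obtain ⟨i0, hi0⟩ := hz
          rw [show ∏ i, Q (x i) = 0 from Finset.prod_eq_zero (Finset.mem_univ i0) hi0]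
          split_ifs <;> simp
      · rw [if_neg hmem]
        split_ifs with h
        · exact Finset.prod_nonneg fun i _ => hQ0 _
        · exact le_refl _
    have hineq2 : ∑ x : Fin n → 𝒳, (if (∀ i, Q (x i) ≠ 0) ∧ Δ < F x then ∏ i, Q (x i) else 0)
        ≤ ∑ x : Fin n → 𝒳, Real.exp (-(n:ℝ) * Δ) * ∏ i, Gf x (s i) (x i) := by
      apply Finset.sum_le_sum
      intro x _
      split_ifs with h
      · exact hseq x h.1 h.2
      · exact mul_nonneg (le_of_lt (Real.exp_pos _))
          (Finset.prod_nonneg fun i _ => hGf0 x (s i) (x i))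
    have hcount' : ∑ x : Fin n → 𝒳, ∏ i, Gf x (s i) (x i)
        ≤ ((n:ℝ) + 1) ^ (p * Fintype.card 𝒳) := hcount
    calc prodProb Q {x : Fin n → 𝒳 | (∃ i, Q (x i) = 0) ∨ Δ < F x}
        ≤ ∑ x : Fin n → 𝒳, (if (∀ i, Q (x i) ≠ 0) ∧ Δ < F x then ∏ i, Q (x i) else 0) := hineq1
      _ ≤ ∑ x : Fin n → 𝒳, Real.exp (-(n:ℝ) * Δ) * ∏ i, Gf x (s i) (x i) := hineq2
      _ = Real.exp (-(n:ℝ) * Δ) * ∑ x : Fin n → 𝒳, ∏ i, Gf x (s i) (x i) := by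
          rw [← Finset.mul_sum]
      _ ≤ Real.exp (-(n:ℝ) * Δ) * ((n:ℝ) + 1) ^ (p * Fintype.card 𝒳) :=
          mul_le_mul_of_nonneg_left hcount' (le_of_lt (Real.exp_pos _))
      _ = Real.exp (-(n : ℝ) *
          (Δ - (p : ℝ) * (Fintype.card 𝒳 : ℝ) * Real.log ((n : ℝ) + 1) / (n : ℝ))) := by
          rw [show -(n : ℝ) * (Δ - (p : ℝ) * (Fintype.card 𝒳 : ℝ) * Real.log ((n : ℝ) + 1) / (n : ℝ))
            = -(n:ℝ) * Δ + ((p * Fintype.card 𝒳 : ℕ) : ℝ) * Real.log ((n : ℝ) + 1) by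
              push_cast
              field_simp
              ring]
          rw [Real.exp_add]
          congr 1
          rw [Real.exp_nat_mul, Real.exp_log (by positivity)]
end

section
/- Let {A_i}_{i=1}^p be a partition of the index set {1,…,n} into disjoint nonempty subsets, and let x ∈ ℝ^n have i.i.d. Gaussian entries x_i ∼ 𝒩(0,P) with P > 0. For y ∈ ℝ^n, let ρ̂_i = ρ̂(x_{A_i}, y_{A_i}) be the empirical correlation factor of the sub-sequences on A_i and ρ̂ = ρ̂(x,y) the overall empirical correlation factor. Then for every Δ with 0 < Δ ≤ 1/7 there exists a subset J_Δ ⊆ ℝ^n such that: (i) for every x ∉ J_Δ and every y ∈ ℝ^n, Σ_{i=1}^p (|A_i|/n)·ρ̂_i² ≥ ρ̂² − Δ; and (ii) Pr(x ∈ J_Δ) ≤ 2^p · e^{−nΔ²/8}. -/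
open MeasureTheory ProbabilityTheory Finset
open scoped NNReal
open scoped ENNReal
open Real



private lemma exp_cubic {x : ℝ} (h : |x| ≤ 1) :
    Real.exp x ≤ 1 + x + x ^ 2 / 2 + |x| ^ 3 * (2 / 9) := by
  have h3 := Real.exp_bound h (by norm_num : 0 < 3)
  have hs : (∑ m ∈ Finset.range 3, x ^ m / m.factorial) = 1 + x + x ^ 2 / 2 := by
    rw [Finset.sum_range_succ, Finset.sum_range_succ, Finset.sum_range_succ,
      Finset.sum_range_zero]
    norm_num [Nat.factorial]
  rw [hs] at h3
  have h4 := (abs_sub_le_iff.1 h3).1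
  norm_num [Nat.factorial] at h4
  linarith

private lemma exp_lb1 {u : ℝ} (h0 : 0 ≤ u) (h7 : u ≤ 1 / 7) :
    Real.exp (-(u + u ^ 2)) ≤ 1 - u := by
  have habs : |(-(u + u ^ 2))| ≤ 1 := by
    rw [abs_neg, abs_of_nonneg (by nlinarith)]
    nlinarith
  have h := exp_cubic habs
  rw [abs_neg, abs_of_nonneg (by nlinarith : (0:ℝ) ≤ u + u ^ 2)] at h
  nlinarith [sq_nonneg u, pow_nonneg h0 3]

private lemma exp_lb2 {w : ℝ} (h0 : 0 ≤ w) (h7 : w ≤ 1 / 7) :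
    Real.exp (w - w ^ 2 / 2) ≤ 1 + w := by
  have hx0 : (0:ℝ) ≤ w - w ^ 2 / 2 := by nlinarith
  have habs : |w - w ^ 2 / 2| ≤ 1 := by rw [abs_of_nonneg hx0]; nlinarith
  have h := exp_cubic habs
  rw [abs_of_nonneg hx0] at h
  nlinarith [pow_nonneg h0 3, sq_nonneg w]

private lemma exp_sq_eq (t : ℝ) : Real.exp t ^ 2 = Real.exp (2 * t) := by
  rw [sq, ← Real.exp_add]; ring_nf

private lemma inv_sqrt_le1 {u : ℝ} (h0 : 0 ≤ u) (h7 : u ≤ 1 / 7) :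
    (Real.sqrt (1 - u))⁻¹ ≤ Real.exp ((u + u ^ 2) / 2) := by
  have h1 : Real.exp (-((u + u ^ 2) / 2)) ≤ Real.sqrt (1 - u) := by
    rw [Real.le_sqrt' (Real.exp_pos _), exp_sq_eq]
    have : 2 * -((u + u ^ 2) / 2) = -(u + u ^ 2) := by ring
    rw [this]
    exact exp_lb1 h0 h7
  have h2 : (0:ℝ) < Real.exp (-((u + u ^ 2) / 2)) := Real.exp_pos _
  have h3 := inv_anti₀ h2 h1
  rwa [← Real.exp_neg, neg_neg] at h3

private lemma inv_sqrt_le2 {w : ℝ} (h0 : 0 ≤ w) (h7 : w ≤ 1 / 7) :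
    (Real.sqrt (1 + w))⁻¹ ≤ Real.exp (-(w / 2) + w ^ 2 / 4) := by
  have h1 : Real.exp ((w - w ^ 2 / 2) / 2) ≤ Real.sqrt (1 + w) := by
    rw [Real.le_sqrt' (Real.exp_pos _), exp_sq_eq]
    have : 2 * ((w - w ^ 2 / 2) / 2) = w - w ^ 2 / 2 := by ring
    rw [this]
    exact exp_lb2 h0 h7
  have h3 := inv_anti₀ (Real.exp_pos _) h1
  rw [← Real.exp_neg] at h3
  have : -((w - w ^ 2 / 2) / 2) = -(w / 2) + w ^ 2 / 4 := by ring
  rwa [this] at h3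

-- key pointwise identity
private lemma pdf_mul_exp (P : ℝ≥0) (hP : 0 < P) (c : ℝ) :
    (fun t : ℝ => gaussianPDFReal 0 P t * Real.exp (c * t ^ 2)) =
      fun t : ℝ => (Real.sqrt (2 * π * P))⁻¹ *
        Real.exp (-(1 / (2 * P) - c) * t ^ 2) := by
  funext t
  have hP' : (P:ℝ) ≠ 0 := ne_of_gt (by exact_mod_cast hP)
  rw [gaussianPDFReal]
  rw [mul_assoc, ← Real.exp_add]
  congr 1
  field_simp
  ring

private lemma gauss_exp_sq_integrable (P : ℝ≥0) (hP : 0 < P) {c : ℝ}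
    (hc : 2 * c * P < 1) :
    Integrable (fun t : ℝ => Real.exp (c * t ^ 2)) (gaussianReal 0 P) := by
  have hP0 : (0:ℝ) < P := by exact_mod_cast hP
  have hb : (0:ℝ) < 1 / (2 * P) - c := by
    rw [sub_pos, lt_div_iff₀ (by positivity : (0:ℝ) < 2 * (P:ℝ))]
    nlinarith
  rw [gaussianReal_of_var_ne_zero _ (ne_of_gt hP)]
  have hmeas : Measurable fun t : ℝ => (gaussianPDFReal 0 P t).toNNReal :=
    (measurable_gaussianPDFReal 0 P).real_toNNReal
  have hpdf : gaussianPDF 0 P = fun t => ((gaussianPDFReal 0 P t).toNNReal : ℝ≥0∞) := rfl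
  rw [hpdf, integrable_withDensity_iff_integrable_smul hmeas]
  have : (fun t : ℝ => (gaussianPDFReal 0 P t).toNNReal • Real.exp (c * t ^ 2)) =
      fun t : ℝ => (Real.sqrt (2 * π * P))⁻¹ * Real.exp (-(1 / (2 * P) - c) * t ^ 2) := by
    rw [← pdf_mul_exp P hP c]
    funext t
    rw [NNReal.smul_def, smul_eq_mul, Real.coe_toNNReal _ (gaussianPDFReal_nonneg 0 P t)]
  rw [this]
  exact (integrable_exp_neg_mul_sq hb).const_mul _

private lemma gauss_exp_sq_integral (P : ℝ≥0) (hP : 0 < P) {c : ℝ}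
    (hc : 2 * c * P < 1) :
    ∫ t, Real.exp (c * t ^ 2) ∂(gaussianReal 0 P) = (Real.sqrt (1 - 2 * c * P))⁻¹ := by
  have hP0 : (0:ℝ) < P := by exact_mod_cast hP
  have hb : (0:ℝ) < 1 / (2 * P) - c := by
    rw [sub_pos, lt_div_iff₀ (by positivity : (0:ℝ) < 2 * (P:ℝ))]
    nlinarith
  have hmeas : Measurable fun t : ℝ => (gaussianPDFReal 0 P t).toNNReal :=
    (measurable_gaussianPDFReal 0 P).real_toNNReal
  have hpdf : gaussianPDF 0 P = fun t => ((gaussianPDFReal 0 P t).toNNReal : ℝ≥0∞) := rfl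
  rw [gaussianReal_of_var_ne_zero _ (ne_of_gt hP), hpdf,
    integral_withDensity_eq_integral_smul hmeas]
  have heq : (fun t : ℝ => (gaussianPDFReal 0 P t).toNNReal • Real.exp (c * t ^ 2)) =
      fun t : ℝ => (Real.sqrt (2 * π * P))⁻¹ * Real.exp (-(1 / (2 * P) - c) * t ^ 2) := by
    rw [← pdf_mul_exp P hP c]
    funext t
    rw [NNReal.smul_def, smul_eq_mul, Real.coe_toNNReal _ (gaussianPDFReal_nonneg 0 P t)]
  rw [heq, integral_const_mul, integral_gaussian]
  -- (√(2πP))⁻¹ * √(π / (1/(2P) - c)) = (√(1 - 2cP))⁻¹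
  have h1 : π / (1 / (2 * P) - c) = (2 * π * P) * (1 - 2 * c * P)⁻¹ := by
    have hd : 1 / (2 * (P:ℝ)) - c = (1 - 2 * c * P) / (2 * P) := by
      field_simp
    rw [hd, div_div_eq_mul_div, div_eq_mul_inv]
    ring
  rw [h1, Real.sqrt_mul (by positivity : (0:ℝ) ≤ 2 * π * P) ((1 - 2 * c * (P:ℝ))⁻¹),
    Real.sqrt_inv]
  have h3 : Real.sqrt (2 * π * P) ≠ 0 := by
    refine ne_of_gt (Real.sqrt_pos.2 (by positivity))
  field_simp

set_option maxHeartbeats 1000000 in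
private lemma chernoff {n : ℕ} (hn : 0 < n) (P : ℝ≥0) (hP : 0 < P) {Δ : ℝ}
    (hΔ : 0 < Δ) (hΔ7 : Δ ≤ 1 / 7) (B : Finset (Fin n)) :
    Measure.pi (fun _ : Fin n => gaussianReal 0 P)
        {x : Fin n → ℝ | ((B.card : ℝ) / n + Δ) * ∑ k, x k ^ 2 < ∑ k ∈ B, x k ^ 2} ≤
      ENNReal.ofReal (Real.exp (-(n : ℝ) * Δ ^ 2 / 8)) := by
  have hn0 : (0:ℝ) < n := by exact_mod_cast hn
  have hP0 : (0:ℝ) < P := by exact_mod_cast hP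
  set μ := Measure.pi (fun _ : Fin n => gaussianReal 0 P) with hμ
  set a : ℝ := (B.card : ℝ) / n + Δ with ha_def
  by_cases ha1 : 1 ≤ a
  · have hempty : {x : Fin n → ℝ | a * ∑ k, x k ^ 2 < ∑ k ∈ B, x k ^ 2} = ∅ := by
      ext x
      simp only [Set.mem_setOf_eq, Set.mem_empty_iff_false, iff_false, not_lt]
      have h1 : ∑ k ∈ B, x k ^ 2 ≤ ∑ k, x k ^ 2 :=
        Finset.sum_le_sum_of_subset_of_nonneg (Finset.subset_univ B)
          (fun k _ _ => sq_nonneg _)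
      have h2 : (0:ℝ) ≤ ∑ k, x k ^ 2 := Finset.sum_nonneg fun k _ => sq_nonneg _
      nlinarith
    rw [hempty]
    simp
  push_neg at ha1
  have haΔ : Δ ≤ a := by
    rw [ha_def]
    have : (0:ℝ) ≤ (B.card : ℝ) / n := by positivity
    linarith
  have ha0 : 0 < a := lt_of_lt_of_le hΔ haΔ
  have hcard : (B.card : ℝ) = n * (a - Δ) := by
    rw [ha_def]
    field_simp
    ring
  clear_value a
  set u : ℝ := Δ * (1 - a) with hu_def
  set w : ℝ := Δ * a with hw_def
  have hu0 : 0 ≤ u := by rw [hu_def]; apply mul_nonneg hΔ.le; linarith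
  have hu7 : u ≤ 1 / 7 := by rw [hu_def]; nlinarith
  have hw0 : 0 ≤ w := by rw [hw_def]; exact mul_nonneg hΔ.le ha0.le
  have hw7 : w ≤ 1 / 7 := by rw [hw_def]; nlinarith
  set c : Fin n → ℝ := fun k => if k ∈ B then 1 - a else -a with hc_def
  set τ : Fin n → ℝ := fun k => Δ * c k / (2 * P) with hτ_def
  have h2τ : ∀ k, 2 * τ k * P = Δ * c k := by
    intro k
    simp only [hτ_def]
    have hP2 : (2 * (P:ℝ)) ≠ 0 := by positivity
    calc 2 * (Δ * c k / (2 * P)) * P = (Δ * c k / (2 * P)) * (2 * P) := by ring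
      _ = Δ * c k := div_mul_cancel₀ _ hP2
  have hck : ∀ k, 2 * τ k * P < 1 := by
    intro k
    rw [h2τ]
    by_cases hk : k ∈ B
    · simp only [hc_def, if_pos hk]
      nlinarith
    · simp only [hc_def, if_neg hk]
      nlinarith
  set f : Fin n → ℝ → ℝ := fun k t => Real.exp (τ k * t ^ 2) with hf_def
  have hint : ∀ k, Integrable (f k) (gaussianReal 0 P) :=
    fun k => gauss_exp_sq_integrable P hP (hck k)
  set F : (Fin n → ℝ) → ℝ := fun x => ∏ k, f k (x k) with hF_def
  have hFint : Integrable F μ := by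
    letI : MeasureSpace ℝ := ⟨gaussianReal 0 P⟩
    have h : (volume : Measure ℝ) = gaussianReal 0 P := rfl
    haveI : SigmaFinite (volume : Measure ℝ) := by rw [h]; infer_instance
    have hpi : (volume : Measure (Fin n → ℝ)) = μ := rfl
    rw [← hpi]
    exact MeasureTheory.Integrable.fintype_prod hint
  have hF0 : ∀ x, 0 ≤ F x := fun x => Finset.prod_nonneg fun k _ => (Real.exp_pos _).le
  -- inclusion into {1 ≤ F}
  have hsub : {x : Fin n → ℝ | a * ∑ k, x k ^ 2 < ∑ k ∈ B, x k ^ 2} ⊆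
      {x : Fin n → ℝ | 1 ≤ F x} := by
    intro x hx
    simp only [Set.mem_setOf_eq] at hx ⊢
    have hFx : F x = Real.exp (∑ k, τ k * x k ^ 2) := by
      rw [Real.exp_sum]
    rw [hFx]
    apply Real.one_le_exp
    have hsplit : ∑ k, c k * x k ^ 2 = (∑ k ∈ B, x k ^ 2) - a * ∑ k, x k ^ 2 := by
      have h1 : ∀ k : Fin n, c k * x k ^ 2 =
          (if k ∈ B then x k ^ 2 else 0) - a * x k ^ 2 := by
        intro k
        simp only [hc_def]
        split <;> ring
      rw [Finset.sum_congr rfl fun k _ => h1 k, Finset.sum_sub_distrib,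
        ← Finset.mul_sum, Finset.sum_ite_mem, Finset.univ_inter]
    have hτsum : ∑ k, τ k * x k ^ 2 = Δ / (2 * P) * ∑ k, c k * x k ^ 2 := by
      rw [Finset.mul_sum]
      refine Finset.sum_congr rfl fun k _ => ?_
      simp only [hτ_def]
      ring
    rw [hτsum, hsplit]
    have hpos : (0:ℝ) < Δ / (2 * P) := by positivity
    exact (mul_pos hpos (by linarith)).le
  refine le_trans (measure_mono hsub) ?_
  -- Markov
  haveI : IsProbabilityMeasure μ := by
    rw [hμ]; infer_instance
  have hfin : μ {x | 1 ≤ F x} ≠ ⊤ := measure_ne_top μ _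
  have hmarkov := mul_meas_ge_le_integral_of_nonneg
    (ae_of_all μ hF0) hFint 1
  rw [one_mul] at hmarkov
  -- integral value
  have hIF : ∫ x, F x ∂μ = ∏ k, (Real.sqrt (1 - 2 * τ k * P))⁻¹ := by
    have hprod : ∫ x, F x ∂μ = ∏ k, ∫ t, f k t ∂(gaussianReal 0 P) := by
      letI : MeasureSpace ℝ := ⟨gaussianReal 0 P⟩
      have h : (volume : Measure ℝ) = gaussianReal 0 P := rfl
      haveI : SigmaFinite (volume : Measure ℝ) := by rw [h]; infer_instance
      have hpi : (volume : Measure (Fin n → ℝ)) = μ := rfl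
      rw [← hpi, ← h]
      exact MeasureTheory.integral_fintype_prod_eq_prod (μ := fun _ => volume) f
    rw [hprod]
    exact Finset.prod_congr rfl fun k _ => gauss_exp_sq_integral P hP (hck k)
  -- bound the product
  set e : Fin n → ℝ := fun k => if k ∈ B then (u + u ^ 2) / 2 else -(w / 2) + w ^ 2 / 4
    with he_def
  have hfactor : ∀ k, (Real.sqrt (1 - 2 * τ k * P))⁻¹ ≤ Real.exp (e k) := by
    intro k
    rw [h2τ]
    by_cases hk : k ∈ B
    · simp only [hc_def, he_def, if_pos hk]
      exact inv_sqrt_le1 hu0 hu7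
    · simp only [hc_def, he_def, if_neg hk]
      have h1 : 1 - Δ * (-a) = 1 + w := by rw [hw_def]; ring
      rw [h1]
      exact inv_sqrt_le2 hw0 hw7
  have hprodle : ∏ k, (Real.sqrt (1 - 2 * τ k * P))⁻¹ ≤ Real.exp (∑ k, e k) := by
    rw [Real.exp_sum]
    exact Finset.prod_le_prod (fun k _ => by positivity) fun k _ => hfactor k
  -- compute the sum of exponents
  have hcardle : B.card ≤ n := by
    have := Finset.card_le_univ B
    simpa using this
  have hesum : ∑ k, e k = (B.card : ℝ) * ((u + u ^ 2) / 2) +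
      ((n : ℝ) - B.card) * (-(w / 2) + w ^ 2 / 4) := by
    simp only [he_def]
    rw [Finset.sum_ite, Finset.sum_const, Finset.sum_const]
    have h1 : Finset.univ.filter (fun k : Fin n => k ∈ B) = B := by
      ext k; simp
    have h2 : (Finset.univ.filter (fun k : Fin n => k ∉ B)) = Bᶜ := by
      ext k; simp
    rw [h1, h2, Finset.card_compl, Fintype.card_fin]
    rw [nsmul_eq_mul, nsmul_eq_mul, Nat.cast_sub hcardle]
  -- final numeric inequality
  have key0 : (a - Δ) * (1 - a) ^ 2 + (1 - a + Δ) * a ^ 2 / 2 ≤ 3 / 4 := by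
    have e1 : (a - Δ) * (1 - a) ^ 2 ≤ a * (1 - a) ^ 2 := by
      nlinarith [mul_nonneg hΔ.le (sq_nonneg (1 - a))]
    have e2 : (1 - a + Δ) * a ^ 2 / 2 ≤ (1 - a) * a ^ 2 / 2 + (1 / 7) * a ^ 2 / 2 := by
      nlinarith [mul_nonneg (by linarith : (0:ℝ) ≤ 1 / 7 - Δ) (sq_nonneg a)]
    have t1 : a * (1 - a) ≤ 1 / 4 := by nlinarith [sq_nonneg (a - 1 / 2)]
    have t0 : 0 ≤ a * (1 - a) := mul_nonneg ha0.le (by linarith)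
    have t2 : (0:ℝ) ≤ 1 - a / 2 := by linarith
    have e3 : a * (1 - a) ^ 2 + (1 - a) * a ^ 2 / 2 ≤ 1 / 4 := by nlinarith [mul_le_mul_of_nonneg_right t1 t2, mul_nonneg t0 (by linarith : (0:ℝ) ≤ a / 2)]
    have e4 : a ^ 2 ≤ 1 := by nlinarith
    linarith
  have key : (a - Δ) * ((u + u ^ 2) / 2) + (1 - (a - Δ)) * (-(w / 2) + w ^ 2 / 4) ≤
      -Δ ^ 2 / 8 := by
    have h1 : (0:ℝ) ≤ Δ ^ 2 := sq_nonneg Δ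
    have h2 := mul_nonneg h1 (by linarith :
      (0:ℝ) ≤ 3 / 4 - ((a - Δ) * (1 - a) ^ 2 + (1 - a + Δ) * a ^ 2 / 2))
    rw [hu_def, hw_def]
    nlinarith [h2]
  clear_value u w
  have hfinal : ∑ k, e k ≤ -(n : ℝ) * Δ ^ 2 / 8 := by
    rw [hesum, hcard]
    have h3 := mul_le_mul_of_nonneg_left key hn0.le
    nlinarith [h3]
  calc μ {x | 1 ≤ F x} = ENNReal.ofReal ((μ {x | 1 ≤ F x}).toReal) :=
        (ENNReal.ofReal_toReal hfin).symm
    _ ≤ ENNReal.ofReal (Real.exp (-(n : ℝ) * Δ ^ 2 / 8)) := by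
        apply ENNReal.ofReal_le_ofReal
        calc (μ {x | 1 ≤ F x}).toReal ≤ ∫ x, F x ∂μ := hmarkov
          _ = ∏ k, (Real.sqrt (1 - 2 * τ k * P))⁻¹ := hIF
          _ ≤ Real.exp (∑ k, e k) := hprodle
          _ ≤ Real.exp (-(n : ℝ) * Δ ^ 2 / 8) := Real.exp_le_exp.2 hfinal

/-- Empirical correlation factor of the sub-sequences of `x,y` on the index set `A`,
with the convention that it is `0` when either sub-sequence is `0` (division by zero). -/
noncomputable def empCorrOn {n : ℕ} (A : Finset (Fin n)) (x y : Fin n → ℝ) : ℝ :=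
  (∑ i ∈ A, x i * y i) /
    (Real.sqrt (∑ i ∈ A, (x i) ^ 2) * Real.sqrt (∑ i ∈ A, (y i) ^ 2))

set_option maxHeartbeats 1600000 in
theorem statement6 {n p : ℕ} (hn : 0 < n) (A : Fin p → Finset (Fin n))
    (hne : ∀ i, (A i).Nonempty)
    (hdisj : ∀ i j, i ≠ j → Disjoint (A i) (A j))
    (hcover : ∀ k : Fin n, ∃ i, k ∈ A i)
    (P : ℝ≥0) (hP : 0 < P) (Δ : ℝ) (hΔ : 0 < Δ) (hΔ7 : Δ ≤ 1 / 7) :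
    ∃ J : Set (Fin n → ℝ),
      (∀ x : Fin n → ℝ, x ∉ J → ∀ y : Fin n → ℝ,
        (empCorrOn Finset.univ x y) ^ 2 - Δ ≤
          ∑ i, ((A i).card : ℝ) / (n : ℝ) * (empCorrOn (A i) x y) ^ 2) ∧
      Measure.pi (fun _ : Fin n => gaussianReal 0 P) J ≤
        ENNReal.ofReal (2 ^ p * Real.exp (-(n : ℝ) * Δ ^ 2 / 8)) := by
  classical
  have hn0 : (0:ℝ) < n := by exact_mod_cast hn
  -- partition sum
  have hpart : ∀ f : Fin n → ℝ, ∑ k, f k = ∑ i, ∑ k ∈ A i, f k := by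
    intro f
    have hdisj' : ((Finset.univ : Finset (Fin p)) : Set (Fin p)).PairwiseDisjoint A :=
      fun i _ j _ hij => hdisj i j hij
    rw [← Finset.sum_biUnion hdisj']
    congr 1
    ext k
    simpa using hcover k
  refine ⟨⋃ S : Finset (Fin p),
    {x : Fin n → ℝ | ((∑ i ∈ S, ((A i).card : ℝ)) / n + Δ) * ∑ k, x k ^ 2
        < ∑ i ∈ S, ∑ k ∈ A i, x k ^ 2}, ?_, ?_⟩
  · -- part (i)
    intro x hx y
    have hgood : ∀ S : Finset (Fin p),
        ∑ i ∈ S, ∑ k ∈ A i, x k ^ 2 ≤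
          ((∑ i ∈ S, ((A i).card : ℝ)) / n + Δ) * ∑ k, x k ^ 2 := by
      intro S
      by_contra hcon
      push_neg at hcon
      exact hx (Set.mem_iUnion.2 ⟨S, hcon⟩)
    set X : Fin p → ℝ := fun i => ∑ k ∈ A i, x k ^ 2 with hX_def
    set Y : Fin p → ℝ := fun i => ∑ k ∈ A i, y k ^ 2 with hY_def
    set C : Fin p → ℝ := fun i => ∑ k ∈ A i, x k * y k with hC_def
    set T : ℝ := ∑ k, x k ^ 2 with hT_def
    set U : ℝ := ∑ k, y k ^ 2 with hU_def
    set N : ℝ := ∑ k, x k * y k with hN_def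
    have hX0 : ∀ i, 0 ≤ X i := fun i => Finset.sum_nonneg fun k _ => sq_nonneg _
    have hY0 : ∀ i, 0 ≤ Y i := fun i => Finset.sum_nonneg fun k _ => sq_nonneg _
    have hT0 : 0 ≤ T := Finset.sum_nonneg fun k _ => sq_nonneg _
    have hU0 : 0 ≤ U := Finset.sum_nonneg fun k _ => sq_nonneg _
    have hTX : T = ∑ i, X i := hpart _
    have hUY : U = ∑ i, Y i := hpart _
    have hNC : N = ∑ i, C i := hpart _
    have hρi : ∀ i, empCorrOn (A i) x y = C i / (Real.sqrt (X i) * Real.sqrt (Y i)) :=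
      fun i => rfl
    have hρ : empCorrOn Finset.univ x y = N / (Real.sqrt T * Real.sqrt U) := rfl
    clear_value X Y C T U N
    have hRHS0 : 0 ≤ ∑ i, ((A i).card : ℝ) / n * (empCorrOn (A i) x y) ^ 2 :=
      Finset.sum_nonneg fun i _ => mul_nonneg (by positivity) (sq_nonneg _)
    by_cases hTU : T = 0 ∨ U = 0
    · have hρ0 : empCorrOn Finset.univ x y = 0 := by
        rcases hTU with h | h
        · rw [hρ, h, Real.sqrt_zero, zero_mul, div_zero]
        · rw [hρ, h, Real.sqrt_zero, mul_zero, div_zero]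
      rw [hρ0]
      simp only [ne_eq, OfNat.ofNat_ne_zero, not_false_eq_true, zero_pow]
      linarith
    push_neg at hTU
    obtain ⟨hTne, hUne⟩ := hTU
    have hTpos : 0 < T := lt_of_le_of_ne hT0 (Ne.symm hTne)
    have hUpos : 0 < U := lt_of_le_of_ne hU0 (Ne.symm hUne)
    -- per-block identity
    have hCi : ∀ i, C i = empCorrOn (A i) x y * (Real.sqrt (X i) * Real.sqrt (Y i)) := by
      intro i
      by_cases hd : Real.sqrt (X i) * Real.sqrt (Y i) = 0
      · rw [hρi i, hd, mul_zero]
        rcases mul_eq_zero.1 hd with h | h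
        · have hXi : X i = 0 := by
            rwa [Real.sqrt_eq_zero (hX0 i)] at h
          simp only [hX_def] at hXi
          have hxk : ∀ k ∈ A i, x k = 0 := by
            intro k hk
            have := (Finset.sum_eq_zero_iff_of_nonneg fun k _ => sq_nonneg (x k)).1 hXi k hk
            exact pow_eq_zero_iff (by norm_num) |>.1 this
          rw [hC_def]
          exact Finset.sum_eq_zero fun k hk => by rw [hxk k hk, zero_mul]
        · have hYi : Y i = 0 := by
            rwa [Real.sqrt_eq_zero (hY0 i)] at h
          simp only [hY_def] at hYi
          have hyk : ∀ k ∈ A i, y k = 0 := by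
            intro k hk
            have := (Finset.sum_eq_zero_iff_of_nonneg fun k _ => sq_nonneg (y k)).1 hYi k hk
            exact pow_eq_zero_iff (by norm_num) |>.1 this
          rw [hC_def]
          exact Finset.sum_eq_zero fun k hk => by rw [hyk k hk, mul_zero]
      · rw [hρi i, div_mul_cancel₀ _ hd]
    -- Cauchy-Schwarz
    have hCS : N ^ 2 ≤ (∑ i, (empCorrOn (A i) x y) ^ 2 * X i) * U := by
      have h1 : N = ∑ i, (empCorrOn (A i) x y * Real.sqrt (X i)) * Real.sqrt (Y i) := by
        rw [hNC]
        exact Finset.sum_congr rfl fun i _ => by rw [hCi i]; ring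
      rw [h1]
      calc (∑ i, (empCorrOn (A i) x y * Real.sqrt (X i)) * Real.sqrt (Y i)) ^ 2
          ≤ (∑ i, (empCorrOn (A i) x y * Real.sqrt (X i)) ^ 2) *
            ∑ i, Real.sqrt (Y i) ^ 2 :=
            Finset.sum_mul_sq_le_sq_mul_sq _ _ _
        _ = (∑ i, (empCorrOn (A i) x y) ^ 2 * X i) * U := by
            congr 1
            · exact Finset.sum_congr rfl fun i _ => by
                rw [mul_pow, Real.sq_sqrt (hX0 i)]
            · rw [hUY]
              exact Finset.sum_congr rfl fun i _ => Real.sq_sqrt (hY0 i)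
    have hstepD : (empCorrOn Finset.univ x y) ^ 2 ≤
        (∑ i, (empCorrOn (A i) x y) ^ 2 * X i) / T := by
      rw [hρ, div_pow, mul_pow, Real.sq_sqrt hT0, Real.sq_sqrt hU0]
      rw [div_le_div_iff₀ (by positivity) hTpos]
      calc N ^ 2 * T ≤ ((∑ i, (empCorrOn (A i) x y) ^ 2 * X i) * U) * T :=
            mul_le_mul_of_nonneg_right hCS hT0
        _ = (∑ i, (empCorrOn (A i) x y) ^ 2 * X i) * (T * U) := by ring
    -- ρ_i² ≤ 1
    have hρle1 : ∀ i, (empCorrOn (A i) x y) ^ 2 ≤ 1 := by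
      intro i
      by_cases hd : Real.sqrt (X i) * Real.sqrt (Y i) = 0
      · rw [hρi i, hd, div_zero]
        norm_num
      · have hdpos : 0 < Real.sqrt (X i) * Real.sqrt (Y i) :=
          lt_of_le_of_ne (mul_nonneg (Real.sqrt_nonneg _) (Real.sqrt_nonneg _)) (Ne.symm hd)
      
        rw [hρi i, div_pow, div_le_one (by positivity)]
        rw [mul_pow, Real.sq_sqrt (hX0 i), Real.sq_sqrt (hY0 i)]
        simp only [hC_def, hX_def, hY_def]
        exact Finset.sum_mul_sq_le_sq_mul_sq (A i) x y
    -- weight comparison using hgood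
    set S : Finset (Fin p) :=
      Finset.univ.filter (fun i => ((A i).card : ℝ) / n * T < X i) with hS_def
    have hterm : ∀ i, (empCorrOn (A i) x y) ^ 2 * X i / T -
        ((A i).card : ℝ) / n * (empCorrOn (A i) x y) ^ 2 =
        (empCorrOn (A i) x y) ^ 2 * (X i / T - ((A i).card : ℝ) / n) := fun i => by ring
    have hstepF : ∑ i, (empCorrOn (A i) x y) ^ 2 * X i / T ≤
        (∑ i, ((A i).card : ℝ) / n * (empCorrOn (A i) x y) ^ 2) + Δ := by
      have hdrop : ∑ i, (empCorrOn (A i) x y) ^ 2 * (X i / T - ((A i).card : ℝ) / n) ≤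
          ∑ i ∈ S, (X i / T - ((A i).card : ℝ) / n) := by
        rw [← Finset.sum_filter_add_sum_filter_not Finset.univ
          (fun i => ((A i).card : ℝ) / n * T < X i)]
        have h1 : ∑ i ∈ Finset.univ.filter
            (fun i => ¬ ((A i).card : ℝ) / n * T < X i),
            (empCorrOn (A i) x y) ^ 2 * (X i / T - ((A i).card : ℝ) / n) ≤ 0 := by
          apply Finset.sum_nonpos
          intro i hi
          simp only [Finset.mem_filter, not_lt] at hi
          apply mul_nonpos_of_nonneg_of_nonpos (sq_nonneg _)
          rw [sub_nonpos, div_le_iff₀ hTpos]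
          exact hi.2
        have h2 : ∑ i ∈ S, (empCorrOn (A i) x y) ^ 2 *
            (X i / T - ((A i).card : ℝ) / n) ≤
            ∑ i ∈ S, (X i / T - ((A i).card : ℝ) / n) := by
          apply Finset.sum_le_sum
          intro i hi
          simp only [hS_def, Finset.mem_filter] at hi
          have hpos : 0 ≤ X i / T - ((A i).card : ℝ) / n := by
            rw [sub_nonneg, le_div_iff₀ hTpos]
            exact hi.2.le
          nlinarith [hρle1 i, sq_nonneg (empCorrOn (A i) x y)]
        linarith
      have hSbound : ∑ i ∈ S, (X i / T - ((A i).card : ℝ) / n) ≤ Δ := by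
        have hg := hgood S
        have h3 : ∑ i ∈ S, (X i / T - ((A i).card : ℝ) / n) =
            (∑ i ∈ S, X i) / T - (∑ i ∈ S, ((A i).card : ℝ)) / n := by
          rw [Finset.sum_sub_distrib, Finset.sum_div, Finset.sum_div]
        rw [h3, sub_le_iff_le_add]
        calc (∑ i ∈ S, X i) / T ≤ (∑ i ∈ S, ((A i).card : ℝ)) / n + Δ := by
              rw [div_le_iff₀ hTpos]; exact hg
          _ = Δ + (∑ i ∈ S, ((A i).card : ℝ)) / n := by ring
      have hsum : ∑ i, (empCorrOn (A i) x y) ^ 2 * X i / T -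
          ∑ i, ((A i).card : ℝ) / n * (empCorrOn (A i) x y) ^ 2 =
          ∑ i, (empCorrOn (A i) x y) ^ 2 * (X i / T - ((A i).card : ℝ) / n) := by
        rw [← Finset.sum_sub_distrib]
        exact Finset.sum_congr rfl fun i _ => by ring
      linarith [hdrop, hSbound, hsum]
    have hsum_eq : ∑ i, (empCorrOn (A i) x y) ^ 2 * X i / T =
        (∑ i, (empCorrOn (A i) x y) ^ 2 * X i) / T := by
      rw [Finset.sum_div]
    linarith [hstepD, hstepF, hsum_eq]
  · -- part (ii)
    refine le_trans (measure_iUnion_le _) ?_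
    have hterm : ∀ S : Finset (Fin p),
        Measure.pi (fun _ : Fin n => gaussianReal 0 P)
          {x : Fin n → ℝ | ((∑ i ∈ S, ((A i).card : ℝ)) / n + Δ) * ∑ k, x k ^ 2
            < ∑ i ∈ S, ∑ k ∈ A i, x k ^ 2} ≤
          ENNReal.ofReal (Real.exp (-(n : ℝ) * Δ ^ 2 / 8)) := by
      intro S
      have hdisjS : (S : Set (Fin p)).PairwiseDisjoint A :=
        fun i _ j _ hij => hdisj i j hij
      have hBcard : ((S.biUnion A).card : ℝ) = ∑ i ∈ S, ((A i).card : ℝ) := by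
        rw [Finset.card_biUnion (fun i hi j hj hij => hdisj i j hij)]
        push_cast
        rfl
      have hBsum : ∀ x : Fin n → ℝ,
          ∑ k ∈ S.biUnion A, x k ^ 2 = ∑ i ∈ S, ∑ k ∈ A i, x k ^ 2 :=
        fun x => Finset.sum_biUnion hdisjS
      have hset : {x : Fin n → ℝ | ((∑ i ∈ S, ((A i).card : ℝ)) / n + Δ) * ∑ k, x k ^ 2
            < ∑ i ∈ S, ∑ k ∈ A i, x k ^ 2} =
          {x : Fin n → ℝ | (((S.biUnion A).card : ℝ) / n + Δ) * ∑ k, x k ^ 2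
            < ∑ k ∈ S.biUnion A, x k ^ 2} := by
        ext x
        rw [Set.mem_setOf_eq, Set.mem_setOf_eq, hBcard, hBsum]
      rw [hset]
      exact chernoff hn P hP hΔ hΔ7 (S.biUnion A)
    calc ∑' S : Finset (Fin p), Measure.pi (fun _ : Fin n => gaussianReal 0 P)
          {x : Fin n → ℝ | ((∑ i ∈ S, ((A i).card : ℝ)) / n + Δ) * ∑ k, x k ^ 2
            < ∑ i ∈ S, ∑ k ∈ A i, x k ^ 2}
        ≤ ∑' _ : Finset (Fin p), ENNReal.ofReal (Real.exp (-(n : ℝ) * Δ ^ 2 / 8)) :=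
          ENNReal.tsum_le_tsum hterm
      _ = (Fintype.card (Finset (Fin p))) *
            ENNReal.ofReal (Real.exp (-(n : ℝ) * Δ ^ 2 / 8)) := by
          rw [tsum_fintype, Finset.sum_const, Finset.card_univ, nsmul_eq_mul]
      _ = ENNReal.ofReal (2 ^ p * Real.exp (-(n : ℝ) * Δ ^ 2 / 8)) := by
          rw [Fintype.card_finset, Fintype.card_fin]
          rw [ENNReal.ofReal_mul (by positivity)]
          congr 1
          rw [Nat.cast_pow, ENNReal.ofReal_pow (by norm_num : (0:ℝ) ≤ 2)]
          norm_num
end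

section
/- Let {A_i}_{i=1}^p be a partition of {1,…,n} into disjoint nonempty subsets with λ_i = |A_i|/n, and let x, y ∈ ℝ^n be any vectors with x_{A_i} ≠ 0 for all i and y ≠ 0. Let ρ̂_i = ρ̂(x_{A_i}, y_{A_i}) and ρ̂ = ρ̂(x,y). Then ρ̂² − Σ_{i=1}^p λ_i·ρ̂_i² ≤ Σ_{i=1}^p max(‖x_{A_i}‖²/‖x‖² − λ_i, 0). -/
open Finset

lemma empCorr_sq_le_one {n : ℕ} (A : Finset (Fin n)) (x y : Fin n → ℝ) :
    (empCorrOn A x y) ^ 2 ≤ 1 := by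
  unfold empCorrOn
  have ha0 : (0:ℝ) ≤ ∑ i ∈ A, x i ^ 2 := Finset.sum_nonneg fun i _ => sq_nonneg _
  have hb0 : (0:ℝ) ≤ ∑ i ∈ A, y i ^ 2 := Finset.sum_nonneg fun i _ => sq_nonneg _
  have hcs := Finset.sum_mul_sq_le_sq_mul_sq A x y
  rw [div_pow, mul_pow, Real.sq_sqrt ha0, Real.sq_sqrt hb0]
  rcases eq_or_lt_of_le (mul_nonneg ha0 hb0) with h | h
  · rw [← h, div_zero]; norm_num
  · exact (div_le_one h).mpr hcs

lemma sum_eq_corr_mul {n : ℕ} (A : Finset (Fin n)) (x y : Fin n → ℝ) :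
    ∑ i ∈ A, x i * y i =
      empCorrOn A x y *
        (Real.sqrt (∑ i ∈ A, x i ^ 2) * Real.sqrt (∑ i ∈ A, y i ^ 2)) := by
  unfold empCorrOn
  rcases eq_or_ne (Real.sqrt (∑ i ∈ A, x i ^ 2) * Real.sqrt (∑ i ∈ A, y i ^ 2)) 0 with h | h
  · rw [h, mul_zero]
    have hxy : ∀ i ∈ A, x i * y i = 0 := by
      rcases mul_eq_zero.mp h with h' | h'
      · have hs : ∑ i ∈ A, x i ^ 2 = 0 :=
          le_antisymm (Real.sqrt_eq_zero'.mp h')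
            (Finset.sum_nonneg fun i _ => sq_nonneg _)
        intro i hi
        have := (Finset.sum_eq_zero_iff_of_nonneg (fun i _ => sq_nonneg (x i))).mp hs i hi
        have hx0 : x i = 0 := by nlinarith [sq_nonneg (x i)]
        rw [hx0, zero_mul]
      · have hs : ∑ i ∈ A, y i ^ 2 = 0 :=
          le_antisymm (Real.sqrt_eq_zero'.mp h')
            (Finset.sum_nonneg fun i _ => sq_nonneg _)
        intro i hi
        have := (Finset.sum_eq_zero_iff_of_nonneg (fun i _ => sq_nonneg (y i))).mp hs i hi
        have hy0 : y i = 0 := by nlinarith [sq_nonneg (y i)]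
        rw [hy0, mul_zero]
    exact Finset.sum_eq_zero hxy
  · exact (div_mul_cancel₀ _ h).symm

theorem statement7 {n p : ℕ} (hn : 0 < n) (A : Fin p → Finset (Fin n))
    (hne : ∀ i, (A i).Nonempty)
    (hdisj : ∀ i j, i ≠ j → Disjoint (A i) (A j))
    (hcover : ∀ k : Fin n, ∃ i, k ∈ A i)
    (x y : Fin n → ℝ) (hx : ∀ i, ∃ j ∈ A i, x j ≠ 0) (hy : y ≠ 0) :
    (empCorrOn Finset.univ x y) ^ 2 -
        ∑ i, ((A i).card : ℝ) / (n : ℝ) * (empCorrOn (A i) x y) ^ 2 ≤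
      ∑ i, max ((∑ j ∈ A i, (x j) ^ 2) / (∑ j, (x j) ^ 2) - ((A i).card : ℝ) / (n : ℝ)) 0 := by
  have hpart : ∀ f : Fin n → ℝ, ∑ j, f j = ∑ i, ∑ j ∈ A i, f j := by
    intro f
    have hU : Finset.univ.biUnion A = Finset.univ := by
      ext k
      simp only [Finset.mem_biUnion, Finset.mem_univ, true_and, iff_true]
      exact hcover k
    rw [← hU, Finset.sum_biUnion]
    intro i _ j _ hij
    exact hdisj i j hij
  have hX : 0 < ∑ j, x j ^ 2 := by
    obtain ⟨i0, _⟩ := hcover ⟨0, hn⟩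
    obtain ⟨j, hj, hxj⟩ := hx i0
    exact Finset.sum_pos' (fun k _ => sq_nonneg _) ⟨j, Finset.mem_univ j, by positivity⟩
  have hY : 0 < ∑ j, y j ^ 2 := by
    obtain ⟨j, hyj⟩ : ∃ j, y j ≠ 0 := Function.ne_iff.mp hy
    exact Finset.sum_pos' (fun k _ => sq_nonneg _) ⟨j, Finset.mem_univ j, by positivity⟩
  -- Step 1: global corr squared bounded by weighted sum of block corrs squared
  have hstep1 : (empCorrOn Finset.univ x y) ^ 2 ≤
      ∑ i, (∑ j ∈ A i, x j ^ 2) / (∑ j, x j ^ 2) * (empCorrOn (A i) x y) ^ 2 := by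
    have hC : ∑ j, x j * y j =
        ∑ i, empCorrOn (A i) x y *
          (Real.sqrt (∑ j ∈ A i, x j ^ 2) * Real.sqrt (∑ j ∈ A i, y j ^ 2)) := by
      rw [hpart (fun j => x j * y j)]
      exact Finset.sum_congr rfl fun i _ => sum_eq_corr_mul _ _ _
    have hcs : (∑ j, x j * y j) ^ 2 ≤
        (∑ i, (empCorrOn (A i) x y) ^ 2 * (∑ j ∈ A i, x j ^ 2)) * (∑ j, y j ^ 2) := by
      rw [hC]
      calc (∑ i, empCorrOn (A i) x y *
              (Real.sqrt (∑ j ∈ A i, x j ^ 2) * Real.sqrt (∑ j ∈ A i, y j ^ 2))) ^ 2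
          = (∑ i, (empCorrOn (A i) x y * Real.sqrt (∑ j ∈ A i, x j ^ 2)) *
              Real.sqrt (∑ j ∈ A i, y j ^ 2)) ^ 2 := by
            congr 1
            exact Finset.sum_congr rfl fun i _ => (mul_assoc _ _ _).symm
        _ ≤ (∑ i, (empCorrOn (A i) x y * Real.sqrt (∑ j ∈ A i, x j ^ 2)) ^ 2) *
              (∑ i, (Real.sqrt (∑ j ∈ A i, y j ^ 2)) ^ 2) :=
            Finset.sum_mul_sq_le_sq_mul_sq _ _ _
        _ = (∑ i, (empCorrOn (A i) x y) ^ 2 * (∑ j ∈ A i, x j ^ 2)) * (∑ j, y j ^ 2) := by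
            congr 1
            · exact Finset.sum_congr rfl fun i _ => by
                rw [mul_pow, Real.sq_sqrt (Finset.sum_nonneg fun j _ => sq_nonneg _)]
            · rw [hpart (fun j => y j ^ 2)]
              exact Finset.sum_congr rfl fun i _ =>
                Real.sq_sqrt (Finset.sum_nonneg fun j _ => sq_nonneg _)
    have heq : (empCorrOn Finset.univ x y) ^ 2 =
        (∑ j, x j * y j) ^ 2 / ((∑ j, x j ^ 2) * (∑ j, y j ^ 2)) := by
      unfold empCorrOn
      rw [div_pow, mul_pow, Real.sq_sqrt hX.le, Real.sq_sqrt hY.le]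
    have hsum : ∑ i, (∑ j ∈ A i, x j ^ 2) / (∑ j, x j ^ 2) * (empCorrOn (A i) x y) ^ 2 =
        (∑ i, (empCorrOn (A i) x y) ^ 2 * (∑ j ∈ A i, x j ^ 2)) / (∑ j, x j ^ 2) := by
      rw [Finset.sum_div]
      exact Finset.sum_congr rfl fun i _ => by ring
    rw [heq, hsum]
    rw [div_le_div_iff₀ (by positivity) hX]
    calc (∑ j, x j * y j) ^ 2 * (∑ j, x j ^ 2)
        ≤ ((∑ i, (empCorrOn (A i) x y) ^ 2 * (∑ j ∈ A i, x j ^ 2)) * (∑ j, y j ^ 2)) *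
            (∑ j, x j ^ 2) := by
          apply mul_le_mul_of_nonneg_right hcs hX.le
      _ = (∑ i, (empCorrOn (A i) x y) ^ 2 * (∑ j ∈ A i, x j ^ 2)) *
            ((∑ j, x j ^ 2) * (∑ j, y j ^ 2)) := by ring
  -- Step 2: compare the two sums termwise
  have hstep3 :
      ∑ i, (∑ j ∈ A i, x j ^ 2) / (∑ j, x j ^ 2) * (empCorrOn (A i) x y) ^ 2 -
        ∑ i, ((A i).card : ℝ) / (n : ℝ) * (empCorrOn (A i) x y) ^ 2 ≤
      ∑ i, max ((∑ j ∈ A i, (x j) ^ 2) / (∑ j, (x j) ^ 2) - ((A i).card : ℝ) / (n : ℝ)) 0 := by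
    rw [← Finset.sum_sub_distrib]
    apply Finset.sum_le_sum
    intro i _
    have h1 : (∑ j ∈ A i, x j ^ 2) / (∑ j, x j ^ 2) * (empCorrOn (A i) x y) ^ 2 -
        ((A i).card : ℝ) / (n : ℝ) * (empCorrOn (A i) x y) ^ 2 =
        ((∑ j ∈ A i, x j ^ 2) / (∑ j, x j ^ 2) - ((A i).card : ℝ) / (n : ℝ)) *
          (empCorrOn (A i) x y) ^ 2 := by ring
    rw [h1]
    rcases le_total ((∑ j ∈ A i, x j ^ 2) / (∑ j, x j ^ 2) - ((A i).card : ℝ) / (n : ℝ)) 0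
      with h | h
    · exact le_trans (mul_nonpos_of_nonpos_of_nonneg h (sq_nonneg _)) (le_max_right _ _)
    · calc _ ≤ ((∑ j ∈ A i, x j ^ 2) / (∑ j, x j ^ 2) - ((A i).card : ℝ) / (n : ℝ)) * 1 :=
          mul_le_mul_of_nonneg_left (empCorr_sq_le_one _ _ _) h
        _ = _ := mul_one _
        _ ≤ _ := le_max_left _ _
  linarith
end

section
/- Let x ∈ ℝ^n have i.i.d. Gaussian entries x_i ∼ 𝒩(0,P) with P > 0, let {A_i}_{i=1}^p be a partition of {1,…,n} into disjoint nonempty subsets with λ_i = |A_i|/n, and let a₁,…,a_p be real coefficients with ā = Σ_{i=1}^p λ_i·a_i > 0, |a_i| ≤ A for all i, and ā ≤ A/8. Then Pr( Σ_{i=1}^p a_i·‖x_{A_i}‖² ≤ 0 ) ≤ e^{−nE}, where E = ā²/(6A²). -/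
open MeasureTheory ProbabilityTheory Finset Real
open scoped NNReal ENNReal

private theorem aux_lintegral_pi_prod : ∀ {n : ℕ} (μ : Fin n → Measure ℝ),
    (∀ i, SigmaFinite (μ i)) → ∀ (f : Fin n → ℝ → ℝ≥0∞), (∀ i, Measurable (f i)) →
    ∫⁻ x : Fin n → ℝ, ∏ i, f i (x i) ∂Measure.pi μ = ∏ i, ∫⁻ y, f i y ∂μ i := by
  intro n
  induction n with
  | zero =>
      intro μ _ f _
      simp [Measure.pi_of_empty]
  | succ m ih =>
      intro μ hσ f hf
      haveI := hσ
      haveI : ∀ i : Fin m, SigmaFinite (μ i.succ) := fun i => hσ _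
      have hmeas2 : Measurable fun z : Fin m → ℝ => ∏ i : Fin m, f i.succ (z i) :=
        Finset.measurable_prod Finset.univ fun i _ =>
          (hf i.succ).comp (measurable_pi_apply i)
      have hmp := (measurePreserving_piFinSuccAbove μ 0).symm
      rw [hmp.lintegral_map_equiv (fun x => ∏ i, f i (x i)) _]
      simp_rw [MeasurableEquiv.piFinSuccAbove_symm_apply, Fin.insertNthEquiv,
        Equiv.coe_fn_mk, Fin.insertNth_zero, Fin.prod_univ_succ, Fin.cons_zero, Fin.cons_succ,
        Fin.zero_succAbove, cast_eq]
      rw [lintegral_prod_mul (hf 0).aemeasurable hmeas2.aemeasurable]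
      rw [ih _ (fun i => hσ _) _ (fun i => hf i.succ)]

private theorem aux_log_lb (u : ℝ) (hu : |u| ≤ 1 / 16) :
    u - (2/3) * u ^ 2 ≤ Real.log (1 + u) := by
  have hu1 : -(1/16 : ℝ) ≤ u := neg_le_of_abs_le hu
  have hu2 : u ≤ 1/16 := le_of_abs_le hu
  have hu2sq : u ^ 2 ≤ (1/16 : ℝ) ^ 2 := sq_le_sq' (by linarith) hu2
  have h1u : (0:ℝ) < 1 + u := by linarith
  rw [Real.le_log_iff_exp_le h1u]
  set v := u - (2/3) * u ^ 2 with hv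
  have hvhi : v ≤ 1/15 := by rw [hv]; nlinarith [sq_nonneg u]
  have hvlo : -(1/15 : ℝ) ≤ v := by rw [hv]; nlinarith
  have hvabs : |v| ≤ 1/15 := abs_le.2 ⟨hvlo, hvhi⟩
  have hvabs1 : |v| ≤ 1 := hvabs.trans (by norm_num)
  have hb := Real.exp_bound hvabs1 (n := 3) (by norm_num)
  have hsum : ∑ m ∈ Finset.range 3, v ^ m / m.factorial = 1 + v + v ^ 2 / 2 := by
    simp [Finset.sum_range_succ, Nat.factorial]
  rw [hsum] at hb
  have hb' := (abs_le.1 hb).2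
  have hfac : ((Nat.succ 3 : ℕ) : ℝ) / ((Nat.factorial 3 : ℕ) * (3:ℕ)) = 2/9 := by
    norm_num [Nat.factorial]
  have hcube : |v| ^ 3 ≤ (1/15) * v ^ 2 := by
    have h1 : |v| ^ 3 = v ^ 2 * |v| := by
      rw [← sq_abs v]; ring
    rw [h1]
    calc v ^ 2 * |v| ≤ v ^ 2 * (1/15) := by
          exact mul_le_mul_of_nonneg_left hvabs (sq_nonneg v)
      _ = (1/15) * v ^ 2 := by ring
  have hvsq : v ^ 2 ≤ (25/24) ^ 2 * u ^ 2 := by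
    have : v = u * (1 - (2/3) * u) := by rw [hv]; ring
    rw [this]
    have h24 : (1 - (2/3) * u) ^ 2 ≤ (25/24) ^ 2 := by nlinarith
    calc (u * (1 - (2/3) * u)) ^ 2 = u ^ 2 * (1 - (2/3)*u) ^ 2 := by ring
      _ ≤ u ^ 2 * (25/24) ^ 2 := mul_le_mul_of_nonneg_left h24 (sq_nonneg u)
      _ = (25/24) ^ 2 * u ^ 2 := by ring
  have hexp : Real.exp v ≤ 1 + v + v ^ 2 / 2 + |v| ^ 3 * (2/9) := by
    rw [hfac] at hb'; linarith
  refine hexp.trans ?_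
  have : v = u - (2/3) * u ^ 2 := hv
  nlinarith [hcube, hvsq, sq_nonneg u]

private theorem aux_gauss_exp_sq (P : ℝ≥0) (hP : 0 < P) (r : ℝ) (hr : 0 < 1 + 2 * r * P) :
    ∫⁻ y : ℝ, ENNReal.ofReal (Real.exp (-(r * y ^ 2))) ∂gaussianReal 0 P =
      ENNReal.ofReal (1 / Real.sqrt (1 + 2 * r * P)) := by
  have hP' : (0:ℝ) < (P : ℝ) := hP
  set b : ℝ := r + 1 / (2 * P) with hbdef
  have hbeq : b = (1 + 2 * r * P) / (2 * P) := by rw [hbdef]; field_simp; ring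
  have hb : 0 < b := by rw [hbeq]; positivity
  have hfun : (fun y : ℝ => gaussianPDFReal 0 P y * Real.exp (-(r * y ^ 2))) =
      fun y : ℝ => (Real.sqrt (2 * π * P))⁻¹ * Real.exp (-b * y ^ 2) := by
    funext y
    rw [gaussianPDFReal, mul_assoc, ← Real.exp_add]
    congr 1
    rw [hbdef]
    field_simp
    ring
  have hint : Integrable (fun y : ℝ => gaussianPDFReal 0 P y * Real.exp (-(r * y ^ 2))) := by
    rw [hfun]
    exact (integrable_exp_neg_mul_sq hb).const_mul _
  have hnn : 0 ≤ᵐ[volume] fun y : ℝ => gaussianPDFReal 0 P y * Real.exp (-(r * y ^ 2)) :=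
    ae_of_all _ fun y => mul_nonneg (gaussianPDFReal_nonneg 0 P y) (Real.exp_nonneg _)
  rw [gaussianReal_of_var_ne_zero 0 hP.ne',
    lintegral_withDensity_eq_lintegral_mul _ (measurable_gaussianPDF 0 P)
      (by exact (((measurable_id.pow_const 2).const_mul r).neg.exp).ennreal_ofReal)]
  have hpt : (fun y : ℝ => gaussianPDF 0 P y * ENNReal.ofReal (Real.exp (-(r * y ^ 2)))) =
      fun y : ℝ => ENNReal.ofReal (gaussianPDFReal 0 P y * Real.exp (-(r * y ^ 2))) := by
    funext y
    rw [gaussianPDF, ← ENNReal.ofReal_mul (gaussianPDFReal_nonneg 0 P y)]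
  calc ∫⁻ y, (gaussianPDF 0 P * fun y => ENNReal.ofReal (Real.exp (-(r * y ^ 2)))) y
      = ∫⁻ y, ENNReal.ofReal (gaussianPDFReal 0 P y * Real.exp (-(r * y ^ 2))) := by
        simp only [Pi.mul_apply]
        rw [show (fun y : ℝ => gaussianPDF 0 P y * ENNReal.ofReal (Real.exp (-(r * y ^ 2)))) =
          fun y : ℝ => ENNReal.ofReal (gaussianPDFReal 0 P y * Real.exp (-(r * y ^ 2))) from hpt]
    _ = ENNReal.ofReal (∫ y, gaussianPDFReal 0 P y * Real.exp (-(r * y ^ 2))) :=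
        (ofReal_integral_eq_lintegral_ofReal hint hnn).symm
    _ = ENNReal.ofReal (1 / Real.sqrt (1 + 2 * r * P)) := by
        congr 1
        rw [hfun]
        rw [MeasureTheory.integral_const_mul, integral_gaussian]
        rw [← Real.sqrt_inv, ← Real.sqrt_mul (by positivity : (0:ℝ) ≤ (2 * π * P)⁻¹)]
        rw [show ((2 * π * (P:ℝ))⁻¹ * (π / b)) = (1 + 2 * r * P)⁻¹ by
          rw [hbeq]; field_simp]
        rw [Real.sqrt_inv, one_div]

private theorem aux_one_le_ofReal {x : ℝ} (h : 1 ≤ x) : (1 : ℝ≥0∞) ≤ ENNReal.ofReal x := by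
  simpa using ENNReal.ofReal_le_ofReal h

set_option maxHeartbeats 1000000 in
theorem statement8 {n p : ℕ} (hn : 0 < n) (Apart : Fin p → Finset (Fin n))
    (hne : ∀ i, (Apart i).Nonempty)
    (hdisj : ∀ i j, i ≠ j → Disjoint (Apart i) (Apart j))
    (hcover : ∀ k : Fin n, ∃ i, k ∈ Apart i)
    (P : ℝ≥0) (hP : 0 < P)
    (a : Fin p → ℝ) (A : ℝ)
    (habar : 0 < ∑ i, ((Apart i).card : ℝ) / (n : ℝ) * a i)
    (hbound : ∀ i, |a i| ≤ A)
    (hsmall : ∑ i, ((Apart i).card : ℝ) / (n : ℝ) * a i ≤ A / 8) :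
    Measure.pi (fun _ : Fin n => gaussianReal 0 P)
        {x : Fin n → ℝ | ∑ i, a i * (∑ j ∈ Apart i, (x j) ^ 2) ≤ 0} ≤
      ENNReal.ofReal
        (Real.exp (-(n : ℝ) *
          ((∑ i, ((Apart i).card : ℝ) / (n : ℝ) * a i) ^ 2 / (6 * A ^ 2)))) := by
  set ab := ∑ i, ((Apart i).card : ℝ) / (n : ℝ) * a i with hab_def
  have hP' : (0:ℝ) < (P:ℝ) := hP
  have hA : 0 < A := by linarith
  have hn' : ((n:ℝ)) ≠ 0 := Nat.cast_ne_zero.2 hn.ne'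
  choose idx hidx using hcover
  set b : Fin n → ℝ := fun j => a (idx j) with hb_def
  have hidx_eq : ∀ (i : Fin p) (j : Fin n), j ∈ Apart i → idx j = i := by
    intro i j hj
    by_contra h
    exact (Finset.disjoint_left.mp (hdisj _ _ h) (hidx j)) hj
  have hb : ∀ j, |b j| ≤ A := fun j => hbound _
  have huniv : (Finset.univ : Finset (Fin n)) = Finset.univ.biUnion Apart :=
    (Finset.eq_univ_iff_forall.2 fun k =>
      Finset.mem_biUnion.2 ⟨idx k, Finset.mem_univ _, hidx k⟩).symm
  have hpd : ((Finset.univ : Finset (Fin p)) : Set (Fin p)).PairwiseDisjoint Apart :=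
    fun i _ j _ hij => hdisj i j hij
  have hsplit : ∀ g : Fin n → ℝ, ∑ j, g j = ∑ i, ∑ j ∈ Apart i, g j := by
    intro g
    conv_lhs => rw [huniv]
    exact Finset.sum_biUnion hpd
  have hS : ∀ x : Fin n → ℝ,
      ∑ i, a i * (∑ j ∈ Apart i, (x j) ^ 2) = ∑ j, b j * (x j) ^ 2 := by
    intro x
    rw [hsplit (fun j => b j * (x j) ^ 2)]
    refine Finset.sum_congr rfl fun i _ => ?_
    rw [Finset.mul_sum]
    refine Finset.sum_congr rfl fun j hj => ?_
    rw [hb_def]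
    simp only [hidx_eq i j hj]
  have hsum_b : ∑ j, b j = (n:ℝ) * ab := by
    rw [hsplit b, hab_def, Finset.mul_sum]
    refine Finset.sum_congr rfl fun i _ => ?_
    have : ∀ j ∈ Apart i, b j = a i := fun j hj => by
      rw [hb_def]; simp only [hidx_eq i j hj]
    rw [Finset.sum_congr rfl this, Finset.sum_const, nsmul_eq_mul]
    field_simp
  have hsum_bsq : ∑ j, (b j) ^ 2 ≤ (n:ℝ) * A ^ 2 := by
    calc ∑ j, (b j) ^ 2 ≤ ∑ _j : Fin n, A ^ 2 :=
          Finset.sum_le_sum fun j _ => by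
            have h1 := hb j
            have h2 : |b j| ^ 2 = (b j) ^ 2 := sq_abs _
            nlinarith [abs_nonneg (b j)]
      _ = (n:ℝ) * A ^ 2 := by
          rw [Finset.sum_const, Finset.card_univ, Fintype.card_fin, nsmul_eq_mul]
  set s : ℝ := ab / (2 * A ^ 2) with hs_def
  set t : ℝ := ab / (4 * A ^ 2 * P) with ht_def
  have hs_pos : 0 < s := by
    rw [hs_def]; exact div_pos habar (by positivity)
  have ht : 0 ≤ t := by
    rw [ht_def]; exact div_nonneg habar.le (by positivity)
  have h2tP : 2 * t * (P:ℝ) = s := by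
    rw [ht_def, hs_def]; field_simp; ring
  have hsA : s * A ≤ 1 / 16 := by
    have h1 : s * A = ab / (2 * A) := by rw [hs_def]; field_simp
    rw [h1, div_le_iff₀ (by positivity)]
    linarith
  have hu : ∀ j, |s * b j| ≤ 1 / 16 := fun j => by
    rw [abs_mul, abs_of_nonneg hs_pos.le]
    calc s * |b j| ≤ s * A := mul_le_mul_of_nonneg_left (hb j) hs_pos.le
      _ ≤ 1 / 16 := hsA
  have hc_pos : ∀ j, 0 < 1 + s * b j := fun j => by
    have := neg_le_of_abs_le (hu j); linarith
  set g : Fin n → ℝ → ℝ≥0∞ :=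
    fun j y => ENNReal.ofReal (Real.exp (-(t * b j * y ^ 2))) with hg_def
  have hg_meas : ∀ j, Measurable (g j) := fun j => by
    rw [hg_def]
    exact (((measurable_id.pow_const 2).const_mul (t * b j)).neg.exp).ennreal_ofReal
  have hg_int : ∀ j, ∫⁻ y, g j y ∂gaussianReal 0 P =
      ENNReal.ofReal (1 / Real.sqrt (1 + s * b j)) := by
    intro j
    have h2 : 2 * (t * b j) * (P:ℝ) = s * b j := by rw [← h2tP]; ring
    have := aux_gauss_exp_sq P hP (t * b j) (by rw [h2]; exact hc_pos j)
    rw [h2] at this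
    exact this
  -- Chernoff
  have hprod_meas : Measurable fun x : Fin n → ℝ => ∏ j, g j (x j) :=
    Finset.measurable_prod _ fun j _ => (hg_meas j).comp (measurable_pi_apply j)
  have hprod_eq : ∀ x : Fin n → ℝ, ∏ j, g j (x j) =
      ENNReal.ofReal (Real.exp (-(t * ∑ i, a i * (∑ j ∈ Apart i, (x j) ^ 2)))) := by
    intro x
    rw [hS x, hg_def]
    rw [← ENNReal.ofReal_prod_of_nonneg (fun j _ => (Real.exp_nonneg _))]
    congr 1
    rw [← Real.exp_sum]
    congr 1
    rw [Finset.mul_sum, ← Finset.sum_neg_distrib]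
    exact Finset.sum_congr rfl fun j _ => by ring
  calc Measure.pi (fun _ : Fin n => gaussianReal 0 P)
        {x : Fin n → ℝ | ∑ i, a i * (∑ j ∈ Apart i, (x j) ^ 2) ≤ 0}
      = ∫⁻ x in {x : Fin n → ℝ | ∑ i, a i * (∑ j ∈ Apart i, (x j) ^ 2) ≤ 0}, 1
          ∂Measure.pi (fun _ : Fin n => gaussianReal 0 P) := (setLIntegral_one _).symm
    _ ≤ ∫⁻ x in {x : Fin n → ℝ | ∑ i, a i * (∑ j ∈ Apart i, (x j) ^ 2) ≤ 0},
          (∏ j, g j (x j)) ∂Measure.pi (fun _ : Fin n => gaussianReal 0 P) := by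
        refine setLIntegral_mono hprod_meas fun x hx => ?_
        rw [hprod_eq x]
        refine aux_one_le_ofReal (Real.one_le_exp ?_)
        have hx' : ∑ i, a i * (∑ j ∈ Apart i, (x j) ^ 2) ≤ 0 := hx
        nlinarith
    _ ≤ ∫⁻ x, (∏ j, g j (x j)) ∂Measure.pi (fun _ : Fin n => gaussianReal 0 P) :=
        setLIntegral_le_lintegral _ _
    _ = ∏ j, ∫⁻ y, g j y ∂gaussianReal 0 P :=
        aux_lintegral_pi_prod _ (fun _ => inferInstance) g hg_meas
    _ = ∏ j, ENNReal.ofReal (1 / Real.sqrt (1 + s * b j)) :=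
        Finset.prod_congr rfl fun j _ => hg_int j
    _ = ENNReal.ofReal (∏ j, 1 / Real.sqrt (1 + s * b j)) :=
        (ENNReal.ofReal_prod_of_nonneg fun j _ => div_nonneg zero_le_one (Real.sqrt_nonneg _)).symm
    _ ≤ ENNReal.ofReal (Real.exp (-(n : ℝ) * (ab ^ 2 / (6 * A ^ 2)))) := by
        refine ENNReal.ofReal_le_ofReal ?_
        have hsqrt : ∀ j, 1 / Real.sqrt (1 + s * b j) =
            Real.exp (-(Real.log (1 + s * b j) * (1/2))) := by
          intro j
          rw [one_div, Real.sqrt_eq_rpow, Real.rpow_def_of_pos (hc_pos j), ← Real.exp_neg]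
        rw [Finset.prod_congr rfl fun j _ => hsqrt j, ← Real.exp_sum]
        refine Real.exp_le_exp.2 ?_
        have hlog : ∀ j, s * b j - (2/3) * (s * b j) ^ 2 ≤ Real.log (1 + s * b j) :=
          fun j => aux_log_lb _ (hu j)
        have hsum_log : 2 * ((n:ℝ) * (ab ^ 2 / (6 * A ^ 2))) ≤
            ∑ j, Real.log (1 + s * b j) := by
          have h1 : ∑ j, (s * b j - (2/3) * (s * b j) ^ 2) ≤
              ∑ j, Real.log (1 + s * b j) :=
            Finset.sum_le_sum fun j _ => hlog j
          have h2 : ∑ j, (s * b j - (2/3) * (s * b j) ^ 2) =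
              s * (∑ j, b j) - ((2/3) * s ^ 2) * ∑ j, (b j) ^ 2 := by
            have hterm : ∀ j : Fin n, s * b j - (2/3) * (s * b j) ^ 2 =
                s * b j - ((2/3) * s ^ 2) * (b j) ^ 2 := fun j => by ring
            rw [Finset.sum_congr rfl fun j _ => hterm j, Finset.sum_sub_distrib,
              ← Finset.mul_sum, ← Finset.mul_sum]
          have h3 : s * ((n:ℝ) * ab) - ((2/3) * s ^ 2) * ((n:ℝ) * A ^ 2) ≤
              s * (∑ j, b j) - ((2/3) * s ^ 2) * ∑ j, (b j) ^ 2 := by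
            rw [hsum_b]
            have : ((2/3) * s ^ 2) * ∑ j, (b j) ^ 2 ≤ ((2/3) * s ^ 2) * ((n:ℝ) * A ^ 2) :=
              mul_le_mul_of_nonneg_left hsum_bsq (mul_nonneg (by norm_num) (sq_nonneg s))
            linarith
          have h4 : s * ((n:ℝ) * ab) - ((2/3) * s ^ 2) * ((n:ℝ) * A ^ 2) =
              2 * ((n:ℝ) * (ab ^ 2 / (6 * A ^ 2))) := by
            rw [hs_def]; field_simp; ring
          linarith
        have : ∑ j, -(Real.log (1 + s * b j) * (1/2)) =
            -(1/2) * ∑ j, Real.log (1 + s * b j) := by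
          rw [Finset.mul_sum]
          exact Finset.sum_congr rfl fun j _ => by ring
        rw [this]
        nlinarith [hsum_log]
end

section
/- Given finite input and output alphabets 𝒳, 𝒴, for every P_e > 0, δ > 0, every probability distribution Q on 𝒳, and every rate R > 0, there exists n large enough and a randomized block encoder-decoder pair of rate R over block size n (common randomness S, encoder φ: {1,…,⌈exp(nR)⌉} × 𝒮 → 𝒳^n, decoder φ̄: 𝒴^n × 𝒮 → {1,…,⌈exp(nR)⌉}) such that: (i) for every message w, the channel input sequence φ(w,S) is distributed Q^n (i.i.d. according to Q); and (ii) for every message w, every input sequence x ∈ 𝒳^n and every output sequence y ∈ 𝒴^n with Î(x;y) > R + δ, the error probability P_e^(w)(x,y) = Pr( φ̄(y,S) ≠ w | φ(w,S) = x ) is at most P_e (with P_e^(w)(x,y) defined as 0 when the conditioning event has probability zero). -/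
open Finset MeasureTheory

open scoped ENNReal

set_option linter.unusedSectionVars false
set_option linter.unusedVariables false

section Aux

variable {𝒳 𝒴 : Type*} [Fintype 𝒳] [Fintype 𝒴] [DecidableEq 𝒳] [DecidableEq 𝒴]
variable {n : ℕ}

/-- joint counts -/
def Nxy (c : Fin n → 𝒳) (y : Fin n → 𝒴) (a : 𝒳) (b : 𝒴) : ℕ :=
  (univ.filter fun i => c i = a ∧ y i = b).card

def Nxx (c : Fin n → 𝒳) (a : 𝒳) : ℕ := (univ.filter fun i => c i = a).card

def Nyy (y : Fin n → 𝒴) (b : 𝒴) : ℕ := (univ.filter fun i => y i = b).card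

lemma Nxy_le (c : Fin n → 𝒳) (y : Fin n → 𝒴) (a : 𝒳) (b : 𝒴) : Nxy c y a b ≤ n := by
  simpa [Nxy] using (Finset.card_filter_le univ fun i => c i = a ∧ y i = b)

lemma sum_Nxy_x (c : Fin n → 𝒳) (y : Fin n → 𝒴) (b : 𝒴) :
    ∑ a, Nxy c y a b = Nyy y b := by
  rw [Nyy, Finset.card_eq_sum_card_fiberwise (fun i _ => Finset.mem_univ (c i))]
  refine Finset.sum_congr rfl fun a _ => ?_
  rw [Nxy, Finset.filter_filter]
  congr 1
  ext i
  simp [and_comm]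

lemma sum_Nxy_y (c : Fin n → 𝒳) (y : Fin n → 𝒴) (a : 𝒳) :
    ∑ b, Nxy c y a b = Nxx c a := by
  rw [Nxx, Finset.card_eq_sum_card_fiberwise (fun i _ => Finset.mem_univ (y i))]
  refine Finset.sum_congr rfl fun b _ => ?_
  rw [Nxy, Finset.filter_filter]

lemma one_le_Nxy (c : Fin n → 𝒳) (y : Fin n → 𝒴) (i : Fin n) :
    1 ≤ Nxy c y (c i) (y i) := by
  rw [Nxy, Nat.one_le_iff_ne_zero, ← Nat.pos_iff_ne_zero, Finset.card_pos]
  exact ⟨i, by simp⟩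

lemma one_le_Nxx (c : Fin n → 𝒳) (i : Fin n) : 1 ≤ Nxx c (c i) := by
  rw [Nxx, Nat.one_le_iff_ne_zero, ← Nat.pos_iff_ne_zero, Finset.card_pos]
  exact ⟨i, by simp⟩

lemma one_le_Nyy (y : Fin n → 𝒴) (i : Fin n) : 1 ≤ Nyy y (y i) := by
  rw [Nyy, Nat.one_le_iff_ne_zero, ← Nat.pos_iff_ne_zero, Finset.card_pos]
  exact ⟨i, by simp⟩

end Aux

section Main

set_option linter.unusedSectionVars false

variable {𝒳 𝒴 : Type*} [Fintype 𝒳] [Fintype 𝒴] [DecidableEq 𝒳] [DecidableEq 𝒴]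
variable {n : ℕ}

/-- the per-cell information ratio -/
noncomputable def rho (c : Fin n → 𝒳) (y : Fin n → 𝒴) (a : 𝒳) (b : 𝒴) : ℝ :=
  ((Nxy c y a b : ℝ) * n) / ((Nxx c a : ℝ) * (Nyy y b : ℝ))

lemma Nxy_le_Nxx (c : Fin n → 𝒳) (y : Fin n → 𝒴) (a : 𝒳) (b : 𝒴) :
    Nxy c y a b ≤ Nxx c a := by
  apply Finset.card_le_card
  intro i hi
  simp only [Finset.mem_filter] at *
  exact ⟨hi.1, hi.2.1⟩

lemma Nxy_le_Nyy (c : Fin n → 𝒳) (y : Fin n → 𝒴) (a : 𝒳) (b : 𝒴) :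
    Nxy c y a b ≤ Nyy y b := by
  apply Finset.card_le_card
  intro i hi
  simp only [Finset.mem_filter] at *
  exact ⟨hi.1, hi.2.2⟩

lemma empMI_identity (hn : 0 < n) (c : Fin n → 𝒳) (y : Fin n → 𝒴) :
    (n : ℝ) * empMI c y = ∑ i, Real.log (rho c y (c i) (y i)) := by
  have hn' : (0:ℝ) < n := by exact_mod_cast hn
  have hcard : ((Finset.univ : Finset (Fin n)).card : ℝ) = n := by simp
  have hp : ∀ a b, empDistOn Finset.univ c y a b = (Nxy c y a b : ℝ) / n := by
    intro a b; rw [empDistOn, hcard]; rfl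
  have hpx : ∀ a, (∑ b', empDistOn Finset.univ c y a b') = (Nxx c a : ℝ) / n := by
    intro a
    simp only [hp, ← Finset.sum_div]
    rw [← sum_Nxy_y c y a]; push_cast; ring
  have hpy : ∀ b, (∑ a', empDistOn Finset.univ c y a' b) = (Nyy y b : ℝ) / n := by
    intro b
    simp only [hp, ← Finset.sum_div]
    rw [← sum_Nxy_x c y b]; push_cast; ring
  have hterm : ∀ a b, (n : ℝ) * (empDistOn Finset.univ c y a b *
      Real.log (empDistOn Finset.univ c y a b /
        ((∑ b', empDistOn Finset.univ c y a b') * (∑ a', empDistOn Finset.univ c y a' b)))) =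
      (Nxy c y a b : ℝ) * Real.log (rho c y a b) := by
    intro a b
    rcases Nat.eq_zero_or_pos (Nxy c y a b) with h0 | hpos
    · rw [hp, hpx, hpy, h0]; simp
    · have hx : 0 < Nxx c a := lt_of_lt_of_le hpos (Nxy_le_Nxx c y a b)
      have hy : 0 < Nyy y b := lt_of_lt_of_le hpos (Nxy_le_Nyy c y a b)
      have hx' : (0:ℝ) < Nxx c a := by exact_mod_cast hx
      have hy' : (0:ℝ) < Nyy y b := by exact_mod_cast hy
      rw [hp, hpx, hpy, rho]
      have harg : (Nxy c y a b : ℝ) / n / ((Nxx c a : ℝ) / n * ((Nyy y b : ℝ) / n)) =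
          ((Nxy c y a b : ℝ) * n) / ((Nxx c a : ℝ) * (Nyy y b : ℝ)) := by
        field_simp
      rw [harg]
      field_simp
  have hmi : (n : ℝ) * empMI c y = ∑ a, ∑ b, (Nxy c y a b : ℝ) * Real.log (rho c y a b) := by
    rw [empMI, miOf, Finset.mul_sum]
    refine Finset.sum_congr rfl fun a _ => ?_
    rw [Finset.mul_sum]
    exact Finset.sum_congr rfl fun b _ => hterm a b
  rw [hmi, ← Fintype.sum_prod_type']
  rw [← Finset.sum_fiberwise Finset.univ (fun i => (c i, y i))
    (fun i => Real.log (rho c y (c i) (y i)))]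
  refine Finset.sum_congr rfl fun j _ => ?_
  have hfib : (Finset.univ.filter fun i => (c i, y i) = j) =
      (Finset.univ.filter fun i => c i = j.1 ∧ y i = j.2) := by
    apply Finset.filter_congr; intro i _; simp [Prod.ext_iff]
  rw [Finset.sum_congr hfib (fun i hi => ?_), Finset.sum_const, nsmul_eq_mul]
  · rfl
  · simp only [Finset.mem_filter] at hi
    rw [hi.2.1, hi.2.2]

lemma gibbs (hn : 0 < n) (c : Fin n → 𝒳) (Q : 𝒳 → ℝ) (hQ0 : ∀ a, 0 ≤ Q a)
    (hQ1 : ∑ a, Q a = 1) :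
    (∏ i, (n : ℝ) * Q (c i) / (Nxx c (c i) : ℝ)) ≤ 1 := by
  by_cases hz : ∃ i, Q (c i) = 0
  · obtain ⟨i0, hi0⟩ := hz
    have : (n : ℝ) * Q (c i0) / (Nxx c (c i0) : ℝ) = 0 := by rw [hi0]; simp
    rw [Finset.prod_eq_zero (Finset.mem_univ i0) this]
    norm_num
  · push_neg at hz
    have hpos : ∀ i, 0 < (n : ℝ) * Q (c i) / (Nxx c (c i) : ℝ) := by
      intro i
      have h1 : (0:ℝ) < n := by exact_mod_cast hn
      have h2 : 0 < Q (c i) := lt_of_le_of_ne (hQ0 _) (Ne.symm (hz i))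
      have h3 : (0:ℝ) < (Nxx c (c i) : ℝ) := by exact_mod_cast one_le_Nxx c i
      positivity
    have hexp : (∏ i, (n : ℝ) * Q (c i) / (Nxx c (c i) : ℝ)) =
        Real.exp (∑ i, Real.log ((n : ℝ) * Q (c i) / (Nxx c (c i) : ℝ))) := by
      rw [Real.exp_sum]
      exact (Finset.prod_congr rfl fun i _ => (Real.exp_log (hpos i)).symm)
    rw [hexp, ← Real.exp_zero]
    apply Real.exp_le_exp.mpr
    have hlog : ∀ i, Real.log ((n : ℝ) * Q (c i) / (Nxx c (c i) : ℝ)) ≤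
        (n : ℝ) * Q (c i) / (Nxx c (c i) : ℝ) - 1 :=
      fun i => Real.log_le_sub_one_of_pos (hpos i)
    calc ∑ i, Real.log ((n : ℝ) * Q (c i) / (Nxx c (c i) : ℝ))
        ≤ ∑ i, ((n : ℝ) * Q (c i) / (Nxx c (c i) : ℝ) - 1) :=
          Finset.sum_le_sum fun i _ => hlog i
      _ = (∑ i, (n : ℝ) * Q (c i) / (Nxx c (c i) : ℝ)) - n := by
          rw [Finset.sum_sub_distrib]; simp
      _ ≤ 0 := by
          have hsum : (∑ i, (n : ℝ) * Q (c i) / (Nxx c (c i) : ℝ)) ≤ n := by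
            rw [← Finset.sum_fiberwise Finset.univ c
              (fun i => (n : ℝ) * Q (c i) / (Nxx c (c i) : ℝ))]
            have hfib : ∀ a, (∑ i ∈ Finset.univ.filter fun i => c i = a,
                (n : ℝ) * Q (c i) / (Nxx c (c i) : ℝ)) ≤ (n : ℝ) * Q a := by
              intro a
              have : ∀ i ∈ Finset.univ.filter fun i => c i = a,
                  (n : ℝ) * Q (c i) / (Nxx c (c i) : ℝ) =
                  (n : ℝ) * Q a / (Nxx c a : ℝ) := by
                intro i hi
                simp only [Finset.mem_filter] at hi
                rw [hi.2]
              rw [Finset.sum_congr rfl this, Finset.sum_const, nsmul_eq_mul]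
              have hcc : ((Finset.univ.filter fun i => c i = a).card : ℝ) = (Nxx c a : ℝ) := rfl
              rw [hcc]
              rcases Nat.eq_zero_or_pos (Nxx c a) with h0 | hp
              · rw [h0]
                simp only [Nat.cast_zero, zero_mul]
                exact mul_nonneg (by positivity) (hQ0 a)
              · have hne : ((Nxx c a : ℝ)) ≠ 0 := by
                  have : (0:ℝ) < (Nxx c a : ℝ) := by exact_mod_cast hp
                  exact ne_of_gt this
                rw [mul_comm, div_mul_cancel₀ _ hne]
            calc (∑ a, ∑ i ∈ Finset.univ.filter fun i => c i = a,
                (n : ℝ) * Q (c i) / (Nxx c (c i) : ℝ)) ≤ ∑ a, (n : ℝ) * Q a :=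
                Finset.sum_le_sum fun a _ => hfib a
              _ = n := by rw [← Finset.mul_sum, hQ1, mul_one]
          linarith

lemma pointwise_bound (hn : 0 < n) (c : Fin n → 𝒳) (y : Fin n → 𝒴) (Q : 𝒳 → ℝ)
    (hQ0 : ∀ a, 0 ≤ Q a) (hQ1 : ∑ a, Q a = 1) :
    (∏ i, Q (c i)) * Real.exp ((n : ℝ) * empMI c y) ≤
      ∏ i, ((Nxy c y (c i) (y i) : ℝ) / (Nyy y (y i) : ℝ)) := by
  have hrho_pos : ∀ i, 0 < rho c y (c i) (y i) := by
    intro i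
    rw [rho]
    have h1 : (0:ℝ) < (Nxy c y (c i) (y i) : ℝ) := by exact_mod_cast one_le_Nxy c y i
    have h2 : (0:ℝ) < n := by exact_mod_cast hn
    have h3 : (0:ℝ) < (Nxx c (c i) : ℝ) := by exact_mod_cast one_le_Nxx c i
    have h4 : (0:ℝ) < (Nyy y (y i) : ℝ) := by exact_mod_cast one_le_Nyy y i
    positivity
  have hexp : Real.exp ((n : ℝ) * empMI c y) = ∏ i, rho c y (c i) (y i) := by
    rw [empMI_identity hn c y, Real.exp_sum]
    exact Finset.prod_congr rfl fun i _ => Real.exp_log (hrho_pos i)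
  have hfactor : ∀ i, Q (c i) * rho c y (c i) (y i) =
      ((Nxy c y (c i) (y i) : ℝ) / (Nyy y (y i) : ℝ)) *
      ((n : ℝ) * Q (c i) / (Nxx c (c i) : ℝ)) := by
    intro i
    rw [rho]
    have h3 : ((Nxx c (c i) : ℝ)) ≠ 0 := by
      have := one_le_Nxx c i; positivity
    have h4 : ((Nyy y (y i) : ℝ)) ≠ 0 := by
      have := one_le_Nyy y i; positivity
    field_simp
  calc (∏ i, Q (c i)) * Real.exp ((n : ℝ) * empMI c y)
      = ∏ i, (Q (c i) * rho c y (c i) (y i)) := by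
        rw [hexp, Finset.prod_mul_distrib]
    _ = (∏ i, ((Nxy c y (c i) (y i) : ℝ) / (Nyy y (y i) : ℝ))) *
        (∏ i, ((n : ℝ) * Q (c i) / (Nxx c (c i) : ℝ))) := by
        rw [← Finset.prod_mul_distrib]
        exact Finset.prod_congr rfl fun i _ => hfactor i
    _ ≤ (∏ i, ((Nxy c y (c i) (y i) : ℝ) / (Nyy y (y i) : ℝ))) * 1 := by
        apply mul_le_mul_of_nonneg_left (gibbs hn c Q hQ0 hQ1)
        apply Finset.prod_nonneg
        intro i _
        have h1 : (0:ℝ) ≤ (Nxy c y (c i) (y i) : ℝ) := by positivity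
        have h4 : (0:ℝ) ≤ (Nyy y (y i) : ℝ) := by positivity
        positivity
    _ = _ := mul_one _

lemma counting (hn : 0 < n) (y : Fin n → 𝒴) :
    (∑ c : Fin n → 𝒳, ∏ i, ((Nxy c y (c i) (y i) : ℝ) / (Nyy y (y i) : ℝ))) ≤
      ((n + 1 : ℝ)) ^ (Fintype.card 𝒳 * Fintype.card 𝒴) := by
  classical
  set φ : (Fin n → 𝒳) → (𝒳 → 𝒴 → Fin (n + 1)) := fun c a b =>
    ⟨Nxy c y a b, Nat.lt_succ_of_le (Nxy_le c y a b)⟩ with hφ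
  set g : (Fin n → 𝒳) → ℝ := fun c => ∏ i, ((Nxy c y (c i) (y i) : ℝ) / (Nyy y (y i) : ℝ))
    with hg
  have hNyy_pos : ∀ i, (0:ℝ) < (Nyy y (y i) : ℝ) := fun i => by
    exact_mod_cast one_le_Nyy y i
  have hfib : ∀ V : 𝒳 → 𝒴 → Fin (n + 1),
      (∑ c ∈ Finset.univ.filter fun c => φ c = V, g c) ≤ 1 := by
    intro V
    rcases Finset.eq_empty_or_nonempty (Finset.univ.filter fun c => φ c = V) with he | hne
    · rw [he, Finset.sum_empty]; norm_num
    · obtain ⟨c₀, hc₀⟩ := hne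
      have hVc₀ : φ c₀ = V := (Finset.mem_filter.mp hc₀).2
      have hmarg : ∀ b, (∑ a, ((V a b : ℕ) : ℝ)) = (Nyy y b : ℝ) := by
        intro b
        rw [← hVc₀]
        have : ∀ a, ((φ c₀ a b : ℕ) : ℝ) = (Nxy c₀ y a b : ℝ) := fun a => rfl
        rw [Finset.sum_congr rfl fun a _ => this a, ← Nat.cast_sum, sum_Nxy_x]
      set f : Fin n → 𝒳 → ℝ := fun i a => ((V a (y i) : ℕ) : ℝ) / (Nyy y (y i) : ℝ) with hf
      have hgeq : ∀ c ∈ Finset.univ.filter fun c => φ c = V, g c = ∏ i, f i (c i) := by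
        intro c hc
        have hVc : φ c = V := (Finset.mem_filter.mp hc).2
        refine Finset.prod_congr rfl fun i _ => ?_
        have : Nxy c y (c i) (y i) = (V (c i) (y i) : ℕ) := by rw [← hVc]
        rw [this]
      calc (∑ c ∈ Finset.univ.filter fun c => φ c = V, g c)
          = ∑ c ∈ Finset.univ.filter fun c => φ c = V, ∏ i, f i (c i) :=
            Finset.sum_congr rfl hgeq
        _ ≤ ∑ c : Fin n → 𝒳, ∏ i, f i (c i) := by
            apply Finset.sum_le_sum_of_subset_of_nonneg (Finset.filter_subset _ _)
            intro c _ _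
            apply Finset.prod_nonneg
            intro i _
            have := hNyy_pos i
            positivity
        _ = ∏ i, ∑ a, f i a := (Fintype.prod_sum f).symm
        _ = 1 := by
            apply Finset.prod_eq_one
            intro i _
            rw [hf]
            simp only
            rw [← Finset.sum_div, hmarg, div_self (ne_of_gt (hNyy_pos i))]
  calc (∑ c : Fin n → 𝒳, g c)
      = ∑ V : 𝒳 → 𝒴 → Fin (n + 1), ∑ c ∈ Finset.univ.filter fun c => φ c = V, g c :=
        (Finset.sum_fiberwise Finset.univ φ g).symm
    _ ≤ ∑ _V : 𝒳 → 𝒴 → Fin (n + 1), (1:ℝ) := Finset.sum_le_sum fun V _ => hfib V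
    _ = (Fintype.card (𝒳 → 𝒴 → Fin (n + 1)) : ℝ) := by
        rw [Finset.sum_const, nsmul_eq_mul, mul_one]; rfl
    _ = ((n + 1 : ℝ)) ^ (Fintype.card 𝒳 * Fintype.card 𝒴) := by
        rw [Fintype.card_fun, Fintype.card_fun, Fintype.card_fin]
        push_cast
        rw [← pow_mul, mul_comm (Fintype.card 𝒴)]

lemma tail_bound (hn : 0 < n) (y : Fin n → 𝒴) (Q : 𝒳 → ℝ) (hQ0 : ∀ a, 0 ≤ Q a)
    (hQ1 : ∑ a, Q a = 1) (t : ℝ) :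
    (∑ c ∈ Finset.univ.filter fun c : Fin n → 𝒳 => t < empMI c y, ∏ i, Q (c i)) ≤
      Real.exp (-(n : ℝ) * t) * ((n + 1 : ℝ)) ^ (Fintype.card 𝒳 * Fintype.card 𝒴) := by
  classical
  have hstep : ∀ c ∈ Finset.univ.filter fun c : Fin n → 𝒳 => t < empMI c y,
      (∏ i, Q (c i)) ≤ Real.exp (-(n : ℝ) * t) *
        ∏ i, ((Nxy c y (c i) (y i) : ℝ) / (Nyy y (y i) : ℝ)) := by
    intro c hc
    have hmi : t < empMI c y := (Finset.mem_filter.mp hc).2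
    have hpb := pointwise_bound hn c y Q hQ0 hQ1
    have hQprod : (0:ℝ) ≤ ∏ i, Q (c i) := Finset.prod_nonneg fun i _ => hQ0 _
    have hexp_pos : (0:ℝ) < Real.exp ((n : ℝ) * empMI c y) := Real.exp_pos _
    have h1 : (∏ i, Q (c i)) = ((∏ i, Q (c i)) * Real.exp ((n : ℝ) * empMI c y)) *
        Real.exp (-(n : ℝ) * empMI c y) := by
      rw [mul_assoc, ← Real.exp_add]
      ring_nf
      rw [Real.exp_zero, mul_one]
    rw [h1]
    have h2 : Real.exp (-(n : ℝ) * empMI c y) ≤ Real.exp (-(n : ℝ) * t) := by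
      apply Real.exp_le_exp.mpr
      have hn' : (0:ℝ) ≤ (n:ℝ) := by positivity
      nlinarith
    calc ((∏ i, Q (c i)) * Real.exp ((n : ℝ) * empMI c y)) * Real.exp (-(n : ℝ) * empMI c y)
        ≤ (∏ i, ((Nxy c y (c i) (y i) : ℝ) / (Nyy y (y i) : ℝ))) *
          Real.exp (-(n : ℝ) * empMI c y) := by
          apply mul_le_mul_of_nonneg_right hpb (le_of_lt (Real.exp_pos _))
      _ ≤ (∏ i, ((Nxy c y (c i) (y i) : ℝ) / (Nyy y (y i) : ℝ))) *
          Real.exp (-(n : ℝ) * t) := by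
          apply mul_le_mul_of_nonneg_left h2
          apply Finset.prod_nonneg
          intro i _
          have h4 : (0:ℝ) < (Nyy y (y i) : ℝ) := by exact_mod_cast one_le_Nyy y i
          positivity
      _ = Real.exp (-(n : ℝ) * t) *
          ∏ i, ((Nxy c y (c i) (y i) : ℝ) / (Nyy y (y i) : ℝ)) := mul_comm _ _
  calc (∑ c ∈ Finset.univ.filter fun c : Fin n → 𝒳 => t < empMI c y, ∏ i, Q (c i))
      ≤ ∑ c ∈ Finset.univ.filter fun c : Fin n → 𝒳 => t < empMI c y,
        Real.exp (-(n : ℝ) * t) *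
          ∏ i, ((Nxy c y (c i) (y i) : ℝ) / (Nyy y (y i) : ℝ)) :=
        Finset.sum_le_sum hstep
    _ ≤ ∑ c : Fin n → 𝒳, Real.exp (-(n : ℝ) * t) *
          ∏ i, ((Nxy c y (c i) (y i) : ℝ) / (Nyy y (y i) : ℝ)) := by
        apply Finset.sum_le_sum_of_subset_of_nonneg (Finset.filter_subset _ _)
        intro c _ _
        apply mul_nonneg (le_of_lt (Real.exp_pos _))
        apply Finset.prod_nonneg
        intro i _
        have h4 : (0:ℝ) < (Nyy y (y i) : ℝ) := by exact_mod_cast one_le_Nyy y i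
        positivity
    _ = Real.exp (-(n : ℝ) * t) *
        ∑ c : Fin n → 𝒳, ∏ i, ((Nxy c y (c i) (y i) : ℝ) / (Nyy y (y i) : ℝ)) := by
        rw [Finset.mul_sum]
    _ ≤ Real.exp (-(n : ℝ) * t) * ((n + 1 : ℝ)) ^ (Fintype.card 𝒳 * Fintype.card 𝒴) := by
        apply mul_le_mul_of_nonneg_left (counting hn y) (le_of_lt (Real.exp_pos _))

end Main

open Filter in
lemma rate_lemma (K : ℕ) (R δ Pe : ℝ) (hR : 0 < R) (hδ : 0 < δ) (hPe : 0 < Pe) :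
    ∃ n : ℕ, 0 < n ∧ (Nat.ceil (Real.exp ((n:ℝ) * R)) : ℝ) *
      (Real.exp (-(n:ℝ) * (R + δ)) * ((n:ℝ) + 1) ^ K) ≤ Pe := by
  have h1 : Tendsto (fun v : ℝ => v ^ K * Real.exp (-v)) atTop (nhds 0) :=
    Real.tendsto_pow_mul_exp_neg_atTop_nhds_zero K
  have h2 : Tendsto (fun x : ℝ => δ * (x + 1)) atTop atTop :=
    (tendsto_atTop_add_const_right atTop 1 tendsto_id).const_mul_atTop hδ
  have h3 : Tendsto (fun x : ℝ => (δ * (x + 1)) ^ K * Real.exp (-(δ * (x + 1))))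
      atTop (nhds 0) := h1.comp h2
  have h4 : Tendsto (fun x : ℝ => (2 * Real.exp δ / δ ^ K) *
      ((δ * (x + 1)) ^ K * Real.exp (-(δ * (x + 1))))) atTop (nhds 0) := by
    have := h3.const_mul (2 * Real.exp δ / δ ^ K)
    simpa using this
  have heq : ∀ x : ℝ, (2 * Real.exp δ / δ ^ K) *
      ((δ * (x + 1)) ^ K * Real.exp (-(δ * (x + 1)))) =
      2 * (x + 1) ^ K * Real.exp (-(x * δ)) := by
    intro x
    have hδK : δ ^ K ≠ 0 := by positivity
    rw [mul_pow, Real.exp_neg, Real.exp_neg, mul_add, mul_one, Real.exp_add, mul_comm δ x]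
    field_simp
  have h5 : Tendsto (fun x : ℝ => 2 * (x + 1) ^ K * Real.exp (-(x * δ))) atTop (nhds 0) := by
    refine h4.congr fun x => heq x
  have h6 : ∀ᶠ x : ℝ in atTop, 2 * (x + 1) ^ K * Real.exp (-(x * δ)) < Pe := by
    have := h5.eventually (eventually_lt_nhds hPe)
    exact this
  obtain ⟨x₀, hx₀⟩ := h6.exists_forall_of_atTop
  refine ⟨max 1 (Nat.ceil (max x₀ 0)), by positivity, ?_⟩
  set n : ℕ := max 1 (Nat.ceil (max x₀ 0)) with hn
  have hxn : x₀ ≤ (n : ℝ) := by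
    calc x₀ ≤ max x₀ 0 := le_max_left _ _
      _ ≤ (Nat.ceil (max x₀ 0) : ℝ) := Nat.le_ceil _
      _ ≤ (n : ℝ) := by exact_mod_cast Nat.cast_le.mpr (le_max_right _ _)
  have hkey := hx₀ (n : ℝ) hxn
  have hceil : (Nat.ceil (Real.exp ((n:ℝ) * R)) : ℝ) ≤ 2 * Real.exp ((n:ℝ) * R) := by
    have h1 : Real.exp ((n:ℝ) * R) ≥ 1 := by
      rw [← Real.exp_zero]
      apply Real.exp_le_exp.mpr
      positivity
    calc (Nat.ceil (Real.exp ((n:ℝ) * R)) : ℝ) ≤ Real.exp ((n:ℝ) * R) + 1 :=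
        le_of_lt (Nat.ceil_lt_add_one (by positivity))
      _ ≤ 2 * Real.exp ((n:ℝ) * R) := by linarith
  have hexp_combine : Real.exp ((n:ℝ) * R) * Real.exp (-(n:ℝ) * (R + δ)) =
      Real.exp (-((n:ℝ) * δ)) := by
    rw [← Real.exp_add]; ring_nf
  have hnonneg : (0:ℝ) ≤ Real.exp (-(n:ℝ) * (R + δ)) * ((n:ℝ) + 1) ^ K := by positivity
  calc (Nat.ceil (Real.exp ((n:ℝ) * R)) : ℝ) *
      (Real.exp (-(n:ℝ) * (R + δ)) * ((n:ℝ) + 1) ^ K)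
      ≤ 2 * Real.exp ((n:ℝ) * R) * (Real.exp (-(n:ℝ) * (R + δ)) * ((n:ℝ) + 1) ^ K) :=
        mul_le_mul_of_nonneg_right hceil hnonneg
    _ = 2 * ((n:ℝ) + 1) ^ K * Real.exp (-((n:ℝ) * δ)) := by
        rw [← hexp_combine]; ring
    _ ≤ Pe := le_of_lt hkey

/-- Non-adaptive achievability for discrete individual channels: there is a block length `n`
and a randomized rate-`R` encoder/decoder pair (with common randomness `S ∼ μ`) whose input
is i.i.d. `∼ Q` for every message, and whose conditional error probability, given any input
sequence `x` and output sequence `y` with `Î(x;y) > R + δ`, is at most `Pe`.  The error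
probability given `(x,y)` is expressed as the `ℝ≥0∞`-ratio
`μ(decode ≠ w ∧ input = x) / μ(input = x)` (which is `0` when the conditioning event is
null). -/
theorem statement11 {𝒳 𝒴 : Type*} [Fintype 𝒳] [Fintype 𝒴] [DecidableEq 𝒳] [DecidableEq 𝒴]
    (Pe δ : ℝ) (hPe : 0 < Pe) (hδ : 0 < δ)
    (Q : 𝒳 → ℝ) (hQ0 : ∀ a, 0 ≤ Q a) (hQ1 : ∑ a, Q a = 1)
    (R : ℝ) (hR : 0 < R) :
    ∃ n : ℕ, 0 < n ∧
    ∃ (S : Type) (_ : MeasurableSpace S) (μ : Measure S), IsProbabilityMeasure μ ∧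
    ∃ (enc : Fin (Nat.ceil (Real.exp ((n : ℝ) * R))) → S → (Fin n → 𝒳))
      (dec : (Fin n → 𝒴) → S → Fin (Nat.ceil (Real.exp ((n : ℝ) * R)))),
      (∀ w (x : Fin n → 𝒳), μ {s | enc w s = x} = ENNReal.ofReal (∏ i, Q (x i))) ∧
      (∀ w (x : Fin n → 𝒳) (y : Fin n → 𝒴), R + δ < empMI x y →
        μ ({s | dec y s ≠ w} ∩ {s | enc w s = x}) / μ {s | enc w s = x} ≤
          ENNReal.ofReal Pe) := by
  classical
  set K := Fintype.card 𝒳 * Fintype.card 𝒴 with hK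
  obtain ⟨n, hn, hrate⟩ := rate_lemma K R δ Pe hR hδ hPe
  refine ⟨n, hn, ?_⟩
  set M := Nat.ceil (Real.exp ((n : ℝ) * R)) with hM
  have hM0 : 0 < M := Nat.ceil_pos.mpr (Real.exp_pos _)
  set C := Fintype.card 𝒳 with hC
  set eX : Fin C ≃ 𝒳 := (Fintype.equivFin 𝒳).symm with heX
  set E : (Fin n → Fin C) ≃ (Fin n → 𝒳) := Equiv.piCongrRight (fun _ => eX) with hE
  set S := (Fin M → (Fin n → Fin C)) with hS
  let inst : MeasurableSpace S := ⊤
  have hmeas : ∀ A : Set S, MeasurableSet A := fun A => trivial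
  set q : (Fin n → Fin C) → ℝ≥0∞ := fun c => ENNReal.ofReal (∏ i, Q (eX (c i))) with hq
  set p : S → ℝ≥0∞ := fun s => ∏ w, q (s w) with hp
  set μ : Measure S := ∑ s ∈ Finset.univ, p s • Measure.dirac s with hμ
  have mu_apply : ∀ A : Set S, μ A = ∑ s : S, A.indicator p s := by
    intro A
    rw [hμ, Measure.finset_sum_apply]
    refine Finset.sum_congr rfl fun s _ => ?_
    rw [Measure.smul_apply, Measure.dirac_apply' s (hmeas A), smul_eq_mul]
    by_cases h : s ∈ A
    · rw [Set.indicator_of_mem h, Set.indicator_of_mem h, Pi.one_apply, mul_one]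
    · rw [Set.indicator_of_notMem h, Set.indicator_of_notMem h, mul_zero]
  have swap : ∀ f : Fin M → (Fin n → Fin C) → ℝ≥0∞,
      (∑ s : S, ∏ w, f w (s w)) = ∏ w, ∑ c, f w c := fun f => (Fintype.prod_sum f).symm
  have hsumq : (∑ c : Fin n → Fin C, q c) = 1 := by
    have hreal : (∑ c : Fin n → Fin C, ∏ i, Q (eX (c i))) = 1 := by
      have h1 := (Fintype.prod_sum (fun (_ : Fin n) (a : Fin C) => Q (eX a))).symm
      have h2 : (∑ a : Fin C, Q (eX a)) = 1 := by
        rw [Equiv.sum_comp eX Q, hQ1]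
      rw [h1, h2, Finset.prod_const, one_pow]
    rw [hq]
    simp only
    rw [← ENNReal.ofReal_sum_of_nonneg (fun c _ => Finset.prod_nonneg fun i _ => hQ0 _),
      hreal, ENNReal.ofReal_one]
  -- single-coordinate marginal
  have coord1 : ∀ (w : Fin M) (xF : Fin n → Fin C), μ {s : S | s w = xF} = q xF := by
    intro w xF
    set f : Fin M → (Fin n → Fin C) → ℝ≥0∞ :=
      fun u c => if u = w then (if c = xF then q c else 0) else q c with hf
    have hterm : ∀ s : S, ({s : S | s w = xF}.indicator p) s = ∏ u, f u (s u) := by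
      intro s
      by_cases h : s w = xF
      · have hm : s ∈ {s : S | s w = xF} := h
        rw [Set.indicator_of_mem hm, hp]
        refine Finset.prod_congr rfl fun u _ => ?_
        by_cases hu : u = w
        · subst hu; simp [hf, h]
        · simp [hf, hu]
      · have hm : s ∉ {s : S | s w = xF} := h
        rw [Set.indicator_of_notMem hm]
        symm
        apply Finset.prod_eq_zero (Finset.mem_univ w)
        simp [hf, h]
    have h1 : μ {s : S | s w = xF} = ∑ s : S, ∏ u, f u (s u) := by
      rw [mu_apply]
      exact Finset.sum_congr rfl fun s _ => hterm s
    rw [h1, swap f]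
    rw [Finset.prod_eq_single w ?_ ?_]
    · simp only [hf, if_pos rfl]
      rw [Finset.sum_ite_eq' Finset.univ xF q]
      simp
    · intro u _ hu
      simp only [hf, if_neg hu]
      exact hsumq
    · intro h; exact absurd (Finset.mem_univ w) h
  -- two-coordinate computation
  have coord2 : ∀ (w w' : Fin M), w' ≠ w → ∀ (xF : Fin n → Fin C)
      (P : (Fin n → Fin C) → Prop),
      μ {s : S | s w = xF ∧ P (s w')} =
        q xF * ∑ c ∈ Finset.univ.filter P, q c := by
    intro w w' hww xF P
    set T := ∑ c ∈ Finset.univ.filter P, q c with hT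
    set f : Fin M → (Fin n → Fin C) → ℝ≥0∞ := fun u c =>
      if u = w then (if c = xF then q c else 0)
      else if u = w' then (if P c then q c else 0) else q c with hf
    have hterm : ∀ s : S,
        ({s : S | s w = xF ∧ P (s w')}.indicator p) s =
          ∏ u, f u (s u) := by
      intro s
      by_cases h1 : s w = xF
      · by_cases h2 : P (s w')
        · have hm : s ∈ {s : S | s w = xF ∧ P (s w')} := ⟨h1, h2⟩
          rw [Set.indicator_of_mem hm, hp]
          refine Finset.prod_congr rfl fun u _ => ?_
          by_cases hu : u = w
          · subst hu; simp [hf, h1]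
          · by_cases hu' : u = w'
            · subst hu'; simp [hf, hu, h2]
            · simp [hf, hu, hu']
        · have hm : s ∉ {s : S | s w = xF ∧ P (s w')} := by simp [h2]
          rw [Set.indicator_of_notMem hm]
          symm
          apply Finset.prod_eq_zero (Finset.mem_univ w')
          simp [hf, hww, h2]
      · have hm : s ∉ {s : S | s w = xF ∧ P (s w')} := by simp [h1]
        rw [Set.indicator_of_notMem hm]
        symm
        apply Finset.prod_eq_zero (Finset.mem_univ w)
        simp [hf, h1]
    have hmu : μ {s : S | s w = xF ∧ P (s w')} = ∑ s : S, ∏ u, f u (s u) := by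
      rw [mu_apply]
      exact Finset.sum_congr rfl fun s _ => hterm s
    rw [hmu, swap f]
    have hgw : (∑ c, f w c) = q xF := by
      simp only [hf, if_pos rfl]
      rw [Finset.sum_ite_eq' Finset.univ xF q]
      simp
    have hgw' : (∑ c, f w' c) = T := by
      rw [hT, Finset.sum_filter]
      refine Finset.sum_congr rfl fun c _ => ?_
      simp [hf, hww]
    have hgother : ∀ u, u ≠ w → u ≠ w' → (∑ c, f u c) = 1 := by
      intro u hu hu'
      simp only [hf, if_neg hu, if_neg hu']
      exact hsumq
    rw [← Finset.mul_prod_erase Finset.univ _ (Finset.mem_univ w)]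
    rw [← Finset.mul_prod_erase (Finset.univ.erase w) _
      (Finset.mem_erase.mpr ⟨hww, Finset.mem_univ w'⟩)]
    rw [hgw, hgw', Finset.prod_eq_one ?_, mul_one]
    intro u hu
    simp only [Finset.mem_erase] at hu
    exact hgother u hu.2.1 hu.1
  -- encoder and decoder
  set enc : Fin M → S → (Fin n → 𝒳) := fun w s => E (s w) with henc
  set dec : (Fin n → 𝒴) → S → Fin M := fun y s =>
    if h : (Finset.univ.filter fun u => R + δ < empMI (E (s u)) y).Nonempty then
      (Finset.univ.filter fun u => R + δ < empMI (E (s u)) y).min' h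
    else ⟨0, hM0⟩ with hdec
  -- probability measure
  have hprob : IsProbabilityMeasure μ := by
    constructor
    have h1 : μ Set.univ = ∑ s : S, p s := by
      rw [mu_apply]
      exact Finset.sum_congr rfl fun s _ => by rw [Set.indicator_univ]
    rw [h1]
    calc (∑ s : S, p s) = ∏ _w : Fin M, ∑ c, q c := swap fun _ => q
      _ = 1 := by rw [hsumq, Finset.prod_const, one_pow]
  -- translation of encoder events
  have hset : ∀ (w : Fin M) (x : Fin n → 𝒳),
      {s : S | enc w s = x} = {s : S | s w = E.symm x} := by
    intro w x
    ext s
    simp only [Set.mem_setOf_eq, henc]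
    exact ⟨fun h => by rw [← h, Equiv.symm_apply_apply],
      fun h => by rw [h, Equiv.apply_symm_apply]⟩
  have hqE : ∀ x : Fin n → 𝒳, q (E.symm x) = ENNReal.ofReal (∏ i, Q (x i)) := by
    intro x
    rw [hq]
    simp only
    congr 1
    refine Finset.prod_congr rfl fun i _ => ?_
    congr 1
    have : E.symm x i = eX.symm (x i) := rfl
    rw [this, Equiv.apply_symm_apply]
  have hmu_enc : ∀ (w : Fin M) (x : Fin n → 𝒳),
      μ {s : S | enc w s = x} = ENNReal.ofReal (∏ i, Q (x i)) := by
    intro w x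
    rw [hset w x, coord1 w (E.symm x), hqE x]
  refine ⟨S, inst, μ, hprob, enc, dec, hmu_enc, ?_⟩
  intro w x y hxy
  set P : (Fin n → Fin C) → Prop := fun c => R + δ < empMI (E c) y with hP
  set T := ∑ c ∈ Finset.univ.filter P, q c with hT
  set xF := E.symm x with hxF
  -- union bound
  have hsub : {s : S | dec y s ≠ w} ∩ {s : S | enc w s = x} ⊆
      ⋃ w' ∈ Finset.univ.erase w, {s : S | s w = xF ∧ P (s w')} := by
    intro s hs
    obtain ⟨hd, he⟩ := hs
    have he' : E (s w) = x := he
    have heF : s w = xF := by rw [hxF, ← he', Equiv.symm_apply_apply]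
    have hWne : (Finset.univ.filter fun u => R + δ < empMI (E (s u)) y).Nonempty := by
      refine ⟨w, Finset.mem_filter.mpr ⟨Finset.mem_univ w, ?_⟩⟩
      rw [he']; exact hxy
    have hdeq : dec y s =
        (Finset.univ.filter fun u => R + δ < empMI (E (s u)) y).min' hWne := by
      rw [hdec]
      simp only [dif_pos hWne]
    have hmem := Finset.min'_mem _ hWne
    rw [← hdeq] at hmem
    have hdw : dec y s ≠ w := hd
    exact Set.mem_biUnion
      (Finset.mem_coe.mpr (Finset.mem_erase.mpr ⟨hdw, Finset.mem_univ _⟩))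
      ⟨heF, (Finset.mem_filter.mp hmem).2⟩
  have hmuE : μ ({s : S | dec y s ≠ w} ∩ {s : S | enc w s = x}) ≤
      (M : ℝ≥0∞) * (q xF * T) := by
    calc μ ({s : S | dec y s ≠ w} ∩ {s : S | enc w s = x})
        ≤ μ (⋃ w' ∈ Finset.univ.erase w, {s : S | s w = xF ∧ P (s w')}) :=
          measure_mono hsub
      _ ≤ ∑ w' ∈ Finset.univ.erase w, μ {s : S | s w = xF ∧ P (s w')} :=
          measure_biUnion_finset_le _ _
      _ = ∑ w' ∈ Finset.univ.erase w, q xF * T := by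
          refine Finset.sum_congr rfl fun w' hw' => ?_
          exact coord2 w w' (Finset.mem_erase.mp hw').1 xF P
      _ = ((Finset.univ.erase w).card : ℝ≥0∞) * (q xF * T) := by
          rw [Finset.sum_const, nsmul_eq_mul]
      _ ≤ (M : ℝ≥0∞) * (q xF * T) := by
          apply mul_le_mul_left
          have h1 : (Finset.univ.erase w).card ≤ M := by
            calc (Finset.univ.erase w).card ≤ (Finset.univ : Finset (Fin M)).card :=
                Finset.card_le_card (Finset.erase_subset _ _)
              _ = M := by simp
          exact_mod_cast Nat.cast_le.mpr h1
  have hTbound : (M : ℝ≥0∞) * T ≤ ENNReal.ofReal Pe := by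
    have hbij : (∑ c ∈ Finset.univ.filter P, ∏ i, Q (eX (c i))) =
        ∑ c ∈ Finset.univ.filter (fun c : Fin n → 𝒳 => R + δ < empMI c y),
          ∏ i, Q (c i) := by
      rw [Finset.sum_filter, Finset.sum_filter]
      refine Fintype.sum_equiv E _ _ fun c => ?_
      have h1 : ∀ i, (E c) i = eX (c i) := fun i => rfl
      have h2 : (∏ i, Q (eX (c i))) = ∏ i, Q ((E c) i) :=
        Finset.prod_congr rfl fun i _ => by rw [h1]
      have hPc : P c ↔ R + δ < empMI (E c) y := Iff.rfl
      by_cases h : P c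
      · rw [if_pos h, if_pos (hPc.mp h)]
        exact h2
      · rw [if_neg h, if_neg (fun hh => h (hPc.mpr hh))]
    have hTof : T ≤ ENNReal.ofReal
        (Real.exp (-(n:ℝ) * (R + δ)) * ((n:ℝ) + 1) ^ K) := by
      rw [hT, hq]
      simp only
      rw [← ENNReal.ofReal_sum_of_nonneg
        (fun c _ => Finset.prod_nonneg fun i _ => hQ0 _)]
      apply ENNReal.ofReal_le_ofReal
      rw [hbij]
      exact tail_bound hn y Q hQ0 hQ1 (R + δ)
    calc (M : ℝ≥0∞) * T ≤ (M : ℝ≥0∞) * ENNReal.ofReal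
          (Real.exp (-(n:ℝ) * (R + δ)) * ((n:ℝ) + 1) ^ K) :=
          mul_le_mul_right hTof _
      _ = ENNReal.ofReal ((M : ℝ) *
          (Real.exp (-(n:ℝ) * (R + δ)) * ((n:ℝ) + 1) ^ K)) := by
          rw [ENNReal.ofReal_mul (Nat.cast_nonneg M), ENNReal.ofReal_natCast]
      _ ≤ ENNReal.ofReal Pe := ENNReal.ofReal_le_ofReal hrate
  apply ENNReal.div_le_of_le_mul
  calc μ ({s : S | dec y s ≠ w} ∩ {s : S | enc w s = x})
      ≤ (M : ℝ≥0∞) * (q xF * T) := hmuE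
    _ = ((M : ℝ≥0∞) * T) * q xF := by ring
    _ ≤ ENNReal.ofReal Pe * q xF := mul_le_mul_left hTbound _
    _ = ENNReal.ofReal Pe * μ {s : S | enc w s = x} := by
        rw [hmu_enc w x, hqE x]
end

section
/- For every ε ∈ [0, 1/2], the rate R = (1/2)·log₂( 1/(1 − (2/π)(1 − 2ε)²) ) and the binary symmetric channel capacity C = 1 − h_b(ε) (in bits) satisfy R ≥ (2/π)·C. -/
/-- The binary entropy function, in bits (with `h_b 0 = h_b 1 = 0` by the convention
`Real.logb 2 0 = 0`). -/
noncomputable def hb (p : ℝ) : ℝ := -p * Real.logb 2 p - (1 - p) * Real.logb 2 (1 - p)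

open Real


noncomputable def gg (x : ℝ) : ℝ :=
  x / (1 - (2/π) * x^2) - (Real.log (1+x) - Real.log (1-x))/2

lemma denom_pos {x : ℝ} (h1 : x^2 ≤ 1) : 0 < 1 - (2/π) * x^2 := by
  have hπ : (3.1415:ℝ) < π := by
    have := Real.pi_gt_d6; linarith
  have : (2/π) * x^2 ≤ 2/π := by
    have h2 : 0 < 2/π := by positivity
    nlinarith
  have : 2/π < 1 := by
    rw [div_lt_one (by linarith)]; linarith
  nlinarith [sq_nonneg x, div_pos (by norm_num : (0:ℝ)<2) (by linarith : (0:ℝ)< π)]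

lemma gg_hasDeriv {x : ℝ} (h0 : 0 ≤ x) (h1 : x < 1) :
    HasDerivAt gg ((1 + (2/π)*x^2)/(1 - (2/π)*x^2)^2 - (1/(1+x) + 1/(1-x))/2) x := by
  have hd : 0 < 1 - (2/π) * x^2 := denom_pos (by nlinarith)
  have h1x : (0:ℝ) < 1 + x := by linarith
  have h2x : (0:ℝ) < 1 - x := by linarith
  have hu : HasDerivAt (fun x : ℝ => x / (1 - (2/π) * x^2))
      ((1*(1 - (2/π)*x^2) - x * (-(2/π)*(2*x)))/(1 - (2/π)*x^2)^2) x := by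
    exact (hasDerivAt_id x).div
      (by simpa using ((hasDerivAt_pow 2 x).const_mul (2/π)).const_sub 1) (by linarith)
  have hl1 : HasDerivAt (fun x : ℝ => Real.log (1+x)) (1/(1+x)) x := by
    simpa using (((hasDerivAt_id x).const_add 1).log (by simp [id]; linarith))
  have hl2 : HasDerivAt (fun x : ℝ => Real.log (1-x)) (-(1/(1-x))) x := by
    have := ((hasDerivAt_id x).const_sub 1).log (by simp [id]; linarith)
    simpa [div_eq_mul_inv] using this
  have := hu.sub (((hl1.sub hl2).div_const 2))
  refine HasDerivAt.congr_deriv this ?_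
  field_simp
  ring

lemma pi_lb : (3.1415:ℝ) < π := by have := Real.pi_gt_d6; linarith
lemma pi_ub : π < 3.1416 := by have := Real.pi_lt_d6; linarith

noncomputable def ggc : ℝ := Real.sqrt (π*(6-π)/(2*(π+2)))
noncomputable def ggb : ℝ := Real.sqrt 0.97

lemma ggc_nonneg : 0 ≤ ggc := Real.sqrt_nonneg _
lemma ggc_sq : ggc^2 = π*(6-π)/(2*(π+2)) := by
  rw [ggc, Real.sq_sqrt]
  exact div_nonneg (by nlinarith [pi_lb, pi_ub]) (by nlinarith [pi_lb])

lemma ggb_sq : ggb^2 = 0.97 := by rw [ggb, Real.sq_sqrt]; norm_num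

lemma ggb_lb : (0.9848:ℝ) ≤ ggb := by
  rw [ggb, show (0.9848:ℝ) = Real.sqrt (0.9848^2) by rw [Real.sqrt_sq]; norm_num]
  exact Real.sqrt_le_sqrt (by norm_num)

lemma ggb_ub : ggb ≤ 0.9849 := by
  rw [ggb, show (0.9849:ℝ) = Real.sqrt (0.9849^2) by rw [Real.sqrt_sq]; norm_num]
  exact Real.sqrt_le_sqrt (by norm_num)

lemma ggc_le_ggb : ggc ≤ ggb := by
  rw [ggc, ggb]
  apply Real.sqrt_le_sqrt
  rw [div_le_iff₀ (by have := pi_lb; positivity)]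
  nlinarith [pi_lb, pi_ub]

lemma ggb_lt_one : ggb < 1 := by
  have := ggb_ub; linarith


lemma gg_deriv_iff {x : ℝ} (hx0 : 0 < x) (hx1 : x < 1) :
    (0 ≤ (1 + (2/π)*x^2)/(1 - (2/π)*x^2)^2 - (1/(1+x) + 1/(1-x))/2)
      ↔ ((π - 2*x^2)^2 * π ≤ (π + 2*x^2)*(1-x^2) * π^2) := by
  have hπ := pi_lb
  have hπ0 : (0:ℝ) < π := by linarith
  have h1x : (0:ℝ) < 1 + x := by linarith
  have h2x : (0:ℝ) < 1 - x := by linarith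
  have h3 : (0:ℝ) < 1 - x^2 := by nlinarith
  have hd2 : (0:ℝ) < π - 2*x^2 := by nlinarith
  have e1 : (1/(1+x) + 1/(1-x))/2 = 1/(1-x^2) := by
    rw [div_add_div _ _ (ne_of_gt h1x) (ne_of_gt h2x)]
    rw [div_div, eq_div_iff (ne_of_gt h3)]
    field_simp [ne_of_gt h1x, ne_of_gt h2x]
    ring
  have e0 : 1 - 2/π*x^2 = (π - 2*x^2)/π := by field_simp
  have e0' : 1 + 2/π*x^2 = (π + 2*x^2)/π := by field_simp
  rw [sub_nonneg, e1, e0, e0', div_pow,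
    div_le_div_iff₀ h3 (by positivity : (0:ℝ) < ((π - 2*x^2)^2/π^2)),
    one_mul, div_mul_eq_mul_div, div_le_div_iff₀ (by positivity) hπ0]

lemma gg_mono : MonotoneOn gg (Set.Icc 0 ggc) := by
  have hc1 : ggc < 1 := lt_of_le_of_lt ggc_le_ggb ggb_lt_one
  apply monotoneOn_of_hasDerivWithinAt_nonneg (f' := fun x =>
      (1 + (2/π)*x^2)/(1 - (2/π)*x^2)^2 - (1/(1+x) + 1/(1-x))/2)
    (convex_Icc _ _)
  · intro x hx
    exact (gg_hasDeriv hx.1 (lt_of_le_of_lt hx.2 hc1)).continuousAt.continuousWithinAt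
  · intro x hx
    rw [interior_Icc] at hx
    exact (gg_hasDeriv hx.1.le (lt_of_lt_of_le hx.2 hc1.le)).hasDerivWithinAt
  · intro x hx
    rw [interior_Icc] at hx
    obtain ⟨hx0, hxc⟩ := hx
    have hx1 : x < 1 := lt_of_lt_of_le hxc hc1.le
    have hπ := pi_lb
    have hd : 0 < 1 - (2/π) * x^2 := denom_pos (by nlinarith)
    have hx2 : x^2 ≤ π*(6-π)/(2*(π+2)) := by
      rw [← ggc_sq]; exact pow_le_pow_left₀ hx0.le hxc.le 2
    have ht : 2*(π+2)*x^2 ≤ π*(6-π) := by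
      rw [le_div_iff₀ (by positivity)] at hx2; linarith
    rw [gg_deriv_iff hx0 hx1]
    nlinarith [mul_nonneg (mul_nonneg (sq_nonneg x) (sub_nonneg.2 ht)) (le_of_lt (by linarith : (0:ℝ) < π))]

lemma gg_anti : AntitoneOn gg (Set.Icc ggc ggb) := by
  apply antitoneOn_of_hasDerivWithinAt_nonpos (f' := fun x =>
      (1 + (2/π)*x^2)/(1 - (2/π)*x^2)^2 - (1/(1+x) + 1/(1-x))/2)
    (convex_Icc _ _)
  · intro x hx
    exact (gg_hasDeriv (le_trans ggc_nonneg hx.1)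
      (lt_of_le_of_lt hx.2 ggb_lt_one)).continuousAt.continuousWithinAt
  · intro x hx
    rw [interior_Icc] at hx
    exact (gg_hasDeriv (le_trans ggc_nonneg hx.1.le)
      (lt_trans hx.2 ggb_lt_one)).hasDerivWithinAt
  · intro x hx
    rw [interior_Icc] at hx
    obtain ⟨hxc, hxb⟩ := hx
    have hx0 : 0 < x := lt_of_le_of_lt ggc_nonneg hxc
    have hx1 : x < 1 := lt_trans hxb ggb_lt_one
    have hπ := pi_lb
    have hx2 : π*(6-π)/(2*(π+2)) ≤ x^2 := by
      rw [← ggc_sq]; exact pow_le_pow_left₀ ggc_nonneg hxc.le 2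
    have ht : π*(6-π) ≤ 2*(π+2)*x^2 := by
      rw [div_le_iff₀ (by positivity)] at hx2; linarith
    have hd : 0 < 1 - (2/π) * x^2 := denom_pos (by nlinarith)
    by_contra hcon
    push_neg at hcon
    have h0 := (gg_deriv_iff hx0 hx1).1 hcon.le
    have hgg : ggc^2 < x^2 := by
      exact pow_lt_pow_left₀ hxc ggc_nonneg (by norm_num)
    rw [ggc_sq, div_lt_iff₀ (by positivity)] at hgg
    have hπ0 : (0:ℝ) < π := by linarith
    nlinarith [mul_pos (mul_pos (pow_pos hx0 2) (by nlinarith : (0:ℝ) < 2*(π+2)*x^2 - π*(6-π))) hπ0]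

lemma gg_zero : gg 0 = 0 := by simp [gg]

lemma gg_b_nonneg : 0 ≤ gg ggb := by
  have hπ := pi_lb
  have hπ' := pi_ub
  have hb1 := ggb_lb
  have hb2 := ggb_ub
  have hbsq := ggb_sq
  have hπ0 : (0:ℝ) < π := by linarith
  have h1b : (0:ℝ) < 1 + ggb := by linarith
  have h2b : (0:ℝ) < 1 - ggb := by linarith
  have hd : (0:ℝ) < 1 - (2/π)*ggb^2 := by
    rw [hbsq]
    rw [div_mul_eq_mul_div, sub_pos, div_lt_one hπ0]
    norm_num; linarith
  rw [gg, sub_nonneg]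
  -- bound the log part by 5/2
  have hlog : (Real.log (1+ggb) - Real.log (1-ggb))/2 ≤ 5/2 := by
    have hdiv : Real.log (1+ggb) - Real.log (1-ggb) = Real.log ((1+ggb)/(1-ggb)) := by
      rw [Real.log_div (ne_of_gt h1b) (ne_of_gt h2b)]
    rw [hdiv]
    have hratio : (1+ggb)/(1-ggb) ≤ Real.exp 5 := by
      have he : (2.71:ℝ)^5 ≤ Real.exp 1 ^ 5 := by
        apply pow_le_pow_left₀ (by norm_num)
        linarith [Real.exp_one_gt_d9]
      have he5 : (146:ℝ) ≤ Real.exp 5 := by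
        rw [show (5:ℝ) = (5:ℕ) by norm_num, ← Real.exp_one_pow]
        nlinarith
      rw [div_le_iff₀ h2b]
      nlinarith
    have := Real.log_le_log (by positivity) hratio
    rw [Real.log_exp] at this
    linarith
  refine le_trans hlog ?_
  rw [le_div_iff₀ hd, hbsq]
  apply le_of_mul_le_mul_right _ hπ0
  have key : 5/2*(1-2/π*(0.97:ℝ))*π = 5/2*(π - 1.94) := by
    field_simp; ring
  rw [key]
  nlinarith [hb1]

lemma gg_nonneg {x : ℝ} (hx0 : 0 ≤ x) (hxb : x ≤ ggb) : 0 ≤ gg x := by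
  rcases le_total x ggc with h | h
  · rw [← gg_zero]
    exact gg_mono (Set.mem_Icc.2 ⟨le_refl 0, ggc_nonneg⟩) (Set.mem_Icc.2 ⟨hx0, h⟩) hx0
  · refine le_trans gg_b_nonneg ?_
    exact gg_anti (Set.mem_Icc.2 ⟨h, hxb⟩) (Set.mem_Icc.2 ⟨ggc_le_ggb, le_refl _⟩) hxb

noncomputable def Fn (e : ℝ) : ℝ :=
  -Real.log (1 - (2/π) * (1-2*e)^2)
    - (4/π) * (Real.log 2 + e * Real.log e + (1-e) * Real.log (1-e))

lemma Fn_hasDeriv {e : ℝ} (h0 : 0 < e) (h1 : e < 1) :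
    HasDerivAt Fn
      (-(-(2/π) * (2*(1-2*e)*(-2)))/(1 - (2/π) * (1-2*e)^2)
        - (4/π) * ((Real.log e + 1) + (Real.log (1-e) + 1) * (-1))) e := by
  have hd : 0 < 1 - (2/π) * (1-2*e)^2 := denom_pos (by nlinarith)
  have h1e : (0:ℝ) < 1 - e := by linarith
  have hv : HasDerivAt (fun e : ℝ => 1 - (2/π) * (1-2*e)^2)
      (-(2/π) * (2*(1-2*e)*(-2))) e := by
    have hinner : HasDerivAt (fun e : ℝ => 1-2*e) (-2) e := by
      simpa using ((hasDerivAt_id e).const_mul (2:ℝ)).const_sub 1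
    have := ((hinner.pow 2).const_mul (2/π)).const_sub 1
    refine HasDerivAt.congr_deriv this ?_
    simp
  have hlogv : HasDerivAt (fun e : ℝ => Real.log (1 - (2/π) * (1-2*e)^2))
      ((-(2/π) * (2*(1-2*e)*(-2)))/(1 - (2/π) * (1-2*e)^2)) e := by
    have := hv.log (ne_of_gt hd)
    simpa [div_eq_mul_inv] using this
  have hel : HasDerivAt (fun e : ℝ => e * Real.log e) (Real.log e + 1) e :=
    Real.hasDerivAt_mul_log (ne_of_gt h0)
  have he2 : HasDerivAt (fun e : ℝ => (1-e) * Real.log (1-e))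
      ((Real.log (1-e) + 1) * (-1)) e := by
    have houter : HasDerivAt (fun t : ℝ => t * Real.log t) (Real.log (1-e) + 1) (1-e) :=
      Real.hasDerivAt_mul_log (ne_of_gt h1e)
    have hinner : HasDerivAt (fun e : ℝ => 1-e) (-1) e := by
      simpa using (hasDerivAt_id e).const_sub 1
    exact houter.comp e hinner
  have := (hlogv.neg).sub ((((hel.const_add (Real.log 2)).add he2)).const_mul (4/π))
  refine HasDerivAt.congr_deriv this ?_
  ring

lemma Fn_half : Fn (1/2) = 0 := by
  simp [Fn]
  rw [show (1:ℝ) - 2⁻¹ = 2⁻¹ by norm_num, Real.log_inv]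
  ring

lemma Fn_anti : AntitoneOn Fn (Set.Icc ((1 - ggb)/2) (1/2)) := by
  have hb1 := ggb_lb
  have hb2 := ggb_ub
  have hπ := pi_lb
  apply antitoneOn_of_hasDerivWithinAt_nonpos (f' := fun e =>
      (-(-(2/π) * (2*(1-2*e)*(-2)))/(1 - (2/π) * (1-2*e)^2)
        - (4/π) * ((Real.log e + 1) + (Real.log (1-e) + 1) * (-1))))
    (convex_Icc _ _)
  · intro e he
    have h0 : 0 < e := by
      have h := he.1
      linarith [he.1]
    exact (Fn_hasDeriv h0 (by linarith [he.2] : e < 1)).continuousAt.continuousWithinAt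
  · intro e he
    rw [interior_Icc] at he
    exact (Fn_hasDeriv (by linarith [he.1] : 0 < e)
      (by linarith [he.2] : e < 1)).hasDerivWithinAt
  · intro e he
    rw [interior_Icc] at he
    obtain ⟨he1, he2⟩ := he
    have h0 : 0 < e := by linarith
    have hx0 : (0:ℝ) < 1 - 2*e := by linarith
    have hxb : 1 - 2*e ≤ ggb := by linarith
    have hd : 0 < 1 - (2/π) * (1-2*e)^2 := denom_pos (by nlinarith)
    have h1e : (0:ℝ) < 1 - e := by linarith
    have hgg := gg_nonneg hx0.le hxb
    rw [gg, sub_nonneg] at hgg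
    have hπ0 : (0:ℝ) < π := by linarith
    -- rewrite logs: 1 + x = 2(1-e), 1 - x = 2e with x = 1-2e
    have e1 : Real.log (1 + (1-2*e)) = Real.log 2 + Real.log (1-e) := by
      rw [show 1 + (1-2*e) = 2 * (1-e) by ring, Real.log_mul (by norm_num) (ne_of_gt h1e)]
    have e2 : Real.log (1 - (1-2*e)) = Real.log 2 + Real.log e := by
      rw [show 1 - (1-2*e) = 2 * e by ring, Real.log_mul (by norm_num) (ne_of_gt h0)]
    rw [e1, e2] at hgg
    -- hgg : (log 2 + log(1-e) - (log 2 + log e))/2 ≤ (1-2e)/(1-(2/π)(1-2e)^2)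
    have hgg' : (Real.log (1-e) - Real.log e)/2 ≤ (1-2*e)/(1 - (2/π)*(1-2*e)^2) := by
      calc (Real.log (1-e) - Real.log e)/2
          = (Real.log 2 + Real.log (1-e) - (Real.log 2 + Real.log e))/2 := by ring
        _ ≤ _ := hgg
    have goal2 : (4/π) * (Real.log (1-e) - Real.log e)
        ≤ (8/π) * ((1-2*e)/(1 - (2/π)*(1-2*e)^2)) := by
      have := mul_le_mul_of_nonneg_left hgg' (by positivity : (0:ℝ) ≤ 8/π)
      calc (4/π) * (Real.log (1-e) - Real.log e)
          = (8/π) * ((Real.log (1-e) - Real.log e)/2) := by ring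
        _ ≤ _ := this
    have expand : (-(-(2/π) * (2*(1-2*e)*(-2)))/(1 - (2/π) * (1-2*e)^2)
          - (4/π) * ((Real.log e + 1) + (Real.log (1-e) + 1) * (-1)))
        = (4/π) * (Real.log (1-e) - Real.log e)
          - (8/π) * ((1-2*e)/(1 - (2/π)*(1-2*e)^2)) := by
      field_simp
      ring
    rw [expand]
    linarith

lemma Fn_nonneg {e : ℝ} (h0 : 0 ≤ e) (h1 : e ≤ 1/2) : 0 ≤ Fn e := by
  have hb2 := ggb_ub
  have hb1 := ggb_lb
  have hπ := pi_lb
  have hπ' := pi_ub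
  have hπ0 : (0:ℝ) < π := by linarith
  rcases le_or_gt (1 - 2*e) ggb with h | h
  · have he1 : (1-ggb)/2 ≤ e := by linarith
    have := Fn_anti (Set.mem_Icc.2 ⟨he1, h1⟩)
      (Set.mem_Icc.2 ⟨by linarith, le_refl _⟩) h1
    rw [Fn_half] at this
    exact this
  · -- numeric case : (1-2e)^2 > 0.97
    have hx0 : (0:ℝ) ≤ 1 - 2*e := by linarith
    have hx2 : (0.97:ℝ) < (1-2*e)^2 := by
      rw [← ggb_sq]
      exact pow_lt_pow_left₀ h (by linarith) (by norm_num)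
    have hd : 0 < 1 - (2/π) * (1-2*e)^2 := denom_pos (by nlinarith)
    have s1 : e * Real.log e ≤ 0 :=
      mul_nonpos_of_nonneg_of_nonpos h0 (Real.log_nonpos h0 (by linarith))
    have s2 : (1-e) * Real.log (1-e) ≤ 0 :=
      mul_nonpos_of_nonneg_of_nonpos (by linarith) (Real.log_nonpos (by linarith) (by linarith))
    have step1 : (4/π) * (Real.log 2 + e * Real.log e + (1-e) * Real.log (1-e))
        ≤ (4/π) * Real.log 2 := by
      apply mul_le_mul_of_nonneg_left _ (by positivity)
      linarith
    have hv : (0:ℝ) < 1 - 2/π*(0.97:ℝ) := by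
      rw [sub_pos, div_mul_eq_mul_div, div_lt_one hπ0]; linarith
    have step2 : Real.log (1 - (2/π) * (1-2*e)^2) ≤ Real.log (1 - 2/π*(0.97:ℝ)) := by
      apply Real.log_le_log hd
      have : 2/π*(0.97:ℝ) ≤ 2/π*(1-2*e)^2 :=
        mul_le_mul_of_nonneg_left hx2.le (by positivity)
      linarith
    have step3 : Real.log (1 - 2/π*(0.97:ℝ)) ≤ -(Real.log 2 + 0.2337) := by
      have h261 : (2.61:ℝ) ≤ (1 - 2/π*(0.97:ℝ))⁻¹ := by
        rw [← one_div, le_div_iff₀ hv]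
        have : (2/π)*(0.97:ℝ)*π = 1.94 := by field_simp; norm_num
        nlinarith
      have hlog261 : Real.log 2 + 0.2337 ≤ Real.log 2.61 := by
        rw [show (2.61:ℝ) = 2 * 1.305 by norm_num,
          Real.log_mul (by norm_num) (by norm_num)]
        have : Real.log ((1.305:ℝ)⁻¹) ≤ (1.305:ℝ)⁻¹ - 1 :=
          Real.log_le_sub_one_of_pos (by norm_num)
        rw [Real.log_inv] at this
        have : (0.2337:ℝ) ≤ Real.log 1.305 := by
          rw [show ((1.305:ℝ)⁻¹ : ℝ) = 1/1.305 by norm_num] at this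
          norm_num at this ⊢
          linarith
        linarith
      have := Real.log_le_log (by norm_num : (0:ℝ) < 2.61) h261
      rw [Real.log_inv] at this
      linarith
    have step4 : (4/π) * Real.log 2 ≤ Real.log 2 + 0.2337 := by
      rw [div_mul_eq_mul_div, div_le_iff₀ hπ0]
      nlinarith [Real.log_two_gt_d9, Real.log_two_lt_d9]
    rw [Fn]
    linarith

theorem statement17 (ε : ℝ) (hε : ε ∈ Set.Icc (0 : ℝ) (1 / 2)) :
    (2 / Real.pi) * (1 - hb ε) ≤
      (1 / 2) * Real.logb 2 (1 / (1 - (2 / Real.pi) * (1 - 2 * ε) ^ 2)) := by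
  obtain ⟨h0, h1⟩ := hε
  have hF := Fn_nonneg h0 h1
  have hlog2 : (0:ℝ) < Real.log 2 := Real.log_pos (by norm_num)
  have hπ0 : (0:ℝ) < π := pi_pos
  have ediff : (1/2) * Real.logb 2 (1 / (1 - (2/π) * (1 - 2*ε)^2)) - (2/π) * (1 - hb ε)
      = Fn ε / (2 * Real.log 2) := by
    unfold hb Fn Real.logb
    rw [show (1:ℝ) / (1 - (2/π) * (1 - 2*ε)^2) = (1 - (2/π) * (1 - 2*ε)^2)⁻¹ from one_div _,
      Real.log_inv]
    field_simp
    ring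
  have hq : 0 ≤ Fn ε / (2 * Real.log 2) := div_nonneg hF (by positivity)
  linarith [ediff, hq]
end
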